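/- arXiv:1305.6158 — 2 statements merged into one kernel-verified Lean document; each statement's English description precedes it below -/
import Mathlib

section
/- Tucker's lemma implies the Octahedral Sperner lemma with Octahedral Labels. Precisely: suppose that for every n ≥ 1, every finite triangulation T whose underlying set X ⊆ ℝ^n is homeomorphic to the closed unit ball B^n and which is antipodally symmetric on the boundary (σ ∈ T and σ ⊆ ∂X imply −σ ∈ T), and every label function λ : V(T) → ext(◇^n) with λ(−v) = −λ(v) for all v ∈ V(T) ∩ ∂X, T contains a complementary edge. Then for every n ≥ 1, every triangulation T of ◇^n, and every label function λ : V(T) → ext(◇^n) such that for every boundary vertex x ∈ V(T) with |x_1|+…+|x_n| = 1 and every 1 ≤ i ≤ n, x_i ≥ 0 implies λ(x) ≠ −e_i and x_i ≤ 0 implies λ(x) ≠ e_i, the triangulation T contains a complementary edge. -/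
open scoped Classical

/-- The `n`-dimensional octahedron `◇ⁿ`: the unit ball of the `ℓ¹` norm in `ℝⁿ`. -/
def octa (n : ℕ) : Set (Fin n → ℝ) := {x | ∑ i, |x i| ≤ 1}

/-- The extreme points of the `n`-dimensional octahedron: `{±e₁, …, ±eₙ}`. -/
def extOcta (n : ℕ) : Set (Fin n → ℝ) :=
  {v | ∃ i : Fin n, v = Pi.single i 1 ∨ v = -Pi.single i 1}

/-- **Tucker's Lemma** as a statement: for every `n ≥ 1`, every finite triangulation
`K` whose underlying set is homeomorphic to the closed unit ball `Bⁿ` and which is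
antipodally symmetric on the boundary, and every labelling of the vertices by extreme
points of `◇ⁿ` that is antipodal on the boundary, `K` contains a complementary edge. -/
def TuckerStatement : Prop :=
  ∀ (n : ℕ), 1 ≤ n →
  ∀ (K : Geometry.SimplicialComplex ℝ (Fin n → ℝ)), K.faces.Finite →
  Nonempty (↥K.space ≃ₜ ↥(Metric.closedBall (0 : EuclideanSpace ℝ (Fin n)) 1)) →
  (∀ σ ∈ K.faces, (σ : Set (Fin n → ℝ)) ⊆ frontier K.space →
    σ.image (fun v => -v) ∈ K.faces) →
  ∀ lab : (Fin n → ℝ) → (Fin n → ℝ),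
  (∀ v ∈ K.vertices, lab v ∈ extOcta n) →
  (∀ v ∈ K.vertices, v ∈ frontier K.space → lab (-v) = -lab v) →
  ∃ σ ∈ K.faces, ∃ v₁ ∈ σ, ∃ v₂ ∈ σ, lab v₁ = -lab v₂

/-- **Octahedral Sperner with Octahedral Labels** as a statement: for every `n ≥ 1`,
every finite triangulation `K` of `◇ⁿ`, and every labelling of the vertices by extreme
points of `◇ⁿ` such that every boundary vertex `x` (i.e. `∑ |xᵢ| = 1`) satisfies, for
each `i`, `xᵢ ≥ 0 → lab x ≠ −eᵢ` and `xᵢ ≤ 0 → lab x ≠ eᵢ`, `K` contains a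
complementary edge. -/
def OctahedralSpernerStatement : Prop :=
  ∀ (n : ℕ), 1 ≤ n →
  ∀ (K : Geometry.SimplicialComplex ℝ (Fin n → ℝ)), K.faces.Finite →
  K.space = octa n →
  ∀ lab : (Fin n → ℝ) → (Fin n → ℝ),
  (∀ x ∈ K.vertices, lab x ∈ extOcta n) →
  (∀ x ∈ K.vertices, (∑ i, |x i|) = 1 → ∀ i : Fin n,
    (0 ≤ x i → lab x ≠ -Pi.single i 1) ∧ (x i ≤ 0 → lab x ≠ Pi.single i 1)) →
  ∃ σ ∈ K.faces, ∃ v₁ ∈ σ, ∃ v₂ ∈ σ, lab v₁ = -lab v₂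

open Finset

namespace OctAux

variable {n : ℕ}

noncomputable def nrm (x : Fin n → ℝ) : ℝ := ∑ i, |x i|

lemma nrm_nonneg (x : Fin n → ℝ) : 0 ≤ nrm x :=
  Finset.sum_nonneg fun i _ => abs_nonneg _

lemma nrm_eq_zero {x : Fin n → ℝ} (h : nrm x = 0) : x = 0 := by
  funext i
  have h0 : ∀ j ∈ Finset.univ, (0:ℝ) ≤ |x j| := fun j _ => abs_nonneg _
  have := (Finset.sum_eq_zero_iff_of_nonneg h0).1 h i (Finset.mem_univ i)
  simpa [abs_eq_zero] using this

lemma nrm_smul (c : ℝ) (x : Fin n → ℝ) : nrm (c • x) = |c| * nrm x := by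
  simp [nrm, abs_mul, Finset.mul_sum]

lemma nrm_neg (x : Fin n → ℝ) : nrm (-x) = nrm x := by
  simp [nrm]

lemma abs_le_nrm (x : Fin n → ℝ) (i : Fin n) : |x i| ≤ nrm x :=
  Finset.single_le_sum (f := fun j => |x j|) (fun j _ => abs_nonneg _) (Finset.mem_univ i)

lemma continuous_nrm : Continuous (nrm (n := n)) := by
  refine continuous_finset_sum _ fun i _ => ?_
  exact (continuous_apply i).abs

def ov (ε : Fin n → ℝ) (i : Fin n) : Fin n → ℝ := Pi.single i (2 * ε i)

def IsSign (ε : Fin n → ℝ) : Prop := ∀ i, ε i = 1 ∨ ε i = -1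

lemma IsSign.abs {ε : Fin n → ℝ} (hε : IsSign ε) (i : Fin n) : |ε i| = 1 := by
  rcases hε i with h | h <;> simp [h]

lemma IsSign.ne_zero {ε : Fin n → ℝ} (hε : IsSign ε) (i : Fin n) : ε i ≠ 0 := by
  rcases hε i with h | h <;> simp [h]

lemma IsSign.mul_self {ε : Fin n → ℝ} (hε : IsSign ε) (i : Fin n) : ε i * ε i = 1 := by
  rcases hε i with h | h <;> simp [h]

lemma IsSign.neg {ε : Fin n → ℝ} (hε : IsSign ε) : IsSign (-ε) := by
  intro i
  rcases hε i with h | h <;> simp [h]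

lemma ov_apply (ε : Fin n → ℝ) (i j : Fin n) :
    ov ε i j = if j = i then 2 * ε i else 0 := by
  simp [ov, Pi.single_apply]

lemma nrm_ov {ε : Fin n → ℝ} (hε : IsSign ε) (i : Fin n) : nrm (ov ε i) = 2 := by
  have : ∀ j, |ov ε i j| = if j = i then 2 else 0 := by
    intro j
    rw [ov_apply]
    split_ifs with h
    · rw [abs_mul, hε.abs]; norm_num
    · simp
  simp only [nrm, this]
  rw [Finset.sum_ite_eq' Finset.univ i (fun _ => (2:ℝ))]
  simp

lemma ov_inj {ε : Fin n → ℝ} (hε : IsSign ε) {i j : Fin n} (h : ov ε i = ov ε j) : i = j := by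
  by_contra hne
  have := congrFun h i
  rw [ov_apply, ov_apply, if_pos rfl, if_neg (fun hh => hne hh)] at this
  exact (mul_ne_zero two_ne_zero (hε.ne_zero i)) this

noncomputable def chainF (ε : Fin n → ℝ) (k : ℕ) : Finset (Fin n → ℝ) :=
  (Finset.univ.filter fun i : Fin n => (i : ℕ) < k).image (ov ε)

lemma mem_chainF {ε : Fin n → ℝ} {k : ℕ} {x : Fin n → ℝ} :
    x ∈ chainF ε k ↔ ∃ i : Fin n, (i : ℕ) < k ∧ x = ov ε i := by
  simp only [chainF, Finset.mem_image, Finset.mem_filter, Finset.mem_univ, true_and]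
  constructor
  · rintro ⟨i, hi, rfl⟩; exact ⟨i, hi, rfl⟩
  · rintro ⟨i, hi, rfl⟩; exact ⟨i, hi, rfl⟩

end OctAux


namespace OctAux

variable {n : ℕ} {K : Geometry.SimplicialComplex ℝ (Fin n → ℝ)}

structure Valid (K : Geometry.SimplicialComplex ℝ (Fin n → ℝ)) (ε : Fin n → ℝ) (k : ℕ)
    (σ : Finset (Fin n → ℝ)) : Prop where
  sign : IsSign ε
  kn : k ≤ n
  faceK : σ = ∅ ∨ σ ∈ K.faces
  nrm1 : ∀ v ∈ σ, nrm v = 1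
  signv : ∀ v ∈ σ, ∀ i, 0 ≤ ε i * v i
  supp : ∀ v ∈ σ, ∀ i : Fin n, (i : ℕ) + 1 < k → v i = 0

lemma Valid.not_mem_chain {ε : Fin n → ℝ} {k : ℕ} {σ : Finset (Fin n → ℝ)}
    (hv : Valid K ε k σ) {x : Fin n → ℝ} (hx : x ∈ σ) : x ∉ chainF ε k := by
  intro hc
  rcases mem_chainF.1 hc with ⟨i, _, rfl⟩
  have h2 := nrm_ov hv.sign i
  have h1 := hv.nrm1 _ hx
  rw [h1] at h2
  norm_num at h2

lemma face_nrm_le (hspace : K.space = octa n) {s : Finset (Fin n → ℝ)}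
    (hs : s ∈ K.faces) {v : Fin n → ℝ} (hv : v ∈ s) : nrm v ≤ 1 := by
  have h : v ∈ K.space := K.subset_space hs hv
  rw [hspace] at h
  exact h

lemma mem_octa_iff {x : Fin n → ℝ} : x ∈ octa n ↔ nrm x ≤ 1 := Iff.rfl

/-- Split a sum over `s ⊆ chainF ε k ∪ σ` into its chain and `σ` parts. -/
lemma sum_split {M : Type*} [AddCommMonoid M] {ε : Fin n → ℝ} {k : ℕ}
    {σ s : Finset (Fin n → ℝ)} (hv : Valid K ε k σ) (hs : s ⊆ chainF ε k ∪ σ)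
    (g : (Fin n → ℝ) → M) :
    ∑ y ∈ s, g y = (∑ y ∈ s.filter (· ∈ chainF ε k), g y) + ∑ y ∈ s ∩ σ, g y := by
  have hfil : s.filter (fun y => ¬ (y ∈ chainF ε k)) = s ∩ σ := by
    ext y
    simp only [Finset.mem_filter, Finset.mem_inter]
    constructor
    · rintro ⟨hys, hyc⟩
      refine ⟨hys, ?_⟩
      rcases Finset.mem_union.1 (hs hys) with h | h
      · exact absurd h hyc
      · exact h
    · rintro ⟨hys, hyσ⟩
      exact ⟨hys, hv.not_mem_chain hyσ⟩
  rw [← hfil]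
  exact (Finset.sum_filter_add_sum_filter_not s _ g).symm

/-- Reindex a sum over the chain part of `s` by the indices of the chain vertices. -/
lemma sum_chain_reindex {M : Type*} [AddCommMonoid M] {ε : Fin n → ℝ} {k : ℕ}
    {s : Finset (Fin n → ℝ)} (hε : IsSign ε) (g : (Fin n → ℝ) → M) :
    ∑ y ∈ s.filter (· ∈ chainF ε k), g y
      = ∑ i ∈ Finset.univ.filter (fun i : Fin n => (i : ℕ) < k ∧ ov ε i ∈ s), g (ov ε i) := by
  have himg : s.filter (· ∈ chainF ε k)
      = (Finset.univ.filter (fun i : Fin n => (i : ℕ) < k ∧ ov ε i ∈ s)).image (ov ε) := by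
    ext y
    simp only [Finset.mem_filter, Finset.mem_image, Finset.mem_univ, true_and]
    constructor
    · rintro ⟨hys, hyc⟩
      rcases mem_chainF.1 hyc with ⟨i, hik, rfl⟩
      exact ⟨i, ⟨hik, hys⟩, rfl⟩
    · rintro ⟨i, ⟨hik, his⟩, rfl⟩
      exact ⟨his, mem_chainF.2 ⟨i, hik, rfl⟩⟩
  rw [himg, Finset.sum_image]
  intro i _ j _ h
  exact ov_inj hε h

/-- A decomposition of a point of (the convex hull of) a collar face. -/
structure Rep (ε : Fin n → ℝ) (k : ℕ) (σ s : Finset (Fin n → ℝ)) (z : Fin n → ℝ) where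
  α : Fin n → ℝ
  w : (Fin n → ℝ) → ℝ
  u : Fin n → ℝ
  b : ℝ
  hα0 : ∀ i, 0 ≤ α i
  hαk : ∀ i : Fin n, ¬ ((i : ℕ) < k) → α i = 0
  hαs : ∀ i, 0 < α i → ov ε i ∈ s
  hw0 : ∀ v ∈ s ∩ σ, 0 ≤ w v
  hu : u = ∑ v ∈ s ∩ σ, w v • v
  hb : b = ∑ v ∈ s ∩ σ, w v
  total : (∑ i, α i) + b = 1
  hrepr : z = (∑ i, α i • ov ε i) + u
  husign : ∀ i, |u i| = ε i * u i
  husupp : ∀ i : Fin n, (i : ℕ) + 1 < k → u i = 0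
  hunrm : nrm u = b

lemma exists_rep {ε : Fin n → ℝ} {k : ℕ} {σ s : Finset (Fin n → ℝ)}
    (hv : Valid K ε k σ) (hs : s ⊆ chainF ε k ∪ σ) {z : Fin n → ℝ}
    (hz : z ∈ convexHull ℝ (s : Set (Fin n → ℝ))) : Nonempty (Rep ε k σ s z) := by
  rw [Finset.mem_convexHull'] at hz
  obtain ⟨w₀, hw₀0, hw₀1, hw₀z⟩ := hz
  set J := Finset.univ.filter (fun i : Fin n => (i : ℕ) < k ∧ ov ε i ∈ s) with hJ
  set α : Fin n → ℝ := fun i => if (i : ℕ) < k ∧ ov ε i ∈ s then w₀ (ov ε i) else 0 with hα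
  set u : Fin n → ℝ := ∑ v ∈ s ∩ σ, w₀ v • v with hu
  set b : ℝ := ∑ v ∈ s ∩ σ, w₀ v with hb
  have hαJ : ∀ (f : (Fin n → ℝ) → ℝ), True := fun _ => trivial
  have hsumα : ∑ i, α i = ∑ i ∈ J, w₀ (ov ε i) := by
    rw [hJ, ← Finset.sum_filter]
  have hsumαv : ∑ i, α i • ov ε i = ∑ i ∈ J, w₀ (ov ε i) • ov ε i := by
    rw [hJ, Finset.sum_filter]
    refine Finset.sum_congr rfl fun i _ => ?_
    by_cases h : (i : ℕ) < k ∧ ov ε i ∈ s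
    · simp [hα, h]
    · simp [hα, h]
  have husign : ∀ i, |u i| = ε i * u i := by
    intro i
    have hui : u i = ∑ v ∈ s ∩ σ, w₀ v * v i := by
      rw [hu, Finset.sum_apply]
      simp [Pi.smul_apply, smul_eq_mul]
    have hnn : 0 ≤ ε i * u i := by
      rw [hui, Finset.mul_sum]
      refine Finset.sum_nonneg fun v hvs => ?_
      have h1 : 0 ≤ w₀ v := hw₀0 _ (Finset.mem_inter.1 hvs).1
      have h2 : 0 ≤ ε i * v i := hv.signv _ (Finset.mem_inter.1 hvs).2 i
      calc (0:ℝ) ≤ w₀ v * (ε i * v i) := mul_nonneg h1 h2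
      _ = ε i * (w₀ v * v i) := by ring
    have habs : |ε i * u i| = |u i| := by
      rw [abs_mul, hv.sign.abs, one_mul]
    rw [← habs, abs_of_nonneg hnn]
  have husupp : ∀ i : Fin n, (i : ℕ) + 1 < k → u i = 0 := by
    intro i hik
    rw [hu, Finset.sum_apply]
    refine Finset.sum_eq_zero fun v hvs => ?_
    have := hv.supp _ (Finset.mem_inter.1 hvs).2 i hik
    simp [Pi.smul_apply, smul_eq_mul, this]
  have hunrm : nrm u = b := by
    have : ∀ i, |u i| = ∑ v ∈ s ∩ σ, w₀ v * (ε i * v i) := by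
      intro i
      rw [husign i, hu, Finset.sum_apply, Finset.mul_sum]
      congr 1
      funext v
      simp [Pi.smul_apply, smul_eq_mul]
      ring
    rw [nrm]
    calc ∑ i, |u i| = ∑ i, ∑ v ∈ s ∩ σ, w₀ v * (ε i * v i) := by
          exact Finset.sum_congr rfl fun i _ => this i
    _ = ∑ v ∈ s ∩ σ, ∑ i, w₀ v * (ε i * v i) := Finset.sum_comm
    _ = ∑ v ∈ s ∩ σ, w₀ v * ∑ i, (ε i * v i) := by
          refine Finset.sum_congr rfl fun v _ => ?_
          rw [Finset.mul_sum]
    _ = ∑ v ∈ s ∩ σ, w₀ v := by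
          refine Finset.sum_congr rfl fun v hvs => ?_
          have hv1 : ∑ i, ε i * v i = 1 := by
            have : ∀ i, ε i * v i = |v i| := by
              intro i
              have hnn := hv.signv _ (Finset.mem_inter.1 hvs).2 i
              have : |ε i * v i| = |v i| := by rw [abs_mul, hv.sign.abs, one_mul]
              rw [← this, abs_of_nonneg hnn]
            rw [Finset.sum_congr rfl fun i _ => this i]
            exact hv.nrm1 _ (Finset.mem_inter.1 hvs).2
          rw [hv1, mul_one]
    _ = b := hb.symm
  refine ⟨⟨α, w₀, u, b, ?_, ?_, ?_, ?_, hu, hb, ?_, ?_, husign, husupp, hunrm⟩⟩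
  · intro i
    rw [hα]
    by_cases h : (i : ℕ) < k ∧ ov ε i ∈ s
    · simpa [h] using hw₀0 _ h.2
    · simp [h]
  · intro i hik
    rw [hα]
    simp only [ite_eq_right_iff]
    intro h
    exact absurd h.1 hik
  · intro i hαi
    by_contra h
    rw [hα] at hαi
    by_cases h' : (i : ℕ) < k ∧ ov ε i ∈ s
    · exact h h'.2
    · simp [h'] at hαi
  · intro v hvs
    exact hw₀0 _ (Finset.mem_inter.1 hvs).1
  · rw [hsumα, ← hw₀1, sum_split hv hs w₀, sum_chain_reindex hv.sign, hb]
  · rw [hsumαv, ← hw₀z, sum_split hv hs (fun y => w₀ y • y), sum_chain_reindex hv.sign, hu]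

variable {ε : Fin n → ℝ} {k : ℕ} {σ s : Finset (Fin n → ℝ)} {z : Fin n → ℝ}

lemma Rep.zcoord (r : Rep ε k σ s z) (i : Fin n) : z i = 2 * r.α i * ε i + r.u i := by
  have h1 : (∑ j, r.α j • ov ε j) i = r.α i * (2 * ε i) := by
    rw [Finset.sum_apply]
    have : ∀ j, (r.α j • ov ε j) i = if i = j then r.α j * (2 * ε j) else 0 := by
      intro j
      rw [Pi.smul_apply, smul_eq_mul, ov_apply]
      split_ifs with h <;> simp
    rw [Finset.sum_congr rfl fun j _ => this j]
    rw [Finset.sum_ite_eq]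
    simp
  have := congrFun r.hrepr i
  rw [Pi.add_apply] at this
  rw [this, h1]
  ring

lemma Rep.zsign (hε : IsSign ε) (r : Rep ε k σ s z) (i : Fin n) :
    ε i * z i = 2 * r.α i + |r.u i| := by
  rw [r.zcoord i, mul_add, r.husign i]
  have : ε i * (2 * r.α i * ε i) = 2 * r.α i * (ε i * ε i) := by ring
  rw [this, hε.mul_self, mul_one]

lemma Rep.zabs (hε : IsSign ε) (r : Rep ε k σ s z) (i : Fin n) :
    |z i| = 2 * r.α i + |r.u i| := by
  have hnn : 0 ≤ ε i * z i := by
    rw [r.zsign hε i]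
    have h1 := r.hα0 i
    have h2 := abs_nonneg (r.u i)
    linarith
  have habs : |ε i * z i| = |z i| := by rw [abs_mul, hε.abs, one_mul]
  rw [← habs, abs_of_nonneg hnn, r.zsign hε i]

lemma Rep.znrm (hε : IsSign ε) (r : Rep ε k σ s z) : nrm z = 1 + ∑ i, r.α i := by
  rw [nrm]
  calc ∑ i, |z i| = ∑ i, (2 * r.α i + |r.u i|) :=
        Finset.sum_congr rfl fun i _ => r.zabs hε i
  _ = 2 * (∑ i, r.α i) + nrm r.u := by
        rw [Finset.sum_add_distrib, ← Finset.mul_sum, nrm]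
  _ = 1 + ∑ i, r.α i := by
        rw [r.hunrm]
        have := r.total
        linarith

end OctAux

namespace OctAux

variable {n : ℕ} {K : Geometry.SimplicialComplex ℝ (Fin n → ℝ)}
variable {ε ε' : Fin n → ℝ} {k k' : ℕ} {σ σ' s t : Finset (Fin n → ℝ)} {z : Fin n → ℝ}

lemma Rep.u_eq (r : Rep ε k σ s z) : r.u = z - ∑ i, r.α i • ov ε i := by
  rw [eq_sub_iff_add_eq, add_comm]; exact r.hrepr.symm

/-- The key matching lemma: two representations of the same point have the same
outer coefficients and the same inner part. -/
lemma matching (hv : Valid K ε k σ) (hv' : Valid K ε' k' σ') (hkk' : k ≤ k')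
    (r : Rep ε k σ s z) (r' : Rep ε' k' σ' t z) :
    (∀ i, r.α i = r'.α i) ∧ (∀ i, 0 < r.α i → ov ε i = ov ε' i) := by
  have habs : ∀ i, 2 * r.α i + |r.u i| = 2 * r'.α i + |r'.u i| := fun i => by
    rw [← r.zabs hv.sign i, ← r'.zabs hv'.sign i]
  have hsum : ∑ i, r.α i = ∑ i, r'.α i := by
    have h1 := r.znrm hv.sign
    have h2 := r'.znrm hv'.sign
    linarith [h1, h2]
  have hlow : ∀ i : Fin n, (i : ℕ) + 1 < k → r.α i = r'.α i := by
    intro i hik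
    have hu : r.u i = 0 := r.husupp i hik
    have hu' : r'.u i = 0 := r'.husupp i (lt_of_lt_of_le hik hkk')
    have := habs i
    rw [hu, hu'] at this
    simp only [abs_zero, add_zero] at this
    linarith
  have hM1 : ∀ i, r.α i = r'.α i := by
    rcases Nat.eq_zero_or_pos k with hk0 | hkpos
    · -- k = 0 : all r.α are zero, and ∑ r'.α = 0 forces r'.α = 0
      have hα : ∀ i, r.α i = 0 := fun i => r.hαk i (by omega)
      have hsum' : ∑ i, r'.α i = 0 := by
        rw [← hsum]; exact Finset.sum_eq_zero fun i _ => hα i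
      have := (Finset.sum_eq_zero_iff_of_nonneg (fun i _ => r'.hα0 i)).1 hsum'
      intro i
      rw [hα i, this i (Finset.mem_univ i)]
    · obtain ⟨m, rfl⟩ : ∃ m, k = m + 1 := ⟨k - 1, by omega⟩
      have hmn : m < n := by have := hv.kn; omega
      set i₀ : Fin n := ⟨m, hmn⟩ with hi₀
      rcases eq_or_lt_of_le hkk' with hkk | hkk
      · -- k = k'
        have hzero : ∀ b : Fin n, b ∈ Finset.univ → b ≠ i₀ → r'.α b - r.α b = 0 := by
          intro b _ hb
          have hbm : (b : ℕ) ≠ m := fun h => hb (Fin.ext h)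
          rcases lt_trichotomy (b : ℕ) m with h | h | h
          · rw [hlow b (by omega)]; ring
          · exact absurd h hbm
          · rw [r.hαk b (by omega), r'.hαk b (by omega)]; ring
        have hs0 : ∑ i, (r'.α i - r.α i) = r'.α i₀ - r.α i₀ :=
          Finset.sum_eq_single i₀ hzero (by simp)
        have hs1 : ∑ i, (r'.α i - r.α i) = 0 := by
          rw [Finset.sum_sub_distrib, ← hsum]; ring
        have hii : r.α i₀ = r'.α i₀ := by rw [hs0] at hs1; linarith
        intro i
        by_cases hi : i = i₀
        · rw [hi]; exact hii
        · have := hzero i (Finset.mem_univ i) hi; linarith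
      · -- k < k'
        have hterm : ∀ b : Fin n, b ∈ Finset.univ → 0 ≤ r'.α b - r.α b := by
          intro b _
          rcases lt_trichotomy (b : ℕ) m with h | h | h
          · rw [hlow b (by omega)]; simp
          · -- b = i₀ : r'.u b = 0 since (b:ℕ)+1 = m+1 < k'
            have hu' : r'.u b = 0 := r'.husupp b (by omega)
            have := habs b
            rw [hu'] at this
            simp only [abs_zero, add_zero] at this
            have := abs_nonneg (r.u b)
            linarith
          · rw [r.hαk b (by omega)]
            have := r'.hα0 b
            linarith
        have hs1 : ∑ i, (r'.α i - r.α i) = 0 := by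
          rw [Finset.sum_sub_distrib, ← hsum]; ring
        have := (Finset.sum_eq_zero_iff_of_nonneg hterm).1 hs1
        intro i
        have := this i (Finset.mem_univ i)
        linarith
  refine ⟨hM1, ?_⟩
  intro i hαi
  have hzne : z i ≠ 0 := by
    have h1 : |z i| = 2 * r.α i + |r.u i| := r.zabs hv.sign i
    have h2 : 0 < |z i| := by
      rw [h1]
      have := abs_nonneg (r.u i)
      linarith
    exact abs_pos.1 h2
  have h1 : ε i * z i = |z i| := by rw [r.zsign hv.sign i, r.zabs hv.sign i]
  have h2 : ε' i * z i = |z i| := by rw [r'.zsign hv'.sign i, r'.zabs hv'.sign i]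
  have hee : ε i = ε' i := by
    have : ε i * z i = ε' i * z i := by rw [h1, h2]
    exact mul_right_cancel₀ hzne this
  rw [ov, ov, hee]

lemma matching_u (hv : Valid K ε k σ) (hv' : Valid K ε' k' σ') (hkk' : k ≤ k')
    (r : Rep ε k σ s z) (r' : Rep ε' k' σ' t z) : r.u = r'.u := by
  obtain ⟨hM1, hM2⟩ := matching hv hv' hkk' r r'
  rw [r.u_eq, r'.u_eq]
  congr 1
  refine Finset.sum_congr rfl fun i _ => ?_
  rcases eq_or_lt_of_le (r.hα0 i) with h | h
  · rw [← hM1 i, ← h, zero_smul, zero_smul]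
  · rw [← hM1 i, hM2 i h]

end OctAux

namespace OctAux

variable {n : ℕ} {K : Geometry.SimplicialComplex ℝ (Fin n → ℝ)}
variable {ε ε' : Fin n → ℝ} {k k' : ℕ} {σ σ' s t : Finset (Fin n → ℝ)} {z : Fin n → ℝ}

lemma Rep.b_nonneg (r : Rep ε k σ s z) : 0 ≤ r.b := by
  rw [r.hb]; exact Finset.sum_nonneg r.hw0

lemma Rep.sum_α (r : Rep ε k σ s z) : ∑ i, r.α i = 1 - r.b := by
  have := r.total; linarith

/-- The inner part, renormalized, lies in the convex hull of the positive-weight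
inner vertices, which form a face of `K`. -/
lemma Rep.inner_face (hv : Valid K ε k σ) (r : Rep ε k σ s z) (hb : 0 < r.b) :
    ∃ τ : Finset (Fin n → ℝ), τ ∈ K.faces ∧ τ ⊆ s ∩ σ ∧
      r.b⁻¹ • r.u ∈ convexHull ℝ (τ : Set (Fin n → ℝ)) := by
  set τ := (s ∩ σ).filter (fun v => 0 < r.w v) with hτ
  have hτsub : τ ⊆ s ∩ σ := Finset.filter_subset _ _
  have hsumw : ∑ v ∈ τ, r.w v = r.b := by
    rw [hτ, r.hb]
    exact Finset.sum_filter_of_ne fun v hvm hne =>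
      lt_of_le_of_ne (r.hw0 v hvm) (Ne.symm hne)
  have hsumwv : ∑ v ∈ τ, r.w v • v = r.u := by
    rw [hτ, r.hu]
    refine Finset.sum_filter_of_ne fun v hvm hne => ?_
    rcases eq_or_lt_of_le (r.hw0 v hvm) with h | h
    · exact absurd (by rw [← h, zero_smul]) hne
    · exact h
  have hτne : τ.Nonempty := by
    by_contra hne
    rw [Finset.not_nonempty_iff_eq_empty] at hne
    rw [hne, Finset.sum_empty] at hsumw
    exact absurd hsumw.symm (ne_of_gt hb)
  have hσfaces : σ ∈ K.faces := by
    rcases hv.faceK with h | h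
    · exfalso
      obtain ⟨v, hvτ⟩ := hτne
      have := (Finset.mem_inter.1 (hτsub hvτ)).2
      rw [h] at this
      exact absurd this (Finset.notMem_empty v)
    · exact h
  have hτfaces : τ ∈ K.faces :=
    K.down_closed hσfaces (hτsub.trans Finset.inter_subset_right)
      hτne
  refine ⟨τ, hτfaces, hτsub, ?_⟩
  rw [Finset.mem_convexHull']
  refine ⟨fun v => r.b⁻¹ * r.w v, ?_, ?_, ?_⟩
  · intro v hvτ
    have := (Finset.mem_filter.1 hvτ).2
    positivity
  · rw [← Finset.mul_sum, hsumw, inv_mul_cancel₀ (ne_of_gt hb)]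
  · rw [← hsumwv, Finset.smul_sum]
    refine Finset.sum_congr rfl fun v _ => ?_
    rw [mul_smul]

/-- Core of the intersection axiom, for two collar faces, assuming `k ≤ k'`. -/
lemma collar_inter_aux (hv : Valid K ε k σ) (hv' : Valid K ε' k' σ') (hkk' : k ≤ k')
    (hs : s ⊆ chainF ε k ∪ σ) (ht : t ⊆ chainF ε' k' ∪ σ') :
    convexHull ℝ (s : Set (Fin n → ℝ)) ∩ convexHull ℝ (t : Set (Fin n → ℝ)) ⊆
      convexHull ℝ ((s ∩ t : Finset (Fin n → ℝ)) : Set (Fin n → ℝ)) := by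
  rintro z ⟨hzs, hzt⟩
  obtain ⟨r⟩ := exists_rep hv hs hzs
  obtain ⟨r'⟩ := exists_rep hv' ht hzt
  obtain ⟨hM1, hM2⟩ := matching hv hv' hkk' r r'
  have hMu : r.u = r'.u := matching_u hv hv' hkk' r r'
  have hbb : r.b = r'.b := by
    have h1 := r.total
    have h2 := r'.total
    have : ∑ i, r.α i = ∑ i, r'.α i := Finset.sum_congr rfl fun i _ => hM1 i
    linarith
  have hov_mem : ∀ i, 0 < r.α i → ov ε i ∈ s ∩ t := by
    intro i h
    refine Finset.mem_inter.2 ⟨r.hαs i h, ?_⟩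
    rw [hM2 i h]
    exact r'.hαs i (by rw [← hM1 i]; exact h)
  rcases eq_or_lt_of_le r.b_nonneg with hb0 | hbpos
  · -- b = 0 : z is a combination of matched outer vertices
    have hune : r.u = 0 := nrm_eq_zero (by rw [r.hunrm, ← hb0])
    have hsums : ∑ i, r.α i = 1 := by rw [r.sum_α, ← hb0]; ring
    obtain ⟨i₁, hi₁⟩ : ∃ i, 0 < r.α i := by
      by_contra h
      push_neg at h
      have : ∑ i, r.α i = 0 :=
        le_antisymm (Finset.sum_nonpos fun i _ => h i) (Finset.sum_nonneg fun i _ => r.hα0 i)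
      rw [hsums] at this
      norm_num at this
    set p : Fin n → (Fin n → ℝ) := fun i => if 0 < r.α i then ov ε i else ov ε i₁ with hp
    have hz : z = ∑ i, r.α i • p i := by
      have h0 := r.hrepr
      rw [hune, add_zero] at h0
      refine h0.trans ?_
      refine Finset.sum_congr rfl fun i _ => ?_
      rcases eq_or_lt_of_le (r.hα0 i) with h | h
      · rw [← h, zero_smul, zero_smul]
      · rw [hp]; simp only [h, if_pos]
    rw [hz]
    refine Convex.sum_mem (convex_convexHull ℝ _) (fun i _ => r.hα0 i) hsums ?_
    intro i _
    refine subset_convexHull ℝ _ ?_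
    rw [hp]
    by_cases h : 0 < r.α i
    · simp only [h, if_pos]
      exact Finset.mem_coe.2 (hov_mem i h)
    · simp only [h, if_neg, ite_false]
      exact Finset.mem_coe.2 (hov_mem i₁ hi₁)
  · -- b > 0 : use the inner faces and `K.inter_subset_convexHull`
    obtain ⟨τ, hτf, hτsub, hyτ⟩ := r.inner_face hv hbpos
    obtain ⟨τ', hτ'f, hτ'sub, hyτ'⟩ := r'.inner_face hv' (by rw [← hbb]; exact hbpos)
    have hyy : r.b⁻¹ • r.u = r'.b⁻¹ • r'.u := by rw [hMu, hbb]
    set y := r.b⁻¹ • r.u with hy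
    have hyint : y ∈ convexHull ℝ ((τ ∩ τ' : Finset (Fin n → ℝ)) : Set (Fin n → ℝ)) := by
      have := K.inter_subset_convexHull hτf hτ'f ⟨hyτ, by rw [hyy]; exact hyτ'⟩
      rwa [← Finset.coe_inter] at this
    have hymem : y ∈ convexHull ℝ ((s ∩ t : Finset (Fin n → ℝ)) : Set (Fin n → ℝ)) := by
      refine convexHull_mono ?_ hyint
      rw [Finset.coe_subset]  -- fallback may fail
      intro v hvm
      have h1 := Finset.mem_inter.1 hvm
      exact Finset.mem_inter.2
        ⟨(Finset.mem_inter.1 (hτsub h1.1)).1, (Finset.mem_inter.1 (hτ'sub h1.2)).1⟩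
    set P : Option (Fin n) → (Fin n → ℝ) :=
      fun o => o.elim y (fun i => if 0 < r.α i then ov ε i else y) with hP
    set W : Option (Fin n) → ℝ := fun o => o.elim r.b r.α with hW
    have hz : z = ∑ o : Option (Fin n), W o • P o := by
      have h1 : W none • P none = r.u := by
        rw [hW, hP]
        simp only [Option.elim]
        rw [hy, smul_smul, mul_inv_cancel₀ (ne_of_gt hbpos), one_smul]
      refine r.hrepr.trans ?_
      rw [Fintype.sum_option, h1, add_comm]
      congr 1
      refine Finset.sum_congr rfl fun i _ => ?_
      rcases eq_or_lt_of_le (r.hα0 i) with h | h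
      · rw [hW, hP]; simp only [Option.elim]; rw [← h, zero_smul, zero_smul]
      · rw [hW, hP]; simp only [Option.elim]; simp only [h, if_pos]
    rw [hz]
    refine Convex.sum_mem (convex_convexHull ℝ _) ?_ ?_ ?_
    · rintro (_ | i) _
      · exact le_of_lt hbpos
      · exact r.hα0 i
    · rw [Fintype.sum_option]
      have := r.total
      rw [hW]
      simp only [Option.elim]
      linarith
    · rintro (_ | i) _
      · exact hymem
      · rw [hP]
        simp only [Option.elim]
        by_cases h : 0 < r.α i
        · simp only [h, if_pos]
          exact subset_convexHull ℝ _ (Finset.mem_coe.2 (hov_mem i h))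
        · simp only [h, if_neg, ite_false]
          exact hymem

end OctAux

namespace OctAux

variable {n : ℕ} {K : Geometry.SimplicialComplex ℝ (Fin n → ℝ)}
variable {ε ε' : Fin n → ℝ} {k k' : ℕ} {σ σ' s t : Finset (Fin n → ℝ)} {z : Fin n → ℝ}

lemma face_collar_inter (hspace : K.space = octa n) (hsf : s ∈ K.faces)
    (hv : Valid K ε' k' σ') (ht : t ⊆ chainF ε' k' ∪ σ') :
    convexHull ℝ (s : Set (Fin n → ℝ)) ∩ convexHull ℝ (t : Set (Fin n → ℝ)) ⊆
      convexHull ℝ ((s ∩ t : Finset (Fin n → ℝ)) : Set (Fin n → ℝ)) := by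
  rintro z ⟨hzs, hzt⟩
  have hz1 : nrm z ≤ 1 := by
    have : z ∈ K.space := K.convexHull_subset_space hsf hzs
    rw [hspace] at this
    exact this
  obtain ⟨r'⟩ := exists_rep hv ht hzt
  have hsumα : ∑ i, r'.α i = 0 := by
    have h1 := r'.znrm hv.sign
    have h2 : ∑ i, r'.α i ≤ 0 := by linarith
    exact le_antisymm h2 (Finset.sum_nonneg fun i _ => r'.hα0 i)
  have hb1 : r'.b = 1 := by have := r'.total; linarith
  have huz : r'.u = z := by
    have hα : ∀ i, r'.α i = 0 :=
      fun i => (Finset.sum_eq_zero_iff_of_nonneg (fun i _ => r'.hα0 i)).1 hsumα i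
        (Finset.mem_univ i)
    have h0 : (∑ i, r'.α i • ov ε' i) = 0 :=
      Finset.sum_eq_zero fun i _ => by rw [hα i, zero_smul]
    have := r'.hrepr
    rw [h0, zero_add] at this
    exact this.symm
  obtain ⟨τ', hτ'f, hτ'sub, hyτ'⟩ := r'.inner_face hv (by rw [hb1]; norm_num)
  have hzτ' : z ∈ convexHull ℝ (τ' : Set (Fin n → ℝ)) := by
    rw [hb1, huz] at hyτ'
    simpa using hyτ'
  have := K.inter_subset_convexHull hsf hτ'f ⟨hzs, hzτ'⟩
  rw [← Finset.coe_inter] at this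
  refine convexHull_mono ?_ this
  rw [Finset.coe_subset]
  intro v hvm
  have h1 := Finset.mem_inter.1 hvm
  exact Finset.mem_inter.2 ⟨h1.1, (Finset.mem_inter.1 (hτ'sub h1.2)).1⟩

lemma finset_affineIndependent_iff {T : Finset (Fin n → ℝ)} :
    AffineIndependent ℝ ((↑) : T → (Fin n → ℝ)) ↔
      ∀ w : (Fin n → ℝ) → ℝ, ∑ x ∈ T, w x = 0 → ∑ x ∈ T, w x • x = 0 →
        ∀ x ∈ T, w x = 0 := by
  constructor
  · intro h w h0 hc x hx
    have key := affineIndependent_iff.1 h T.attach (fun e => w e.val) ?_ ?_ ⟨x, hx⟩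
      (Finset.mem_attach _ _)
    · exact key
    · rw [Finset.sum_attach T (fun x => w x)]; exact h0
    · rw [Finset.sum_attach T (fun x => w x • x)]; exact hc
  · intro h
    rw [affineIndependent_iff]
    intro S w h0 hc e heS
    set W : (Fin n → ℝ) → ℝ :=
      fun x => if hx : x ∈ T then (if (⟨x, hx⟩ : T) ∈ S then w ⟨x, hx⟩ else 0) else 0 with hW
    have hWval : ∀ e : T, W e.val = if e ∈ S then w e else 0 := by
      intro e
      rw [hW]
      simp only [e.2, dif_pos, Subtype.coe_eta]
    have h1 : ∑ x ∈ T, W x = ∑ e ∈ S, w e := by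
      rw [← Finset.sum_attach T W]
      rw [Finset.sum_congr rfl fun e _ => hWval e]
      rw [Finset.sum_ite_mem, Finset.inter_eq_right.2 (fun e _ => Finset.mem_attach _ _)]
    have h2 : ∑ x ∈ T, W x • x = ∑ e ∈ S, w e • e.val := by
      rw [← Finset.sum_attach T (fun x => W x • x)]
      rw [Finset.sum_congr rfl fun e _ => ?_]
      · rw [Finset.sum_ite_mem, Finset.inter_eq_right.2 (fun e _ => Finset.mem_attach _ _)]
      · show W e.val • e.val = if e ∈ S then w e • e.val else 0
        rw [hWval e, ite_smul, zero_smul]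
    have key := h W (by rw [h1]; exact h0) (by rw [h2]; exact hc) e.val e.2
    rw [hWval e, if_pos heS] at key
    exact key

lemma sum_template {M : Type*} [AddCommMonoid M] (hv : Valid K ε k σ)
    (g : (Fin n → ℝ) → M) :
    ∑ x ∈ chainF ε k ∪ σ, g x
      = (∑ i ∈ Finset.univ.filter (fun i : Fin n => (i : ℕ) < k), g (ov ε i)) + ∑ v ∈ σ, g v := by
  have hdisj : Disjoint (chainF ε k) σ :=
    Finset.disjoint_left.2 fun x hx hxσ => hv.not_mem_chain hxσ hx
  rw [Finset.sum_union hdisj, chainF, Finset.sum_image]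
  intro i _ j _ hij
  exact ov_inj hv.sign hij

lemma template_indep (hv : Valid K ε k σ) :
    AffineIndependent ℝ ((↑) : (chainF ε k ∪ σ : Finset (Fin n → ℝ)) → (Fin n → ℝ)) := by
  rw [finset_affineIndependent_iff]
  intro w h0 hc
  set J := Finset.univ.filter (fun i : Fin n => (i : ℕ) < k) with hJ
  rw [sum_template hv] at h0
  rw [sum_template hv] at hc
  -- coordinates below k-1 kill the corresponding chain weights
  have hlow : ∀ j ∈ J, (j : ℕ) + 1 < k → w (ov ε j) = 0 := by
    intro j hjJ hjk
    have hcj := congrFun hc j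
    rw [Pi.add_apply, Finset.sum_apply, Finset.sum_apply, Pi.zero_apply] at hcj
    have hσ0 : ∑ v ∈ σ, (w v • v) j = 0 :=
      Finset.sum_eq_zero fun v hv' => by
        rw [Pi.smul_apply, smul_eq_mul, hv.supp v hv' j hjk, mul_zero]
    have hch : ∑ i ∈ J, (w (ov ε i) • ov ε i) j = w (ov ε j) * (2 * ε j) := by
      have : ∀ i ∈ J, (w (ov ε i) • ov ε i) j
          = if j = i then w (ov ε i) * (2 * ε i) else 0 := by
        intro i _
        rw [Pi.smul_apply, smul_eq_mul, ov_apply]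
        split_ifs <;> simp
      rw [Finset.sum_congr rfl this, Finset.sum_ite_eq, if_pos hjJ]
    rw [hσ0, add_zero, hch] at hcj
    have h2 : (2 : ℝ) * ε j ≠ 0 := mul_ne_zero two_ne_zero (hv.sign.ne_zero j)
    exact (mul_eq_zero.1 hcj).resolve_right h2
  -- the ℓ functional
  set R := Finset.univ.filter (fun i : Fin n => k ≤ (i : ℕ) + 1) with hR
  set ℓ : (Fin n → ℝ) → ℝ := fun g => ∑ i ∈ R, ε i * g i with hℓ
  have hℓσ : ∀ v ∈ σ, ℓ v = 1 := by
    intro v hvσ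
    have habs : ∀ i ∈ R, ε i * v i = |v i| := by
      intro i _
      have hnn := hv.signv v hvσ i
      have : |ε i * v i| = |v i| := by rw [abs_mul, hv.sign.abs, one_mul]
      rw [← this, abs_of_nonneg hnn]
    rw [hℓ]
    simp only
    rw [Finset.sum_congr rfl habs]
    have : ∑ i ∈ R, |v i| = ∑ i, |v i| := by
      refine Finset.sum_subset (Finset.filter_subset _ _) ?_
      intro i _ hiR
      rw [hR] at hiR
      simp only [Finset.mem_filter, Finset.mem_univ, true_and, not_le] at hiR
      rw [hv.supp v hvσ i (by omega), abs_zero]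
    rw [this]
    exact hv.nrm1 v hvσ
  have hℓov : ∀ j ∈ J, ℓ (ov ε j) = if (j : ℕ) + 1 = k then 2 else 0 := by
    intro j hjJ
    rw [hJ] at hjJ
    simp only [Finset.mem_filter, Finset.mem_univ, true_and] at hjJ
    have : ∀ i ∈ R, ε i * ov ε j i = if i = j then 2 * (ε j * ε j) else 0 := by
      intro i _
      rw [ov_apply]
      split_ifs with h
      · rw [h]; ring
      · ring
    rw [hℓ]
    simp only
    rw [Finset.sum_congr rfl this, Finset.sum_ite_eq', hv.sign.mul_self j, mul_one]
    rw [hR]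
    simp only [Finset.mem_filter, Finset.mem_univ, true_and]
    split_ifs with h1 h2 h2
    · rfl
    · omega
    · omega
    · rfl
  -- apply ℓ to the combination
  have hℓcomb : (∑ i ∈ J, w (ov ε i) * ℓ (ov ε i)) + ∑ v ∈ σ, w v * ℓ v = 0 := by
    have expand : ∀ g : Fin n → ℝ,
        (∑ i ∈ J, w (ov ε i) • ov ε i) = g → True := fun _ _ => trivial
    have key : ∑ i ∈ R, ε i * ((∑ i ∈ J, w (ov ε i) • ov ε i) + ∑ v ∈ σ, w v • v) i = 0 := by
      rw [hc]
      simp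
    have lhs_eq : ∑ i ∈ R, ε i * ((∑ i ∈ J, w (ov ε i) • ov ε i) + ∑ v ∈ σ, w v • v) i
        = (∑ j ∈ J, w (ov ε j) * ℓ (ov ε j)) + ∑ v ∈ σ, w v * ℓ v := by
      have step1 : ∀ i : Fin n,
          ε i * ((∑ i ∈ J, w (ov ε i) • ov ε i) + ∑ v ∈ σ, w v • v) i
          = (∑ j ∈ J, w (ov ε j) * (ε i * ov ε j i)) + ∑ v ∈ σ, w v * (ε i * v i) := by
        intro i
        rw [Pi.add_apply, Finset.sum_apply, Finset.sum_apply, mul_add, Finset.mul_sum,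
          Finset.mul_sum]
        congr 1
        · refine Finset.sum_congr rfl fun j _ => ?_
          rw [Pi.smul_apply, smul_eq_mul]; ring
        · refine Finset.sum_congr rfl fun v _ => ?_
          rw [Pi.smul_apply, smul_eq_mul]; ring
      rw [Finset.sum_congr rfl fun i _ => step1 i, Finset.sum_add_distrib]
      congr 1
      · rw [Finset.sum_comm]
        refine Finset.sum_congr rfl fun j _ => ?_
        rw [hℓ, Finset.mul_sum]
      · rw [Finset.sum_comm]
        refine Finset.sum_congr rfl fun v _ => ?_
        rw [hℓ, Finset.mul_sum]
    rw [← lhs_eq]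
    exact key
  -- compute the two sums
  have hchainsum : ∑ i ∈ J, w (ov ε i) * ℓ (ov ε i)
      = 2 * ∑ i ∈ J.filter (fun j : Fin n => (j : ℕ) + 1 = k), w (ov ε i) := by
    have hstep : ∀ j ∈ J, w (ov ε j) * ℓ (ov ε j)
        = if (j : ℕ) + 1 = k then 2 * w (ov ε j) else 0 := by
      intro j hjJ
      rw [hℓov j hjJ]
      split_ifs <;> ring
    rw [Finset.sum_congr rfl hstep, ← Finset.sum_filter, Finset.mul_sum]
  have hJsum : ∑ i ∈ J, w (ov ε i)
      = ∑ i ∈ J.filter (fun j : Fin n => (j : ℕ) + 1 = k), w (ov ε i) := by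
    have hstep : ∀ j ∈ J, w (ov ε j)
        = if (j : ℕ) + 1 = k then w (ov ε j) else 0 := by
      intro j hjJ
      split_ifs with h
      · rfl
      · have hjk : (j : ℕ) < k := by
          rw [hJ] at hjJ
          simpa using hjJ
        exact hlow j hjJ (by omega)
    rw [Finset.sum_congr rfl hstep, ← Finset.sum_filter]
  have hσℓ : ∑ v ∈ σ, w v * ℓ v = ∑ v ∈ σ, w v := by
    refine Finset.sum_congr rfl fun v hvσ => ?_
    rw [hℓσ v hvσ, mul_one]
  rw [hchainsum, hσℓ] at hℓcomb
  rw [hJsum] at h0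
  -- deduce that all chain weights vanish and ∑_σ w = 0
  have hKsum : ∑ i ∈ J.filter (fun j : Fin n => (j : ℕ) + 1 = k), w (ov ε i) = 0 := by
    linarith
  have hσsum : ∑ v ∈ σ, w v = 0 := by linarith
  have hsingle : ∀ j ∈ J, (j : ℕ) + 1 = k → w (ov ε j) = 0 := by
    intro j hjJ hjk
    have : J.filter (fun j : Fin n => (j : ℕ) + 1 = k) = {j} := by
      ext i
      simp only [Finset.mem_filter, Finset.mem_singleton, hJ, Finset.mem_univ, true_and]
      constructor
      · rintro ⟨_, h2⟩
        exact Fin.ext (by omega)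
      · rintro rfl
        exact ⟨by omega, hjk⟩
    rw [this, Finset.sum_singleton] at hKsum
    exact hKsum
  have hchain0 : ∀ j ∈ J, w (ov ε j) = 0 := by
    intro j hjJ
    have hjk : (j : ℕ) < k := by rw [hJ] at hjJ; simpa using hjJ
    rcases Nat.lt_or_ge ((j : ℕ) + 1) k with h | h
    · exact hlow j hjJ h
    · exact hsingle j hjJ (by omega)
  -- now σ's affine independence
  have hσ0 : ∀ v ∈ σ, w v = 0 := by
    rcases hv.faceK with hσe | hσf
    · intro v hvσ; rw [hσe] at hvσ; exact absurd hvσ (Finset.notMem_empty v)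
    · have hind := finset_affineIndependent_iff.1 (K.indep hσf)
      refine hind w hσsum ?_
      have : ∑ i ∈ J, w (ov ε i) • ov ε i = 0 :=
        Finset.sum_eq_zero fun j hjJ => by rw [hchain0 j hjJ, zero_smul]
      rw [this, zero_add] at hc
      exact hc
  intro x hx
  rcases Finset.mem_union.1 hx with hxc | hxσ
  · rcases mem_chainF.1 hxc with ⟨i, hik, rfl⟩
    exact hchain0 i (by rw [hJ]; simpa using hik)
  · exact hσ0 x hxσ

end OctAux

namespace OctAux

variable {n : ℕ} {K : Geometry.SimplicialComplex ℝ (Fin n → ℝ)}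

lemma sum_smul_ov_apply (ε : Fin n → ℝ) (c : Fin n → ℝ) (j : Fin n) :
    (∑ i, c i • ov ε i) j = c j * (2 * ε j) := by
  rw [Finset.sum_apply]
  have : ∀ i, (c i • ov ε i) j = if j = i then c i * (2 * ε i) else 0 := by
    intro i
    rw [Pi.smul_apply, smul_eq_mul, ov_apply]
    split_ifs <;> simp
  rw [Finset.sum_congr rfl fun i _ => this i, Finset.sum_ite_eq, if_pos (Finset.mem_univ j)]

lemma face_absorb (hspace : K.space = octa n) {ε : Fin n → ℝ} (hε : IsSign ε) (k : ℕ)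
    {τ₀ : Finset (Fin n → ℝ)} (hτ₀ : τ₀ ∈ K.faces) {ω : (Fin n → ℝ) → ℝ}
    (hω0 : ∀ v ∈ τ₀, 0 ≤ ω v) (hω1 : ∑ v ∈ τ₀, ω v = 1) {y : Fin n → ℝ}
    (hy : ∑ v ∈ τ₀, ω v • v = y) (hny : nrm y = 1) (hsgn : ∀ i, 0 ≤ ε i * y i)
    (hsupp : ∀ i : Fin n, (i : ℕ) + 1 < k → y i = 0) :
    ∀ v ∈ τ₀, 0 < ω v →
      nrm v = 1 ∧ (∀ i, 0 ≤ ε i * v i) ∧ (∀ i : Fin n, (i : ℕ) + 1 < k → v i = 0) := by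
  classical
  set R := Finset.univ.filter (fun i : Fin n => k ≤ (i : ℕ) + 1) with hR
  set ℓ : (Fin n → ℝ) → ℝ := fun g => ∑ i ∈ R, ε i * g i with hℓ
  have habs1 : ∀ g : Fin n → ℝ, ∀ i, 0 ≤ ε i * g i → ε i * g i = |g i| := by
    intro g i hnn
    have : |ε i * g i| = |g i| := by rw [abs_mul, hε.abs, one_mul]
    rw [← this, abs_of_nonneg hnn]
  have hℓy : ℓ y = 1 := by
    rw [hℓ]
    simp only
    rw [Finset.sum_congr rfl fun i _ => habs1 y i (hsgn i)]
    have : ∑ i ∈ R, |y i| = ∑ i, |y i| := by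
      refine Finset.sum_subset (Finset.filter_subset _ _) ?_
      intro i _ hiR
      rw [hR] at hiR
      simp only [Finset.mem_filter, Finset.mem_univ, true_and, not_le] at hiR
      rw [hsupp i (by omega), abs_zero]
    rw [this]
    exact hny
  have hle : ∀ v ∈ τ₀, ℓ v ≤ 1 := by
    intro v hvτ
    have h1 : ℓ v ≤ ∑ i ∈ R, |v i| := by
      rw [hℓ]
      refine Finset.sum_le_sum fun i _ => ?_
      calc ε i * v i ≤ |ε i * v i| := le_abs_self _
      _ = |v i| := by rw [abs_mul, hε.abs, one_mul]
    have h2 : ∑ i ∈ R, |v i| ≤ nrm v := by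
      refine Finset.sum_le_sum_of_subset_of_nonneg (Finset.filter_subset _ _) ?_
      intro i _ _
      exact abs_nonneg _
    have h3 := face_nrm_le hspace hτ₀ hvτ
    linarith
  have hcombo : ∑ v ∈ τ₀, ω v * ℓ v = 1 := by
    have : ℓ y = ∑ v ∈ τ₀, ω v * ℓ v := by
      rw [hℓ, ← hy]
      simp only
      have step : ∀ i : Fin n, ε i * (∑ v ∈ τ₀, ω v • v) i = ∑ v ∈ τ₀, ω v * (ε i * v i) := by
        intro i
        rw [Finset.sum_apply, Finset.mul_sum]
        refine Finset.sum_congr rfl fun v _ => ?_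
        rw [Pi.smul_apply, smul_eq_mul]
        ring
      rw [Finset.sum_congr rfl fun i _ => step i, Finset.sum_comm]
      refine Finset.sum_congr rfl fun v _ => ?_
      rw [Finset.mul_sum]
    rw [← this, hℓy]
  have hall : ∀ v ∈ τ₀, 0 < ω v → ℓ v = 1 := by
    intro v hvτ hωv
    have hzero : ∑ v ∈ τ₀, ω v * (1 - ℓ v) = 0 := by
      rw [Finset.sum_congr rfl fun v _ => (mul_sub (ω v) 1 (ℓ v)),
        Finset.sum_sub_distrib]
      simp only [mul_one]
      rw [hω1, hcombo]
      ring
    have hnn : ∀ v ∈ τ₀, 0 ≤ ω v * (1 - ℓ v) := fun v hv =>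
      mul_nonneg (hω0 v hv) (by linarith [hle v hv])
    have := (Finset.sum_eq_zero_iff_of_nonneg hnn).1 hzero v hvτ
    rcases mul_eq_zero.1 this with h | h
    · exact absurd h (ne_of_gt hωv)
    · linarith
  intro v hvτ hωv
  have hℓv : ℓ v = 1 := hall v hvτ hωv
  have hnv : nrm v ≤ 1 := face_nrm_le hspace hτ₀ hvτ
  have h1 : ℓ v ≤ ∑ i ∈ R, |v i| := by
    rw [hℓ]
    refine Finset.sum_le_sum fun i _ => ?_
    calc ε i * v i ≤ |ε i * v i| := le_abs_self _
    _ = |v i| := by rw [abs_mul, hε.abs, one_mul]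
  have h2 : ∑ i ∈ R, |v i| ≤ nrm v := by
    refine Finset.sum_le_sum_of_subset_of_nonneg (Finset.filter_subset _ _) ?_
    intro i _ _
    exact abs_nonneg _
  have hnrmv : nrm v = 1 := le_antisymm hnv (by rw [← hℓv] at *; linarith)
  have hRsum : ∑ i ∈ R, |v i| = 1 := le_antisymm (by linarith) (by rw [← hℓv]; linarith)
  have houtR : ∀ i : Fin n, (i : ℕ) + 1 < k → v i = 0 := by
    intro i hik
    have hiR : i ∉ R := by
      rw [hR]
      simp only [Finset.mem_filter, Finset.mem_univ, true_and, not_le]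
      omega
    have hsplit : ∑ j ∈ R, |v j| + ∑ j ∈ Rᶜ, |v j| = nrm v := by
      rw [nrm, ← Finset.sum_add_sum_compl R (fun j => |v j|)]
    have hc0 : ∑ j ∈ Rᶜ, |v j| = 0 := by rw [hnrmv] at hsplit; linarith
    have := (Finset.sum_eq_zero_iff_of_nonneg (fun j _ => abs_nonneg (v j))).1 hc0 i
      (Finset.mem_compl.2 hiR)
    exact abs_eq_zero.1 this
  have hsgnv : ∀ i, 0 ≤ ε i * v i := by
    intro i
    by_cases hiR : i ∈ R
    · have hzero : ∑ j ∈ R, (|v j| - ε j * v j) = 0 := by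
        rw [Finset.sum_sub_distrib, hRsum]
        have : ∑ j ∈ R, ε j * v j = 1 := hℓv
        linarith
      have hnn : ∀ j ∈ R, 0 ≤ |v j| - ε j * v j := by
        intro j _
        have : ε j * v j ≤ |ε j * v j| := le_abs_self _
        rw [abs_mul, hε.abs, one_mul] at this
        linarith
      have := (Finset.sum_eq_zero_iff_of_nonneg hnn).1 hzero i hiR
      have habs : ε i * v i = |v i| := by linarith
      rw [habs]
      exact abs_nonneg _
    · have : (i : ℕ) + 1 < k := by
        rw [hR] at hiR
        simp only [Finset.mem_filter, Finset.mem_univ, true_and, not_le] at hiR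
        omega
      rw [houtR i this, mul_zero]
  exact ⟨hnrmv, hsgnv, houtR⟩

end OctAux

namespace OctAux

variable {n : ℕ} {K : Geometry.SimplicialComplex ℝ (Fin n → ℝ)}

/-- The faces of the collar complex. -/
def goodFaces (K : Geometry.SimplicialComplex ℝ (Fin n → ℝ)) : Set (Finset (Fin n → ℝ)) :=
  {s | s.Nonempty ∧ (s ∈ K.faces ∨ ∃ ε k σ, Valid K ε k σ ∧ s ⊆ chainF ε k ∪ σ)}

lemma K_face_mem_good (hs : s ∈ K.faces) : s ∈ goodFaces K :=
  ⟨Finset.nonempty_iff_ne_empty.2 (fun h => K.empty_notMem (h ▸ hs)), Or.inl hs⟩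

/-- The collar complex: `K` together with the radial collar out to the octahedron of
radius `2`, whose outer boundary is the standard (symmetric) cross-polytope boundary. -/
noncomputable def collar (K : Geometry.SimplicialComplex ℝ (Fin n → ℝ))
    (hspace : K.space = octa n) : Geometry.SimplicialComplex ℝ (Fin n → ℝ) where
  faces := goodFaces K
  isRelLowerSet_faces := by
    rintro s ⟨hne, hs | ⟨ε, k, σ, hval, hsub⟩⟩
    · exact ⟨hne, fun t hts htne => K_face_mem_good (K.down_closed hs hts htne)⟩
    · exact ⟨hne, fun t hts htne => ⟨htne, Or.inr ⟨ε, k, σ, hval, hts.trans hsub⟩⟩⟩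
  indep := by
    rintro s ⟨hne, hs | ⟨ε, k, σ, hval, hsub⟩⟩
    · exact K.indep hs
    · have h1 := template_indep hval
      have h2 : (s : Set (Fin n → ℝ)) ⊆ ((chainF ε k ∪ σ : Finset (Fin n → ℝ)) :
          Set (Fin n → ℝ)) := Finset.coe_subset.2 hsub
      exact h1.mono h2
  inter_subset_convexHull := by
    rintro s t ⟨hsne, hsK | ⟨ε, k, σ, hval, hsub⟩⟩ ⟨htne, htK | ⟨ε', k', σ', hval', hsub'⟩⟩
    · exact K.inter_subset_convexHull hsK htK
    · rw [← Finset.coe_inter]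
      exact face_collar_inter hspace hsK hval' hsub'
    · intro z hz
      have := face_collar_inter hspace htK hval hsub ⟨hz.2, hz.1⟩
      rwa [Finset.inter_comm t s, Finset.coe_inter] at this
    · rcases le_total k k' with hkk | hkk
      · rw [← Finset.coe_inter]
        exact collar_inter_aux hval hval' hkk hsub hsub'
      · intro z hz
        have := collar_inter_aux hval' hval hkk hsub' hsub ⟨hz.2, hz.1⟩
        rwa [Finset.inter_comm t s, Finset.coe_inter] at this

lemma collar_faces_eq (hspace : K.space = octa n) : (collar K hspace).faces = goodFaces K := rfl

lemma convex_nrm_le (c : ℝ) : Convex ℝ {x : Fin n → ℝ | nrm x ≤ c} := by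
  intro x hx y hy a b ha hb hab
  simp only [Set.mem_setOf_eq] at *
  have : nrm (a • x + b • y) ≤ a * nrm x + b * nrm y := by
    rw [nrm, nrm, nrm, Finset.mul_sum, Finset.mul_sum, ← Finset.sum_add_distrib]
    refine Finset.sum_le_sum fun i _ => ?_
    have : |a * x i + b * y i| ≤ |a * x i| + |b * y i| := abs_add_le _ _
    rw [abs_mul, abs_mul, abs_of_nonneg ha, abs_of_nonneg hb] at this
    simpa using this
  have hax : a * nrm x ≤ a * c := mul_le_mul_of_nonneg_left hx ha
  have hby : b * nrm y ≤ b * c := mul_le_mul_of_nonneg_left hy hb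
  calc nrm (a • x + b • y) ≤ a * nrm x + b * nrm y := this
  _ ≤ a * c + b * c := by linarith
  _ = c := by rw [← add_mul, hab, one_mul]

lemma good_face_subset_ball {s : Finset (Fin n → ℝ)} (hspace : K.space = octa n)
    (hs : s ∈ goodFaces K) : ∀ v ∈ s, nrm v ≤ 2 := by
  rcases hs with ⟨_, hsK | ⟨ε, k, σ, hval, hsub⟩⟩
  · intro v hv
    have := face_nrm_le hspace hsK hv
    linarith
  · intro v hv
    rcases Finset.mem_union.1 (hsub hv) with h | h
    · rcases mem_chainF.1 h with ⟨i, _, rfl⟩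
      rw [nrm_ov hval.sign]
    · rw [hval.nrm1 v h]
      norm_num

end OctAux

namespace OctAux

variable {n : ℕ} {K : Geometry.SimplicialComplex ℝ (Fin n → ℝ)}

lemma collar_space (hspace : K.space = octa n) :
    (collar K hspace).space = {x : Fin n → ℝ | nrm x ≤ 2} := by
  apply Set.Subset.antisymm
  · intro z hz
    rw [Geometry.SimplicialComplex.mem_space_iff] at hz
    obtain ⟨s, hs, hzs⟩ := hz
    have : (s : Set (Fin n → ℝ)) ⊆ {x : Fin n → ℝ | nrm x ≤ 2} := by
      intro v hv
      exact good_face_subset_ball hspace hs v (Finset.mem_coe.1 hv)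
    exact convexHull_min this (convex_nrm_le 2) hzs
  · intro z hz2
    simp only [Set.mem_setOf_eq] at hz2
    rw [Geometry.SimplicialComplex.mem_space_iff]
    by_cases hle1 : nrm z ≤ 1
    · -- z lies in the original complex
      have : z ∈ K.space := by rw [hspace]; exact hle1
      rw [Geometry.SimplicialComplex.mem_space_iff] at this
      obtain ⟨s, hs, hzs⟩ := this
      exact ⟨s, K_face_mem_good hs, hzs⟩
    · push_neg at hle1
      -- the collar part
      set ε : Fin n → ℝ := fun i => if z i < 0 then -1 else 1 with hε'
      have hε : IsSign ε := by
        intro i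
        by_cases h : z i < 0
        · right; simp only [hε', if_pos h]
        · left; simp only [hε', if_neg h]
      have hεz : ∀ i, ε i * z i = |z i| := by
        intro i
        by_cases h : z i < 0
        · simp only [hε', if_pos h]
          rw [abs_of_neg h]; ring
        · simp only [hε', if_neg h]
          rw [abs_of_nonneg (not_lt.1 h)]; ring
      have hεz' : ∀ i, ε i * |z i| = z i := by
        intro i
        calc ε i * |z i| = ε i * (ε i * z i) := by rw [hεz i]
        _ = (ε i * ε i) * z i := by ring
        _ = z i := by rw [hε.mul_self i, one_mul]
      set f : ℕ → ℝ := fun m =>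
        (∑ i ∈ Finset.univ.filter (fun i : Fin n => (i : ℕ) < m), |z i| / 2)
          + ∑ i ∈ Finset.univ.filter (fun i : Fin n => ¬ (i : ℕ) < m), |z i| with hf
      have hf0 : f 0 = nrm z := by
        rw [hf]
        simp [nrm]
      have hfn : f n = nrm z / 2 := by
        have h1 : Finset.univ.filter (fun i : Fin n => (i : ℕ) < n) = Finset.univ := by
          ext i; simp [i.2]
        have h2 : Finset.univ.filter (fun i : Fin n => ¬ (i : ℕ) < n) = ∅ := by
          ext i; simp [i.2]
        rw [hf]
        simp only [h1, h2, Finset.sum_empty, add_zero]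
        rw [← Finset.sum_div, nrm]
      have hPn : f n ≤ 1 := by rw [hfn]; linarith
      set k := Nat.find (⟨n, hPn⟩ : ∃ m, f m ≤ 1) with hk
      have hkP : f k ≤ 1 := Nat.find_spec (⟨n, hPn⟩ : ∃ m, f m ≤ 1)
      have hkn : k ≤ n := Nat.find_le hPn
      have hk0 : k ≠ 0 := by
        intro h
        rw [h, hf0] at hkP
        linarith
      obtain ⟨m, hm⟩ : ∃ m, k = m + 1 := ⟨k - 1, by omega⟩
      have hfm : ¬ f m ≤ 1 := Nat.find_min (⟨n, hPn⟩ : ∃ m, f m ≤ 1) (by omega)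
      push_neg at hfm
      have hmn : m < n := by omega
      set i₀ : Fin n := ⟨m, hmn⟩ with hi₀
      have hi₀v : (i₀ : ℕ) = m := rfl
      -- structure of the filters
      have hfilt1 : Finset.univ.filter (fun i : Fin n => (i : ℕ) < m + 1)
          = insert i₀ (Finset.univ.filter (fun i : Fin n => (i : ℕ) < m)) := by
        ext i
        simp only [Finset.mem_filter, Finset.mem_univ, true_and, Finset.mem_insert]
        constructor
        · intro h
          rcases Nat.lt_succ_iff_lt_or_eq.1 h with h | h
          · right; exact h
          · left; exact Fin.ext (by rw [hi₀v]; exact h)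
        · rintro (rfl | h)
          · rw [hi₀v]; omega
          · omega
      have hfilt2 : Finset.univ.filter (fun i : Fin n => ¬ (i : ℕ) < m)
          = insert i₀ (Finset.univ.filter (fun i : Fin n => ¬ (i : ℕ) < m + 1)) := by
        ext i
        simp only [Finset.mem_filter, Finset.mem_univ, true_and, Finset.mem_insert, not_lt]
        constructor
        · intro h
          rcases Nat.eq_or_lt_of_le h with h | h
          · left; exact Fin.ext (by rw [hi₀v]; exact h.symm)
          · right; omega
        · rintro (rfl | h)
          · rw [hi₀v]
          · omega
      have hi₀1 : i₀ ∉ Finset.univ.filter (fun i : Fin n => (i : ℕ) < m) := by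
        simp only [Finset.mem_filter, Finset.mem_univ, true_and, hi₀v]
        omega
      have hi₀2 : i₀ ∉ Finset.univ.filter (fun i : Fin n => ¬ (i : ℕ) < m + 1) := by
        simp only [Finset.mem_filter, Finset.mem_univ, true_and, hi₀v]
        omega
      set S₁ := ∑ i ∈ Finset.univ.filter (fun i : Fin n => (i : ℕ) < m), |z i| with hS₁
      set S₂ := ∑ i ∈ Finset.univ.filter (fun i : Fin n => ¬ (i : ℕ) < m + 1), |z i| with hS₂
      have hS₁nn : 0 ≤ S₁ := Finset.sum_nonneg fun i _ => abs_nonneg _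
      have hS₂nn : 0 ≤ S₂ := Finset.sum_nonneg fun i _ => abs_nonneg _
      have hfm_eq : f m = S₁ / 2 + (|z i₀| + S₂) := by
        rw [hf]
        simp only
        rw [hfilt2, Finset.sum_insert hi₀2, ← hS₂]
        have h3 : ∑ i ∈ Finset.univ.filter (fun i : Fin n => (i : ℕ) < m), |z i| / 2
            = S₁ / 2 := by rw [hS₁, Finset.sum_div]
        rw [h3]
      have hfm1_eq : f (m + 1) = (S₁ + |z i₀|) / 2 + S₂ := by
        rw [hf]
        simp only
        rw [hfilt1, Finset.sum_insert hi₀1, ← hS₂, ← Finset.sum_div, ← hS₁]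
        ring
      set t : ℝ := 2 * (1 - f (m + 1)) with ht
      have hkP' : f (m + 1) ≤ 1 := hm ▸ hkP
      have ht0 : 0 ≤ t := by
        rw [ht]
        have hgen0 : ∀ b : ℝ, b ≤ 1 → 0 ≤ 2 * (1 - b) := fun b hb => by linarith
        exact hgen0 _ hkP'
      have htlt : t < |z i₀| := by
        rw [ht]
        have h5 : f m - f (m + 1) = |z i₀| / 2 := by rw [hfm_eq, hfm1_eq]; ring
        have h6 : 1 < f m := hfm
        have hgen : ∀ a b c : ℝ, a - b = c / 2 → 1 < a → 2 * (1 - b) < c :=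
          fun a b c h1 h2 => by linarith
        exact hgen _ _ _ h5 h6
      set α : Fin n → ℝ := fun i =>
        if (i : ℕ) < m then |z i| / 2 else if i = i₀ then (|z i₀| - t) / 2 else 0 with hα
      set u : Fin n → ℝ := fun i =>
        if (i : ℕ) < m then 0 else if i = i₀ then t * ε i₀ else z i with hu
      have hαnn : ∀ i, 0 ≤ α i := by
        intro i
        simp only [hα]
        split_ifs with h1 h2
        · positivity
        · linarith
        · exact le_refl 0
      have hαout : ∀ i : Fin n, ¬ ((i : ℕ) < m + 1) → α i = 0 := by
        intro i hi
        simp only [hα]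
        rw [if_neg (by omega), if_neg (by
          intro h
          rw [h, hi₀v] at hi
          omega)]
      have hzdecomp : z = (∑ i, α i • ov ε i) + u := by
        funext j
        rw [Pi.add_apply, sum_smul_ov_apply]
        simp only [hα, hu]
        by_cases h1 : (j : ℕ) < m
        · rw [if_pos h1, if_pos h1, add_zero]
          have : |z j| / 2 * (2 * ε j) = ε j * |z j| := by ring
          rw [this, hεz' j]
        · by_cases h2 : j = i₀
          · rw [if_neg h1, if_neg h1, if_pos h2, if_pos h2, h2]
            have : (|z i₀| - t) / 2 * (2 * ε i₀) + t * ε i₀ = ε i₀ * |z i₀| := by ring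
            rw [this, hεz' i₀]
          · rw [if_neg h1, if_neg h1, if_neg h2, if_neg h2]
            ring
      
      have hαsplit : ∀ i, α i = (if (i : ℕ) < m then |z i| / 2 else 0)
          + (if i = i₀ then (|z i₀| - t) / 2 else 0) := by
        intro i
        simp only [hα]
        by_cases h1 : (i : ℕ) < m
        · rw [if_pos h1, if_pos h1, if_neg (fun h => by rw [h, hi₀v] at h1; omega), add_zero]
        · rw [if_neg h1, if_neg h1, zero_add]
      have hsumα : (∑ i, α i) = S₁ / 2 + (|z i₀| - t) / 2 := by
        rw [Finset.sum_congr rfl fun i _ => hαsplit i, Finset.sum_add_distrib]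
        congr 1
        · have h7 : ∑ i ∈ Finset.univ.filter (fun i : Fin n => (i : ℕ) < m), |z i| / 2
              = S₁ / 2 := by rw [hS₁, Finset.sum_div]
          rw [← Finset.sum_filter, h7]
        · rw [Finset.sum_ite_eq' Finset.univ i₀ (fun _ => (|z i₀| - t) / 2),
            if_pos (Finset.mem_univ i₀)]
      have ht' : t = 2 * (1 - ((S₁ + |z i₀|) / 2 + S₂)) := by rw [ht, hfm1_eq]
      have htotal : (∑ i, α i) + (t + S₂) = 1 := by
        rw [hsumα]
        have hgen2 : ∀ s1 s2 c tt : ℝ, tt = 2 * (1 - ((s1 + c) / 2 + s2)) →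
            s1 / 2 + (c - tt) / 2 + (tt + s2) = 1 := fun s1 s2 c tt h => by linarith
        exact hgen2 _ _ _ _ ht'
      rcases eq_or_lt_of_le (by positivity : (0:ℝ) ≤ t + S₂) with hb0 | hbpos
      · -- pure outer face
        have ht00 : t = 0 := by linarith [hS₂nn, ht0, hb0.symm]
        have hS20 : S₂ = 0 := by linarith [hS₂nn, ht0, hb0.symm]
        have hzout : ∀ j : Fin n, ¬ (j : ℕ) < m + 1 → z j = 0 := by
          intro j hj
          have := (Finset.sum_eq_zero_iff_of_nonneg
            (fun i (_ : i ∈ Finset.univ.filter (fun i : Fin n => ¬ (i : ℕ) < m + 1)) =>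
              abs_nonneg (z i))).1 (by rw [← hS₂]; exact hS20) j
            (by simp only [Finset.mem_filter, Finset.mem_univ, true_and]; exact hj)
          exact abs_eq_zero.1 this
        have hu0 : u = 0 := by
          funext j
          simp only [hu, Pi.zero_apply]
          by_cases h1 : (j : ℕ) < m
          · rw [if_pos h1]
          · by_cases h2 : j = i₀
            · rw [if_neg h1, if_pos h2, ht00, zero_mul]
            · rw [if_neg h1, if_neg h2]
              refine hzout j ?_
              intro hcon
              have hjm : (j : ℕ) = m := by omega
              exact h2 (Fin.ext (by rw [hi₀v]; exact hjm))
        have hz_eq : z = ∑ i, α i • ov ε i := by rw [hzdecomp, hu0, add_zero]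
        have hsum1 : ∑ i, α i = 1 := by rw [← hb0, add_zero] at htotal; exact htotal
        set p : Fin n → (Fin n → ℝ) := fun i =>
          if (i : ℕ) < m + 1 then ov ε i else ov ε i₀ with hp
        have hz_eq' : z = ∑ i, α i • p i := by
          rw [hz_eq]
          refine Finset.sum_congr rfl fun i _ => ?_
          by_cases h1 : (i : ℕ) < m + 1
          · simp only [hp]; rw [if_pos h1]
          · rw [hαout i h1, zero_smul, zero_smul]
        have hval : Valid K ε (m + 1) ∅ := by
          refine ⟨hε, by omega, Or.inl rfl, ?_, ?_, ?_⟩ <;> intro v hv <;>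
            exact absurd hv (Finset.notMem_empty v)
        refine ⟨chainF ε (m + 1), ?_, ?_⟩
        · refine ⟨⟨ov ε i₀, mem_chainF.2 ⟨i₀, by rw [hi₀v]; omega, rfl⟩⟩,
            Or.inr ⟨ε, m + 1, ∅, hval, ?_⟩⟩
          rw [Finset.union_empty]
        · rw [hz_eq']
          refine Convex.sum_mem (convex_convexHull ℝ _) (fun i _ => hαnn i) hsum1 ?_
          intro i _
          refine subset_convexHull ℝ _ ?_
          simp only [hp]
          by_cases h1 : (i : ℕ) < m + 1
          · rw [if_pos h1]
            exact Finset.mem_coe.2 (mem_chainF.2 ⟨i, h1, rfl⟩)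
          · rw [if_neg h1]
            exact Finset.mem_coe.2 (mem_chainF.2 ⟨i₀, by rw [hi₀v]; omega, rfl⟩)
      · -- collar face with an inner part
        set b : ℝ := t + S₂ with hbdef
        have habs_u : ∀ j, |u j| = if (j : ℕ) < m then 0 else if j = i₀ then t else |z j| := by
          intro j
          simp only [hu]
          by_cases h1 : (j : ℕ) < m
          · rw [if_pos h1, if_pos h1, abs_zero]
          · by_cases h2 : j = i₀
            · rw [if_neg h1, if_neg h1, if_pos h2, if_pos h2, abs_mul, hε.abs,
                mul_one, abs_of_nonneg ht0]
            · rw [if_neg h1, if_neg h1, if_neg h2, if_neg h2]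
        have hnu : nrm u = b := by
          rw [nrm]
          have hsplit : ∀ j : Fin n, |u j|
              = (if j = i₀ then t else 0)
                + (if ¬ (j : ℕ) < m + 1 then |z j| else 0) := by
            intro j
            rw [habs_u j]
            by_cases h1 : (j : ℕ) < m
            · rw [if_pos h1, if_neg (fun h => by rw [h, hi₀v] at h1; omega),
                if_neg (by omega), add_zero]
            · by_cases h2 : j = i₀
              · have : (j : ℕ) = m := by rw [h2, hi₀v]
                rw [if_neg h1, if_pos h2, if_pos h2, if_neg (by omega), add_zero]
              · have hjm : ¬ (j : ℕ) < m + 1 := by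
                  have : (j : ℕ) ≠ m := fun h => h2 (Fin.ext (by rw [hi₀v]; exact h))
                  omega
                rw [if_neg h1, if_neg h2, if_neg h2, if_pos hjm, zero_add]
          rw [Finset.sum_congr rfl fun j _ => hsplit j, Finset.sum_add_distrib,
            Finset.sum_ite_eq' Finset.univ i₀ (fun _ => t), if_pos (Finset.mem_univ i₀),
            ← Finset.sum_filter, ← hS₂, hbdef]
        set y : Fin n → ℝ := b⁻¹ • u with hy
        have hbinv : b⁻¹ * b = 1 := inv_mul_cancel₀ (ne_of_gt hbpos)
        have hny : nrm y = 1 := by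
          rw [hy, nrm_smul, hnu, abs_of_nonneg (inv_nonneg.2 (le_of_lt hbpos)), hbinv]
        have husign : ∀ i, 0 ≤ ε i * u i := by
          intro i
          simp only [hu]
          by_cases h1 : (i : ℕ) < m
          · rw [if_pos h1, mul_zero]
          · by_cases h2 : i = i₀
            · rw [if_neg h1, if_pos h2, h2]
              have : ε i₀ * (t * ε i₀) = t * (ε i₀ * ε i₀) := by ring
              rw [this, hε.mul_self, mul_one]
              exact ht0
            · rw [if_neg h1, if_neg h2, hεz i]
              exact abs_nonneg _
        have hysign : ∀ i, 0 ≤ ε i * y i := by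
          intro i
          rw [hy, Pi.smul_apply, smul_eq_mul]
          have : ε i * (b⁻¹ * u i) = b⁻¹ * (ε i * u i) := by ring
          rw [this]
          exact mul_nonneg (inv_nonneg.2 (le_of_lt hbpos)) (husign i)
        have hysupp : ∀ i : Fin n, (i : ℕ) + 1 < m + 1 → y i = 0 := by
          intro i hi
          rw [hy, Pi.smul_apply, smul_eq_mul]
          simp only [hu]
          rw [if_pos (by omega), mul_zero]
        have hyocta : y ∈ K.space := by
          rw [hspace]
          exact le_of_eq hny
        obtain ⟨τ₀, hτ₀, hyτ₀⟩ := Geometry.SimplicialComplex.mem_space_iff.1 hyocta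
        rw [Finset.mem_convexHull'] at hyτ₀
        obtain ⟨ω, hω0, hω1, hωy⟩ := hyτ₀
        have absorb := face_absorb hspace hε (m + 1) hτ₀ hω0 hω1 hωy hny hysign hysupp
        set τ := τ₀.filter (fun v => 0 < ω v) with hτ
        have hτ0 : ∃ v ∈ τ₀, 0 < ω v := by
          by_contra hcon
          push_neg at hcon
          have : ∑ v ∈ τ₀, ω v ≤ 0 := Finset.sum_nonpos fun v hv => hcon v hv
          linarith
        have hτne : τ.Nonempty := by
          obtain ⟨v, hv1, hv2⟩ := hτ0
          exact ⟨v, Finset.mem_filter.2 ⟨hv1, hv2⟩⟩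
        have hτface : τ ∈ K.faces :=
          K.down_closed hτ₀ (Finset.filter_subset _ _) hτne
        have hτsum : ∑ v ∈ τ, ω v = 1 := by
          rw [hτ, Finset.sum_filter_of_ne (fun v hv hne =>
            lt_of_le_of_ne (hω0 v hv) (Ne.symm hne))]
          exact hω1
        have hτy : ∑ v ∈ τ, ω v • v = y := by
          rw [hτ, Finset.sum_filter_of_ne (fun v hv hne => ?_)]
          · exact hωy
          · rcases eq_or_lt_of_le (hω0 v hv) with h | h
            · exact absurd (by rw [← h, zero_smul]) hne
            · exact h
        have hvalτ : Valid K ε (m + 1) τ := by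
          refine ⟨hε, by omega, Or.inr hτface, ?_, ?_, ?_⟩
          · intro v hv
            exact (absorb v (Finset.mem_filter.1 hv).1 (Finset.mem_filter.1 hv).2).1
          · intro v hv
            exact (absorb v (Finset.mem_filter.1 hv).1 (Finset.mem_filter.1 hv).2).2.1
          · intro v hv
            exact (absorb v (Finset.mem_filter.1 hv).1 (Finset.mem_filter.1 hv).2).2.2
        set sface := chainF ε (m + 1) ∪ τ with hsface
        have hyhull : y ∈ convexHull ℝ (sface : Set (Fin n → ℝ)) := by
          refine convexHull_mono (Finset.coe_subset.2 Finset.subset_union_right) ?_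
          rw [Finset.mem_convexHull']
          exact ⟨ω, fun v hv => hω0 v (Finset.filter_subset _ _ hv), hτsum, hτy⟩
        refine ⟨sface, ⟨⟨ov ε i₀, Finset.mem_union_left _
          (mem_chainF.2 ⟨i₀, by rw [hi₀v]; omega, rfl⟩)⟩,
          Or.inr ⟨ε, m + 1, τ, hvalτ, le_refl _⟩⟩, ?_⟩
        set P : Option (Fin n) → (Fin n → ℝ) :=
          fun o => o.elim y (fun i => if (i : ℕ) < m + 1 then ov ε i else y) with hP
        set W : Option (Fin n) → ℝ := fun o => o.elim b α with hW
        have hzsum : z = ∑ o : Option (Fin n), W o • P o := by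
          have h1 : W none • P none = u := by
            simp only [hW, hP, Option.elim]
            rw [hy, smul_smul, mul_inv_cancel₀ (ne_of_gt hbpos), one_smul]
          refine hzdecomp.trans ?_
          rw [Fintype.sum_option, h1, add_comm]
          congr 1
          refine Finset.sum_congr rfl fun i _ => ?_
          simp only [hW, hP, Option.elim]
          by_cases h2 : (i : ℕ) < m + 1
          · rw [if_pos h2]
          · rw [if_neg h2, hαout i h2, zero_smul, zero_smul]
        rw [hzsum]
        refine Convex.sum_mem (convex_convexHull ℝ _) ?_ ?_ ?_
        · rintro (_ | i) _
          · exact le_of_lt hbpos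
          · exact hαnn i
        · rw [Fintype.sum_option]
          simp only [hW, Option.elim]
          rw [add_comm]
          exact htotal
        · rintro (_ | i) _
          · exact hyhull
          · simp only [hP, Option.elim]
            by_cases h2 : (i : ℕ) < m + 1
            · rw [if_pos h2]
              exact subset_convexHull ℝ _ (Finset.mem_coe.2
                (Finset.mem_union_left _ (mem_chainF.2 ⟨i, h2, rfl⟩)))
            · rw [if_neg h2]
              exact hyhull

end OctAux

namespace OctAux

variable {n : ℕ} {K : Geometry.SimplicialComplex ℝ (Fin n → ℝ)}

lemma nrm_zero : nrm (0 : Fin n → ℝ) = 0 := by simp [nrm]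

lemma nrm_pos {x : Fin n → ℝ} (hx : x ≠ 0) : 0 < nrm x :=
  lt_of_le_of_ne (nrm_nonneg x) (fun h => hx (nrm_eq_zero h.symm))

lemma collar_faces_finite (hfin : K.faces.Finite) : (goodFaces K).Finite := by
  classical
  have hsigns : {ε : Fin n → ℝ | IsSign ε}.Finite := by
    have himg : {ε : Fin n → ℝ | IsSign ε} ⊆
        (fun b : Fin n → Bool => (fun i => if b i then (1:ℝ) else -1)) '' Set.univ := by
      intro ε hε
      refine ⟨fun i => ε i = 1, Set.mem_univ _, ?_⟩
      funext i
      by_cases h : ε i = 1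
      · simp [h]
      · have h' := (hε i).resolve_left h
        simp [h, h']
        exact fun hcon => absurd hcon (by norm_num)
    exact Set.Finite.subset (Set.Finite.image _ Set.finite_univ) himg
  set Params : Set ((Fin n → ℝ) × ℕ × Finset (Fin n → ℝ)) :=
    {ε : Fin n → ℝ | IsSign ε} ×ˢ ((Set.Iic n) ×ˢ (K.faces ∪ {∅})) with hParams
  have hParamsFin : Params.Finite :=
    hsigns.prod ((Set.finite_Iic n).prod (hfin.union (Set.finite_singleton ∅)))
  set Templates : Set (Finset (Fin n → ℝ)) :=
    (fun p : ((Fin n → ℝ) × ℕ × Finset (Fin n → ℝ)) => chainF p.1 p.2.1 ∪ p.2.2) '' Params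
    with hTemplates
  have hTemplatesFin : Templates.Finite := hParamsFin.image _
  have hsub : goodFaces K ⊆ K.faces ∪ ⋃ T ∈ Templates, {s : Finset (Fin n → ℝ) | s ⊆ T} := by
    rintro s ⟨hne, hs | ⟨ε, k, σ, hval, hsub⟩⟩
    · exact Set.mem_union_left _ hs
    · refine Set.mem_union_right _ ?_
      have hσmem : σ ∈ K.faces ∪ {∅} := by
        rcases hval.faceK with h | h
        · exact Set.mem_union_right _ (by simp [h])
        · exact Set.mem_union_left _ h
      have hT : (chainF ε k ∪ σ) ∈ Templates :=
        ⟨(ε, k, σ), ⟨hval.sign, hval.kn, hσmem⟩, rfl⟩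
      exact Set.mem_biUnion hT hsub
  refine Set.Finite.subset ?_ hsub
  refine hfin.union (Set.Finite.biUnion hTemplatesFin ?_)
  intro T _
  have : {s : Finset (Fin n → ℝ) | s ⊆ T} = ↑T.powerset := by
    ext s
    simp [Finset.mem_powerset]
  rw [this]
  exact T.powerset.finite_toSet

section Homeo

variable (n)

noncomputable def Lequiv : EuclideanSpace ℝ (Fin n) ≃L[ℝ] (Fin n → ℝ) :=
  PiLp.continuousLinearEquiv 2 ℝ (fun _ : Fin n => ℝ)

noncomputable def fwdAux : (Fin n → ℝ) → EuclideanSpace ℝ (Fin n) :=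
  fun x => (nrm x / (2 * ‖(Lequiv n).symm x‖)) • (Lequiv n).symm x

noncomputable def bwdAux : EuclideanSpace ℝ (Fin n) → (Fin n → ℝ) :=
  fun y => (2 * ‖y‖ / nrm ((Lequiv n) y)) • (Lequiv n) y

variable {n}

lemma Lsymm_eq_zero {x : Fin n → ℝ} : (Lequiv n).symm x = 0 ↔ x = 0 := by
  constructor
  · intro h
    have := congrArg (Lequiv n) h
    rwa [ContinuousLinearEquiv.apply_symm_apply, map_zero] at this
  · rintro rfl
    exact map_zero _

lemma L_eq_zero {y : EuclideanSpace ℝ (Fin n)} : (Lequiv n) y = 0 ↔ y = 0 := by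
  constructor
  · intro h
    have := congrArg (Lequiv n).symm h
    rwa [ContinuousLinearEquiv.symm_apply_apply, map_zero] at this
  · rintro rfl
    exact map_zero _


lemma norm_fwdAux (x : Fin n → ℝ) : ‖fwdAux n x‖ = nrm x / 2 := by
  by_cases hx : x = 0
  · subst hx
    rw [fwdAux]
    have h0 : (Lequiv n).symm (0 : Fin n → ℝ) = 0 := map_zero _
    rw [h0, smul_zero, norm_zero, nrm_zero]
    norm_num
  · have hL : (Lequiv n).symm x ≠ 0 := fun h => hx (Lsymm_eq_zero.1 h)
    have hLn : ‖(Lequiv n).symm x‖ ≠ 0 := norm_ne_zero_iff.2 hL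
    have hpos : (0:ℝ) < ‖(Lequiv n).symm x‖ := norm_pos_iff.2 hL
    rw [fwdAux, norm_smul, Real.norm_eq_abs,
      abs_of_nonneg (div_nonneg (nrm_nonneg x) (by positivity))]
    field_simp

lemma continuous_fwdAux : Continuous (fwdAux n) := by
  rw [continuous_iff_continuousAt]
  intro x₀
  by_cases hx : x₀ = 0
  · subst hx
    rw [ContinuousAt]
    have hval : fwdAux n 0 = 0 := by
      rw [fwdAux]
      rw [map_zero, smul_zero]
    rw [hval]
    have hb : Filter.Tendsto (fun x : Fin n → ℝ => nrm x / 2) (nhds 0) (nhds 0) := by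
      have := (continuous_nrm.div_const 2).tendsto (0 : Fin n → ℝ)
      rwa [nrm_zero, zero_div] at this
    exact squeeze_zero_norm (fun x => le_of_eq (norm_fwdAux x)) hb
  · have hL : (Lequiv n).symm x₀ ≠ 0 := fun h => hx (Lsymm_eq_zero.1 h)
    have hden : (2 : ℝ) * ‖(Lequiv n).symm x₀‖ ≠ 0 := by
      have := norm_ne_zero_iff.2 hL
      positivity
    show ContinuousAt (fun x => (nrm x / (2 * ‖(Lequiv n).symm x‖)) • (Lequiv n).symm x) x₀
    refine ContinuousAt.fun_smul ?_ ((Lequiv n).symm.continuous.continuousAt)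
    exact (continuous_nrm.continuousAt).div
      ((continuous_const.mul ((Lequiv n).symm.continuous.norm)).continuousAt) hden

lemma nrm_bwdAux (y : EuclideanSpace ℝ (Fin n)) : nrm (bwdAux n y) = 2 * ‖y‖ := by
  by_cases hy : y = 0
  · subst hy
    rw [bwdAux, map_zero, smul_zero, nrm_zero, norm_zero]
    ring
  · have hLy : (Lequiv n) y ≠ 0 := fun h => hy (L_eq_zero.1 h)
    have hn : nrm ((Lequiv n) y) ≠ 0 := ne_of_gt (nrm_pos hLy)
    have hnpos : (0:ℝ) < nrm ((Lequiv n) y) := nrm_pos hLy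
    rw [bwdAux, nrm_smul, abs_of_nonneg (div_nonneg (by positivity) (nrm_nonneg _))]
    field_simp

lemma bwd_fwd (x : Fin n → ℝ) : bwdAux n (fwdAux n x) = x := by
  by_cases hx : x = 0
  · subst hx
    rw [fwdAux, map_zero, smul_zero, bwdAux, map_zero, smul_zero]
  · have hL : (Lequiv n).symm x ≠ 0 := fun h => hx (Lsymm_eq_zero.1 h)
    have hLn : (0:ℝ) < ‖(Lequiv n).symm x‖ := norm_pos_iff.2 hL
    have hnx : (0:ℝ) < nrm x := nrm_pos hx
    set c : ℝ := nrm x / (2 * ‖(Lequiv n).symm x‖) with hc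
    have hcpos : 0 < c := by rw [hc]; positivity
    have h1 : fwdAux n x = c • (Lequiv n).symm x := rfl
    have h2 : (Lequiv n) (fwdAux n x) = c • x := by
      rw [h1, map_smul, ContinuousLinearEquiv.apply_symm_apply]
    rw [bwdAux, h2, norm_fwdAux, nrm_smul, abs_of_nonneg (le_of_lt hcpos), smul_smul]
    have : 2 * (nrm x / 2) / (c * nrm x) * c = 1 := by
      field_simp
    rw [this, one_smul]

lemma fwd_bwd (y : EuclideanSpace ℝ (Fin n)) : fwdAux n (bwdAux n y) = y := by
  by_cases hy : y = 0
  · subst hy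
    rw [bwdAux, map_zero, smul_zero, fwdAux, map_zero, smul_zero]
  · have hLy : (Lequiv n) y ≠ 0 := fun h => hy (L_eq_zero.1 h)
    have hny : (0:ℝ) < ‖y‖ := norm_pos_iff.2 hy
    have hnLy : (0:ℝ) < nrm ((Lequiv n) y) := nrm_pos hLy
    set c : ℝ := 2 * ‖y‖ / nrm ((Lequiv n) y) with hc
    have hcpos : 0 < c := by rw [hc]; positivity
    have h1 : bwdAux n y = c • (Lequiv n) y := rfl
    have h2 : (Lequiv n).symm (bwdAux n y) = c • y := by
      rw [h1, map_smul, ContinuousLinearEquiv.symm_apply_apply]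
    have h3 : nrm (bwdAux n y) = 2 * ‖y‖ := nrm_bwdAux y
    rw [fwdAux, h2, h3, norm_smul, Real.norm_eq_abs, abs_of_nonneg (le_of_lt hcpos), smul_smul]
    have : 2 * ‖y‖ / (2 * (c * ‖y‖)) * c = 1 := by
      field_simp
    rw [this, one_smul]

lemma isCompact_Xball : IsCompact {x : Fin n → ℝ | nrm x ≤ 2} := by
  have hclosed : IsClosed {x : Fin n → ℝ | nrm x ≤ 2} :=
    IsClosed.preimage continuous_nrm isClosed_Iic
  have hsub : {x : Fin n → ℝ | nrm x ≤ 2} ⊆ Metric.closedBall (0 : Fin n → ℝ) 2 := by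
    intro x hx
    rw [Metric.mem_closedBall, dist_zero_right]
    rw [pi_norm_le_iff_of_nonneg (by norm_num : (0:ℝ) ≤ 2)]
    intro i
    rw [Real.norm_eq_abs]
    exact le_trans (abs_le_nrm x i) hx
  exact IsCompact.of_isClosed_subset (isCompact_closedBall _ _) hclosed hsub

noncomputable def theHomeo (n : ℕ) :
    ↥{x : Fin n → ℝ | nrm x ≤ 2} ≃ₜ ↥(Metric.closedBall (0 : EuclideanSpace ℝ (Fin n)) 1) := by
  have hcs : CompactSpace ↥{x : Fin n → ℝ | nrm x ≤ 2} :=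
    isCompact_iff_compactSpace.1 isCompact_Xball
  refine @Continuous.homeoOfEquivCompactToT2 _ _ _ _ hcs _
    ⟨fun x => ⟨fwdAux n x.1, ?_⟩, fun y => ⟨bwdAux n y.1, ?_⟩, ?_, ?_⟩ ?_
  · rw [Metric.mem_closedBall, dist_zero_right, norm_fwdAux]
    have := x.2
    simp only [Set.mem_setOf_eq] at this
    linarith
  · simp only [Set.mem_setOf_eq]
    rw [nrm_bwdAux]
    have := y.2
    rw [Metric.mem_closedBall, dist_zero_right] at this
    linarith
  · intro x
    exact Subtype.ext (bwd_fwd x.1)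
  · intro y
    exact Subtype.ext (fwd_bwd y.1)
  · exact Continuous.subtype_mk (continuous_fwdAux.comp continuous_subtype_val) _

end Homeo

lemma frontier_Xball :
    frontier {x : Fin n → ℝ | nrm x ≤ 2} ⊆ {x : Fin n → ℝ | nrm x = 2} := by
  intro x hx
  have hclosed : IsClosed {x : Fin n → ℝ | nrm x ≤ 2} :=
    IsClosed.preimage continuous_nrm isClosed_Iic
  have h1 : x ∈ {x : Fin n → ℝ | nrm x ≤ 2} := by
    have := frontier_subset_closure hx
    rwa [hclosed.closure_eq] at this
  have hop : {x : Fin n → ℝ | nrm x < 2} ⊆ interior {x : Fin n → ℝ | nrm x ≤ 2} :=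
    interior_maximal (fun y (hy : nrm y < 2) => le_of_lt hy)
      (IsOpen.preimage continuous_nrm isOpen_Iio)
  have h2 : x ∉ interior {x : Fin n → ℝ | nrm x ≤ 2} := hx.2
  have h3 : ¬ nrm x < 2 := fun h => h2 (hop h)
  simp only [Set.mem_setOf_eq] at *
  linarith [h1, not_lt.1 h3]

end OctAux

namespace OctAux

variable {n : ℕ} {K : Geometry.SimplicialComplex ℝ (Fin n → ℝ)}

lemma nrm_def (x : Fin n → ℝ) : nrm x = ∑ i, |x i| := rfl

lemma single_neg (i : Fin n) (c : ℝ) : (-(Pi.single i c) : Fin n → ℝ) = Pi.single i (-c) := by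
  funext j
  rw [Pi.neg_apply, Pi.single_apply, Pi.single_apply]
  split_ifs <;> simp

lemma neg_ov (ε : Fin n → ℝ) (i : Fin n) : -ov ε i = ov (-ε) i := by
  rw [ov, ov, single_neg]
  congr 1
  rw [Pi.neg_apply]
  ring

lemma smul_ov (ε : Fin n → ℝ) (i : Fin n) : (2⁻¹ : ℝ) • ov ε i = Pi.single i (ε i) := by
  funext j
  rw [Pi.smul_apply, smul_eq_mul, ov_apply, Pi.single_apply]
  split_ifs <;> [skip; simp]
  ring

lemma mem_extOcta_single {ε : Fin n → ℝ} (hε : IsSign ε) (i : Fin n) :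
    Pi.single i (ε i) ∈ extOcta n := by
  refine ⟨i, ?_⟩
  rcases hε i with h | h
  · left; rw [h]
  · right; rw [h, ← single_neg]

end OctAux


open OctAux

/-- Tucker's lemma implies the Octahedral Sperner lemma with
Octahedral Labels. -/
theorem tucker_implies_octahedral_sperner :
    TuckerStatement → OctahedralSpernerStatement := by
  intro tucker
  intro n hn K hfin hspace lab hlab hbdry
  classical
  set K' := collar K hspace with hK'
  have hsp : K'.space = {x : Fin n → ℝ | nrm x ≤ 2} := collar_space hspace
  set lab' : (Fin n → ℝ) → (Fin n → ℝ) :=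
    fun z => if nrm z ≤ 1 then lab z else (2⁻¹ : ℝ) • z with hlabdef
  -- value of lab' on chain vertices
  have hlab_chain : ∀ (ε : Fin n → ℝ), IsSign ε → ∀ i : Fin n,
      lab' (ov ε i) = Pi.single i (ε i) := by
    intro ε hε i
    have h2 : ¬ nrm (ov ε i) ≤ 1 := by rw [nrm_ov hε]; norm_num
    rw [hlabdef]
    simp only [h2, if_neg, if_false]
    exact smul_ov ε i
  have hlab_inner : ∀ v : Fin n → ℝ, nrm v ≤ 1 → lab' v = lab v := by
    intro v hv
    rw [hlabdef]
    simp only [hv, if_pos, if_true]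
  -- frontier is the outer sphere
  have hfrontier : ∀ v : Fin n → ℝ, v ∈ frontier K'.space → nrm v = 2 := by
    intro v hv
    rw [hsp] at hv
    exact frontier_Xball hv
  -- σ₀-vertices are vertices of K
  have hσvert : ∀ {ε k} {σ₀ : Finset (Fin n → ℝ)}, Valid K ε k σ₀ →
      ∀ v ∈ σ₀, v ∈ K.vertices := by
    intro ε k σ₀ hval v hv
    have hσ₀ : σ₀ ∈ K.faces := by
      rcases hval.faceK with h | h
      · rw [h] at hv; exact absurd hv (Finset.notMem_empty v)
      · exact h
    exact K.down_closed hσ₀ (Finset.singleton_subset_iff.2 hv) (by simp)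
  -- the Sperner condition kills mixed complementary edges
  have hcontra : ∀ {ε k} {σ₀ : Finset (Fin n → ℝ)}, Valid K ε k σ₀ →
      ∀ v ∈ σ₀, ∀ i : Fin n, lab v = -Pi.single i (ε i) → False := by
    intro ε k σ₀ hval v hv i hlabv
    have hvtx : v ∈ K.vertices := hσvert hval v hv
    have hnv : (∑ j, |v j|) = 1 := by rw [← nrm_def]; exact hval.nrm1 v hv
    have hsgn := hval.signv v hv i
    rcases hval.sign i with h | h
    · have hvi : 0 ≤ v i := by rw [h, one_mul] at hsgn; exact hsgn
      refine (hbdry v hvtx hnv i).1 hvi ?_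
      rw [hlabv, h]
    · have hvi : v i ≤ 0 := by
        rw [h] at hsgn
        nlinarith [hsgn]
      refine (hbdry v hvtx hnv i).2 hvi ?_
      rw [hlabv, h, single_neg, neg_neg]
  -- Tucker hypotheses
  have hfin' : K'.faces.Finite := collar_faces_finite hfin
  have hhomeo : Nonempty
      (↥K'.space ≃ₜ ↥(Metric.closedBall (0 : EuclideanSpace ℝ (Fin n)) 1)) :=
    ⟨(Homeomorph.setCongr hsp).trans (theHomeo n)⟩
  have hsymm : ∀ σ ∈ K'.faces, (σ : Set (Fin n → ℝ)) ⊆ frontier K'.space →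
      σ.image (fun v => -v) ∈ K'.faces := by
    intro σ hσ hsubfr
    have hfr2 : ∀ v ∈ σ, nrm v = 2 := fun v hv =>
      hfrontier v (hsubfr (Finset.mem_coe.2 hv))
    obtain ⟨hne, hcase⟩ := (hσ : σ ∈ goodFaces K)
    rcases hcase with hKf | ⟨ε, k, σ₀, hval, hsub⟩
    · exfalso
      obtain ⟨v, hv⟩ := hne
      have h1 := face_nrm_le hspace hKf hv
      have h2 := hfr2 v hv
      linarith
    · have hsubchain : σ ⊆ chainF ε k := by
        intro v hv
        rcases Finset.mem_union.1 (hsub hv) with h | h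
        · exact h
        · exfalso
          have h1 := hval.nrm1 v h
          have h2 := hfr2 v hv
          linarith
      have hvalneg : Valid K (-ε) k ∅ := by
        refine ⟨hval.sign.neg, hval.kn, Or.inl rfl, ?_, ?_, ?_⟩ <;> intro v hv <;>
          exact absurd hv (Finset.notMem_empty v)
      refine ⟨hne.image _, Or.inr ⟨-ε, k, ∅, hvalneg, ?_⟩⟩
      rw [Finset.union_empty]
      intro x hx
      obtain ⟨v, hvσ, rfl⟩ := Finset.mem_image.1 hx
      obtain ⟨i, hik, rfl⟩ := mem_chainF.1 (hsubchain hvσ)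
      exact mem_chainF.2 ⟨i, hik, (neg_ov ε i).symm ▸ rfl⟩
  have hlab'ext : ∀ v ∈ K'.vertices, lab' v ∈ extOcta n := by
    intro v hv
    have hv' : {v} ∈ K'.faces := hv
    obtain ⟨_, hcase⟩ := (hv' : {v} ∈ goodFaces K)
    rcases hcase with hKf | ⟨ε, k, σ₀, hval, hsub⟩
    · have h1 : nrm v ≤ 1 := face_nrm_le hspace hKf (Finset.mem_singleton_self v)
      rw [hlab_inner v h1]
      exact hlab v hKf
    · rcases Finset.mem_union.1 (hsub (Finset.mem_singleton_self v)) with h | h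
      · obtain ⟨i, _, rfl⟩ := mem_chainF.1 h
        rw [hlab_chain ε hval.sign i]
        exact mem_extOcta_single hval.sign i
      · have h1 : nrm v ≤ 1 := le_of_eq (hval.nrm1 v h)
        rw [hlab_inner v h1]
        exact hlab v (hσvert hval v h)
  have hlab'anti : ∀ v ∈ K'.vertices, v ∈ frontier K'.space → lab' (-v) = -lab' v := by
    intro v _ hfr
    have h2 : nrm v = 2 := hfrontier v hfr
    have h2' : nrm (-v) = 2 := by rw [nrm_neg, h2]
    have hnot : ¬ nrm v ≤ 1 := by rw [h2]; norm_num
    have hnot' : ¬ nrm (-v) ≤ 1 := by rw [h2']; norm_num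
    rw [hlabdef]
    simp only [hnot, hnot', if_neg, if_false]
    rw [smul_neg]
  have key := tucker n hn K' hfin' hhomeo hsymm lab' hlab'ext hlab'anti
  obtain ⟨σ', hσ', v₁, hv₁, v₂, hv₂, heq⟩ := key
  obtain ⟨hne, hcase⟩ := (hσ' : σ' ∈ goodFaces K)
  rcases hcase with hKf | ⟨ε, k, σ₀, hval, hsub⟩
  · refine ⟨σ', hKf, v₁, hv₁, v₂, hv₂, ?_⟩
    rw [← hlab_inner v₁ (face_nrm_le hspace hKf hv₁),
      ← hlab_inner v₂ (face_nrm_le hspace hKf hv₂)]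
    exact heq
  · have hσ₀faces : σ₀.Nonempty → σ₀ ∈ K.faces := by
      intro hσne
      rcases hval.faceK with h | h
      · rw [h] at hσne; exact absurd hσne (by simp)
      · exact h
    rcases Finset.mem_union.1 (hsub hv₁) with h₁ | h₁ <;>
      rcases Finset.mem_union.1 (hsub hv₂) with h₂ | h₂
    · -- both on the chain : impossible
      exfalso
      obtain ⟨i, _, rfl⟩ := mem_chainF.1 h₁
      obtain ⟨j, _, rfl⟩ := mem_chainF.1 h₂
      rw [hlab_chain ε hval.sign i, hlab_chain ε hval.sign j] at heq
      have := congrFun heq i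
      rw [Pi.single_apply, if_pos rfl, Pi.neg_apply, Pi.single_apply] at this
      by_cases hij : i = j
      · subst hij
        rw [if_pos rfl] at this
        rcases hval.sign i with h | h <;> rw [h] at this <;> norm_num at this
      · rw [if_neg (fun hh => hij hh)] at this
        rw [neg_zero] at this
        exact hval.sign.ne_zero i this
    · -- v₁ on chain, v₂ inner : Sperner condition contradiction
      exfalso
      obtain ⟨i, _, rfl⟩ := mem_chainF.1 h₁
      rw [hlab_chain ε hval.sign i, hlab_inner v₂ (le_of_eq (hval.nrm1 v₂ h₂))] at heq
      refine hcontra hval v₂ h₂ i ?_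
      rw [heq, neg_neg]
    · -- v₁ inner, v₂ on chain : Sperner condition contradiction
      exfalso
      obtain ⟨j, _, rfl⟩ := mem_chainF.1 h₂
      rw [hlab_chain ε hval.sign j, hlab_inner v₁ (le_of_eq (hval.nrm1 v₁ h₁))] at heq
      exact hcontra hval v₁ h₁ j heq
    · -- both inner : complementary edge of K
      have hσne : σ₀.Nonempty := ⟨v₁, h₁⟩
      refine ⟨σ₀, hσ₀faces hσne, v₁, h₁, v₂, h₂, ?_⟩
      rw [← hlab_inner v₁ (le_of_eq (hval.nrm1 v₁ h₁)),
        ← hlab_inner v₂ (le_of_eq (hval.nrm1 v₂ h₂))]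
      exact heq
end

section
/- The Cubical Sperner lemma with Octahedral Labels implies the Octahedral Sperner lemma with Octahedral Labels. Precisely: suppose that for every n ≥ 1, every triangulation T of □^n, and every label function λ : V(T) → ext(◇^n) such that every vertex x ∈ V(T) with x_i ∈ {−1,1} satisfies λ(x) ≠ −x_i·e_i, the triangulation T contains a complementary edge. Then for every n ≥ 1, every triangulation T of ◇^n, and every label function λ : V(T) → ext(◇^n) such that every boundary vertex x ∈ V(T) with |x_1|+…+|x_n| = 1 satisfies, for all 1 ≤ i ≤ n, that x_i ≥ 0 implies λ(x) ≠ −e_i and x_i ≤ 0 implies λ(x) ≠ e_i, the triangulation T contains a complementary edge. -/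
open scoped Classical

/-- The `n`-dimensional cube `□ⁿ = [−1,1]ⁿ`: the unit ball of the `ℓ∞` norm in `ℝⁿ`. -/
def cube (n : ℕ) : Set (Fin n → ℝ) := {x | ∀ i, |x i| ≤ 1}

namespace CubOct

open Finset

variable {n : ℕ}

noncomputable def sgnv (x : Fin n → ℝ) : Fin n → ℝ :=
  fun i => if 0 < x i then 1 else if x i < 0 then -1 else 0

lemma sgnv_mul (x : Fin n → ℝ) (i : Fin n) : sgnv x i * x i = |x i| := by
  unfold sgnv; split_ifs with h1 h2
  · rw [one_mul, abs_of_pos h1]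
  · rw [neg_one_mul, abs_of_neg h2]
  · have : x i = 0 := le_antisymm (not_lt.1 h1) (not_lt.1 h2)
    simp [this]

lemma sgnv_eq_zero_iff (x : Fin n → ℝ) (i : Fin n) : sgnv x i = 0 ↔ x i = 0 := by
  unfold sgnv; split_ifs with h1 h2
  · constructor <;> intro h <;> [exact absurd h one_ne_zero; exact absurd h (by linarith)]
  · constructor <;> intro h
    · exact absurd h (by norm_num)
    · exact absurd h (by linarith [h2])
  · have : x i = 0 := le_antisymm (not_lt.1 h1) (not_lt.1 h2)
    simp [this]

lemma sgnv_vals (x : Fin n → ℝ) (i : Fin n) : sgnv x i = -1 ∨ sgnv x i = 0 ∨ sgnv x i = 1 := by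
  unfold sgnv; split_ifs <;> simp

lemma sgnv_abs (x : Fin n → ℝ) (i : Fin n) : |sgnv x i| = if x i = 0 then 0 else 1 := by
  by_cases h : x i = 0
  · rw [if_pos h, abs_eq_zero, sgnv_eq_zero_iff]; exact h
  · rw [if_neg h]
    rcases sgnv_vals x i with h'|h'|h' <;> rw [h']
    · norm_num
    · exact absurd ((sgnv_eq_zero_iff x i).1 h') h
    · norm_num

def Below (v q : Fin n → ℝ) : Prop := ∀ i, v i ≠ 0 → 0 < v i * q i

lemma below_self (v : Fin n → ℝ) : Below v v := fun i hi =>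
  mul_pos_iff.2 (by rcases lt_or_gt_of_ne hi with h|h
                    · exact Or.inr ⟨h, h⟩
                    · exact Or.inl ⟨h, h⟩)

lemma Below.zero (h : Below v q) {i : Fin n} (hi : q i = 0) : v i = 0 := by
  by_contra hv
  have := h i hv
  rw [hi, mul_zero] at this
  exact lt_irrefl _ this

lemma Below.nonneg_mul (h : Below v q) (i : Fin n) : 0 ≤ v i * q i := by
  by_cases hv : v i = 0
  · simp [hv]
  · exact (h i hv).le

lemma below_trans_sign {v s q : Fin n → ℝ} (h : Below v s)
    (hs : ∀ i, s i ≠ 0 → s i = q i) : Below v q := by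
  intro i hi
  have h1 := h i hi
  have hsi : s i ≠ 0 := by rintro h0; rw [h0, mul_zero] at h1; exact lt_irrefl _ h1
  rw [← hs i hsi]; exact h1

def IsSign (q : Fin n → ℝ) : Prop :=
  (∀ i, q i = -1 ∨ q i = 0 ∨ q i = 1) ∧ 2 ≤ ∑ i, |q i|

lemma IsSign.two_le {q : Fin n → ℝ} (h : IsSign q) : 2 ≤ ∑ i, |q i| := h.2

lemma sign_val_eq {a b : ℝ} (ha : a = -1 ∨ a = 0 ∨ a = 1) (hb : b = -1 ∨ b = 0 ∨ b = 1)
    (hab : 0 < a * b) : a = b := by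
  rcases ha with h|h|h <;> rcases hb with h'|h'|h' <;> subst h <;> subst h' <;> (norm_num at hab <;> norm_num)

lemma sign_mul_self {a : ℝ} (ha : a = -1 ∨ a = 0 ∨ a = 1) : a * a = |a| := by
  rcases ha with h|h|h <;> subst h <;> norm_num


structure Decomp (x : Fin n → ℝ) (w : ℝ) (D : Finset (Fin n → ℝ)) (c : (Fin n → ℝ) → ℝ)
    (y : Fin n → ℝ) : Prop where
  sign : ∀ q ∈ D, IsSign q
  chain : ∀ p ∈ D, ∀ q ∈ D, Below p q ∨ Below q p
  cpos : ∀ q ∈ D, 0 < c q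
  ybelow : ∀ q ∈ D, Below y q
  ysum : ∑ i, |y i| = w - ∑ q ∈ D, c q
  eq : x = y + ∑ q ∈ D, c q • q

lemma exists_top {D : Finset (Fin n → ℝ)} (hD : D.Nonempty)
    (hsign : ∀ q ∈ D, IsSign q) (hchain : ∀ p ∈ D, ∀ q ∈ D, Below p q ∨ Below q p) :
    ∃ qs ∈ D, ∀ p ∈ D, Below p qs := by
  obtain ⟨qs, hqs, hmax⟩ := D.exists_max_image (fun q => ∑ i, |q i|) hD
  refine ⟨qs, hqs, fun p hp => ?_⟩
  rcases hchain p hp qs hqs with h | h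
  · exact h
  · -- Below qs p with maximal sum: p = qs
    have hpt : ∀ i, |qs i| ≤ |p i| := by
      intro i
      by_cases h0 : qs i = 0
      · simp [h0]
      · have h1 := h i h0
        have hp0 : p i ≠ 0 := by
          rintro h2; rw [h2, mul_zero] at h1; exact lt_irrefl _ h1
        rcases (hsign qs hqs).1 i with hv|hv|hv <;> rcases (hsign p hp).1 i with hw|hw|hw <;>
          simp [hv, hw] at h0 hp0 ⊢
    have hs1 : ∑ i, |p i| ≤ ∑ i, |qs i| := hmax p hp
    have hs2 : ∑ i, |qs i| ≤ ∑ i, |p i| := Finset.sum_le_sum (fun i _ => hpt i)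
    have hsum : ∑ i, |qs i| = ∑ i, |p i| := le_antisymm hs2 hs1
    have heq : ∀ i ∈ Finset.univ, |qs i| = |p i| :=
      (Finset.sum_eq_sum_iff_of_le (fun i _ => hpt i)).1 hsum
    have : p = qs := by
      funext i
      by_cases h0 : qs i = 0
      · have := heq i (Finset.mem_univ i)
        rw [h0, abs_zero] at this
        rw [h0, ← abs_eq_zero]; exact this.symm
      · have h1 := h i h0
        exact sign_val_eq ((hsign p hp).1 i) ((hsign qs hqs).1 i) (by nlinarith)
    rw [this]; exact below_self qs

lemma sum_smul_apply (D : Finset (Fin n → ℝ)) (c : (Fin n → ℝ) → ℝ) (i : Fin n) :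
    (∑ q ∈ D, c q • q) i = ∑ q ∈ D, c q * q i := by
  rw [Finset.sum_apply]; rfl

lemma Decomp.apply {x : Fin n → ℝ} {w : ℝ} {D : Finset (Fin n → ℝ)} {c : (Fin n → ℝ) → ℝ}
    {y : Fin n → ℝ} (hd : Decomp x w D c y) (i : Fin n) :
    x i = y i + ∑ q ∈ D, c q * q i := by
  conv_lhs => rw [hd.eq]
  rw [Pi.add_apply, sum_smul_apply]

lemma Decomp.top_pos {x : Fin n → ℝ} {w : ℝ} {D : Finset (Fin n → ℝ)} {c : (Fin n → ℝ) → ℝ}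
    {y : Fin n → ℝ} (hd : Decomp x w D c y) {qs : Fin n → ℝ} (hqs : qs ∈ D)
    (htop : ∀ p ∈ D, Below p qs) {i : Fin n} (h0 : qs i ≠ 0) : 0 < x i * qs i := by
  have hx := hd.apply i
  have hterm : ∀ q ∈ D, 0 ≤ c q * q i * qs i := by
    intro q hq
    have := (htop q hq).nonneg_mul i
    have := (hd.cpos q hq).le
    nlinarith
  have hqq : 0 < c qs * qs i * qs i := by
    have := hd.cpos qs hqs
    have h2 : 0 < qs i * qs i := mul_pos_iff.2 (by
      rcases lt_or_gt_of_ne h0 with h|h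
      · exact Or.inr ⟨h, h⟩
      · exact Or.inl ⟨h, h⟩)
    nlinarith
  have hsum : 0 < ∑ q ∈ D, c q * q i * qs i :=
    Finset.sum_pos' hterm ⟨qs, hqs, hqq⟩
  have hy : 0 ≤ y i * qs i := (hd.ybelow qs hqs).nonneg_mul i
  have : x i * qs i = y i * qs i + ∑ q ∈ D, c q * q i * qs i := by
    rw [hx, add_mul, Finset.sum_mul]
  linarith [this ▸ add_pos_of_nonneg_of_pos hy hsum]

lemma Decomp.top_zero {x : Fin n → ℝ} {w : ℝ} {D : Finset (Fin n → ℝ)} {c : (Fin n → ℝ) → ℝ}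
    {y : Fin n → ℝ} (hd : Decomp x w D c y) {qs : Fin n → ℝ} (hqs : qs ∈ D)
    (htop : ∀ p ∈ D, Below p qs) {i : Fin n} (h0 : qs i = 0) : x i = 0 := by
  rw [hd.apply i, (hd.ybelow qs hqs).zero h0]
  rw [zero_add]
  refine Finset.sum_eq_zero (fun q hq => ?_)
  rw [(htop q hq).zero h0, mul_zero]

lemma Decomp.top_eq_sgnv {x : Fin n → ℝ} {w : ℝ} {D : Finset (Fin n → ℝ)} {c : (Fin n → ℝ) → ℝ}
    {y : Fin n → ℝ} (hd : Decomp x w D c y) {qs : Fin n → ℝ} (hqs : qs ∈ D)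
    (htop : ∀ p ∈ D, Below p qs) : qs = sgnv x := by
  funext i
  by_cases h0 : qs i = 0
  · rw [h0, eq_comm, sgnv_eq_zero_iff]
    exact hd.top_zero hqs htop h0
  · have hpos := hd.top_pos hqs htop h0
    have hx0 : x i ≠ 0 := by rintro h; rw [h, zero_mul] at hpos; exact lt_irrefl _ hpos
    have h2 : 0 < sgnv x i * x i := by rw [sgnv_mul]; exact abs_pos.2 hx0
    refine sign_val_eq ((hd.sign qs hqs).1 i) (sgnv_vals x i) ?_
    nlinarith [mul_pos hpos h2, sq_nonneg (x i)]

lemma Decomp.abs_apply {x : Fin n → ℝ} {w : ℝ} {D : Finset (Fin n → ℝ)} {c : (Fin n → ℝ) → ℝ}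
    {y : Fin n → ℝ} (hd : Decomp x w D c y) (i : Fin n) :
    |x i| = |y i| + ∑ q ∈ D, c q * |q i| := by
  rcases D.eq_empty_or_nonempty with hD | hD
  · subst hD; simpa using congrArg abs (hd.apply i)
  · obtain ⟨qs, hqs, htop⟩ := exists_top hD hd.sign hd.chain
    by_cases h0 : qs i = 0
    · have hx : x i = 0 := hd.top_zero hqs htop h0
      have hy : y i = 0 := (hd.ybelow qs hqs).zero h0
      rw [hx, hy, abs_zero, zero_add]
      refine (Finset.sum_eq_zero (fun q hq => ?_)).symm
      rw [(htop q hq).zero h0, abs_zero, mul_zero]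
    · -- all contributions share the sign of qs i
      have hyal : 0 ≤ y i * qs i := (hd.ybelow qs hqs).nonneg_mul i
      have hqal : ∀ q ∈ D, 0 ≤ q i * qs i := fun q hq => (htop q hq).nonneg_mul i
      rcases lt_or_gt_of_ne h0 with hneg | hpos
      · -- qs i < 0 : all contributions ≤ 0
        have hy : y i ≤ 0 := by nlinarith
        have hqneg : ∀ q ∈ D, q i ≤ 0 := fun q hq => by nlinarith [hqal q hq]
        have hxle : x i ≤ 0 := by
          rw [hd.apply i]
          have : ∑ q ∈ D, c q * q i ≤ 0 :=
            Finset.sum_nonpos (fun q hq => mul_nonpos_iff.2 (Or.inl ⟨(hd.cpos q hq).le, hqneg q hq⟩))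
          linarith
        rw [abs_of_nonpos hxle, abs_of_nonpos hy, hd.apply i]
        rw [neg_add, ← Finset.sum_neg_distrib]
        congr 1
        refine Finset.sum_congr rfl (fun q hqD => ?_)
        rw [abs_of_nonpos (hqneg q hqD)]; ring
      · have hy : 0 ≤ y i := by nlinarith
        have hqpos : ∀ q ∈ D, 0 ≤ q i := fun q hq => by nlinarith [hqal q hq]
        have hxge : 0 ≤ x i := by
          rw [hd.apply i]
          have : 0 ≤ ∑ q ∈ D, c q * q i :=
            Finset.sum_nonneg (fun q hq => mul_nonneg (hd.cpos q hq).le (hqpos q hq))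
          linarith
        rw [abs_of_nonneg hxge, abs_of_nonneg hy, hd.apply i]
        congr 1
        refine Finset.sum_congr rfl (fun q hqD => ?_)
        rw [abs_of_nonneg (hqpos q hqD)]

lemma Decomp.sum_abs {x : Fin n → ℝ} {w : ℝ} {D : Finset (Fin n → ℝ)} {c : (Fin n → ℝ) → ℝ}
    {y : Fin n → ℝ} (hd : Decomp x w D c y) :
    ∑ i, |x i| = w + ∑ q ∈ D, c q * ((∑ i, |q i|) - 1) := by
  have : ∑ i, |x i| = ∑ i, (|y i| + ∑ q ∈ D, c q * |q i|) :=
    Finset.sum_congr rfl (fun i _ => hd.abs_apply i)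
  rw [this, Finset.sum_add_distrib, hd.ysum, Finset.sum_comm]
  have : ∀ q ∈ D, ∑ i, c q * |q i| = c q * ∑ i, |q i| := fun q _ => (Finset.mul_sum _ _ _).symm
  rw [Finset.sum_congr rfl this]
  have : ∑ q ∈ D, c q * ((∑ i, |q i|) - 1) = (∑ q ∈ D, c q * ∑ i, |q i|) - ∑ q ∈ D, c q := by
    rw [← Finset.sum_sub_distrib]
    exact Finset.sum_congr rfl (fun q _ => by ring)
  rw [this]; ring

lemma Decomp.empty_iff {x : Fin n → ℝ} {w : ℝ} {D : Finset (Fin n → ℝ)} {c : (Fin n → ℝ) → ℝ}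
    {y : Fin n → ℝ} (hd : Decomp x w D c y) : D = ∅ ↔ ∑ i, |x i| = w := by
  constructor
  · intro h; rw [hd.sum_abs, h]; simp
  · intro h
    by_contra hne
    have hpos : 0 < ∑ q ∈ D, c q * ((∑ i, |q i|) - 1) := by
      refine Finset.sum_pos (fun q hq => ?_) (Finset.nonempty_of_ne_empty hne)
      have := (hd.sign q hq).2
      have := hd.cpos q hq
      nlinarith
    rw [hd.sum_abs] at h
    linarith


lemma Decomp.peel {x : Fin n → ℝ} {w : ℝ} {D : Finset (Fin n → ℝ)} {c : (Fin n → ℝ) → ℝ}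
    {y : Fin n → ℝ} (hd : Decomp x w D c y) {qs : Fin n → ℝ} (hqs : qs ∈ D)
    {m : ℝ} (hm : 0 < m) (hmle : m ≤ c qs) :
    Decomp (x - m • qs) (w - m) (if m = c qs then D.erase qs else D)
      (fun p => if p = qs then c p - m else c p) y := by
  classical
  set c' : (Fin n → ℝ) → ℝ := fun p => if p = qs then c p - m else c p with hc'
  have hc'on : ∀ p, p ≠ qs → c' p = c p := fun p hp => by rw [hc']; simp [hp]
  have hc'qs : c' qs = c qs - m := by rw [hc']; simp
  set D' : Finset (Fin n → ℝ) := if m = c qs then D.erase qs else D with hD'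
  have hsub : D' ⊆ D := by
    rw [hD']; split_ifs
    · exact Finset.erase_subset _ _
    · exact Finset.Subset.refl D
  have herase : ∀ (f : (Fin n → ℝ) → ℝ), ∑ q ∈ D.erase qs, c' q • f q • q
      = ∑ q ∈ D.erase qs, c q • f q • q := by
    intro f
    refine Finset.sum_congr rfl (fun q hq => ?_)
    rw [hc'on q (Finset.ne_of_mem_erase hq)]
  have heraseS : ∑ q ∈ D.erase qs, c' q = ∑ q ∈ D.erase qs, c q :=
    Finset.sum_congr rfl (fun q hq => hc'on q (Finset.ne_of_mem_erase hq))
  have heraseV : ∑ q ∈ D.erase qs, c' q • q = ∑ q ∈ D.erase qs, c q • q :=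
    Finset.sum_congr rfl (fun q hq => by rw [hc'on q (Finset.ne_of_mem_erase hq)])
  have hcsum : ∑ q ∈ D', c' q = (∑ q ∈ D, c q) - m := by
    rw [hD']; split_ifs with hcase
    · rw [heraseS, ← Finset.add_sum_erase D c hqs, hcase]; ring
    · rw [← Finset.add_sum_erase D c' hqs, ← Finset.add_sum_erase D c hqs, heraseS, hc'qs]; ring
  have hvsum : ∑ q ∈ D', c' q • q = (∑ q ∈ D, c q • q) - m • qs := by
    rw [hD']; split_ifs with hcase
    · rw [heraseV, ← Finset.add_sum_erase D (fun q => c q • q) hqs, hcase]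
      abel
    · rw [← Finset.add_sum_erase D (fun q => c' q • q) hqs,
        ← Finset.add_sum_erase D (fun q => c q • q) hqs, heraseV, hc'qs, sub_smul]
      abel
  refine ⟨fun q hq => hd.sign q (hsub hq), fun p hp q hq => hd.chain p (hsub hp) q (hsub hq),
    ?_, fun q hq => hd.ybelow q (hsub hq), ?_, ?_⟩
  · intro p hp
    by_cases hpq : p = qs
    · subst hpq
      have hne : ¬ (m = c p) := by
        intro hmc
        rw [hD', if_pos hmc] at hp
        exact Finset.notMem_erase p D hp
      rw [hc'qs]
      have := lt_of_le_of_ne hmle hne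
      linarith
    · rw [hc'on p hpq]
      exact hd.cpos p (hsub hp)
  · rw [hcsum, hd.ysum]; ring
  · rw [hvsum]
    conv_lhs => rw [hd.eq]
    abel

lemma decomp_unique_aux : ∀ (N : ℕ) (x : Fin n → ℝ) (w : ℝ)
    (D₁ : Finset (Fin n → ℝ)) (c₁ : (Fin n → ℝ) → ℝ) (y₁ : Fin n → ℝ)
    (D₂ : Finset (Fin n → ℝ)) (c₂ : (Fin n → ℝ) → ℝ) (y₂ : Fin n → ℝ),
    D₁.card + D₂.card ≤ N → Decomp x w D₁ c₁ y₁ → Decomp x w D₂ c₂ y₂ →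
    D₁ = D₂ ∧ y₁ = y₂ ∧ ∀ q ∈ D₁, c₁ q = c₂ q := by
  intro N
  induction N with
  | zero =>
    intro x w D₁ c₁ y₁ D₂ c₂ y₂ hcard h1 h2
    have hD₁ : D₁ = ∅ := Finset.card_eq_zero.1 (by omega)
    have hD₂ : D₂ = ∅ := Finset.card_eq_zero.1 (by omega)
    subst hD₁; subst hD₂
    refine ⟨rfl, ?_, by simp⟩
    have e1 := h1.eq; have e2 := h2.eq
    simp only [Finset.sum_empty, add_zero] at e1 e2
    rw [← e1, ← e2]
  | succ N ih =>
    intro x w D₁ c₁ y₁ D₂ c₂ y₂ hcard h1 h2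
    by_cases hD₁ : D₁ = ∅
    · have hw : ∑ i, |x i| = w := h1.empty_iff.1 hD₁
      have hD₂ : D₂ = ∅ := h2.empty_iff.2 hw
      subst hD₁; subst hD₂
      refine ⟨rfl, ?_, by simp⟩
      have e1 := h1.eq; have e2 := h2.eq
      simp only [Finset.sum_empty, add_zero] at e1 e2
      rw [← e1, ← e2]
    · have hD₂ : D₂ ≠ ∅ := by
        intro h
        exact hD₁ (h1.empty_iff.2 (h2.empty_iff.1 h))
      obtain ⟨q₁, hq₁, htop₁⟩ := exists_top (Finset.nonempty_of_ne_empty hD₁) h1.sign h1.chain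
      obtain ⟨q₂, hq₂, htop₂⟩ := exists_top (Finset.nonempty_of_ne_empty hD₂) h2.sign h2.chain
      have hqeq : q₁ = q₂ := by
        rw [h1.top_eq_sgnv hq₁ htop₁, h2.top_eq_sgnv hq₂ htop₂]
      subst hqeq
      set q := q₁
      set m := min (c₁ q) (c₂ q) with hm
      have hm1 : m ≤ c₁ q := min_le_left _ _
      have hm2 : m ≤ c₂ q := min_le_right _ _
      have hmpos : 0 < m := lt_min (h1.cpos q hq₁) (h2.cpos q hq₂)
      have p1 := h1.peel hq₁ hmpos hm1
      have p2 := h2.peel hq₂ hmpos hm2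
      have hcard' : (if m = c₁ q then D₁.erase q else D₁).card
          + (if m = c₂ q then D₂.erase q else D₂).card ≤ N := by
        have l1 : (if m = c₁ q then D₁.erase q else D₁).card ≤ D₁.card := by
          split_ifs
          · exact Finset.card_le_card (Finset.erase_subset _ _)
          · exact le_rfl
        have l2 : (if m = c₂ q then D₂.erase q else D₂).card ≤ D₂.card := by
          split_ifs
          · exact Finset.card_le_card (Finset.erase_subset _ _)
          · exact le_rfl
        have hone : 1 ≤ D₁.card := Finset.card_pos.2 ⟨q, hq₁⟩
        have htwo : 1 ≤ D₂.card := Finset.card_pos.2 ⟨q, hq₂⟩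
        rcases (min_choice (c₁ q) (c₂ q) : m = c₁ q ∨ m = c₂ q) with h | h
        · rw [if_pos h, Finset.card_erase_of_mem hq₁]
          omega
        · rw [if_pos h, Finset.card_erase_of_mem hq₂]
          omega
      obtain ⟨hDD, hyy, hcc⟩ := ih _ _ _ _ _ _ _ _ hcard' p1 p2
      have hceq : c₁ q = c₂ q := by
        by_contra hne
        rcases lt_or_gt_of_ne hne with h | h
        · have e1 : m = c₁ q := min_eq_left h.le
          have e2 : ¬ (m = c₂ q) := by rw [e1]; exact ne_of_lt h
          rw [if_pos e1, if_neg e2] at hDD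
          have : q ∈ D₁.erase q := hDD ▸ hq₂
          exact Finset.notMem_erase q D₁ this
        · have e2 : m = c₂ q := min_eq_right h.le
          have e1 : ¬ (m = c₁ q) := by rw [e2]; exact ne_of_lt h
          rw [if_neg e1, if_pos e2] at hDD
          have : q ∈ D₂.erase q := hDD ▸ hq₁
          exact Finset.notMem_erase q D₂ this
      have e1 : m = c₁ q := by rw [hm, hceq, min_self]
      have e2 : m = c₂ q := by rw [hm, hceq, min_self]
      rw [if_pos e1, if_pos e2] at hDD
      refine ⟨?_, hyy, ?_⟩
      · rw [← Finset.insert_erase hq₁, ← Finset.insert_erase hq₂, hDD]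
      · intro p hp
        by_cases hpq : p = q
        · subst hpq; exact hceq
        · have hp' : p ∈ D₁.erase q := Finset.mem_erase.2 ⟨hpq, hp⟩
          have := hcc p (by rw [if_pos e1]; exact hp')
          simpa [hpq] using this


open Geometry

lemma aligned_abs {F : Finset (Fin n → ℝ)} {a : (Fin n → ℝ) → ℝ} (ha : ∀ z ∈ F, 0 ≤ a z)
    {q : Fin n → ℝ} (hb : ∀ z ∈ F, Below z q) (i : Fin n) :
    |∑ z ∈ F, a z * z i| = ∑ z ∈ F, a z * |z i| := by
  rcases lt_trichotomy (q i) 0 with hq | hq | hq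
  · have hz : ∀ z ∈ F, z i ≤ 0 := by
      intro z hz
      by_contra h
      push_neg at h
      have := hb z hz i (ne_of_gt h)
      nlinarith
    have hle : ∑ z ∈ F, a z * z i ≤ 0 :=
      Finset.sum_nonpos fun z hzF => mul_nonpos_iff.2 (Or.inl ⟨ha z hzF, hz z hzF⟩)
    rw [abs_of_nonpos hle, ← Finset.sum_neg_distrib]
    refine Finset.sum_congr rfl (fun z hzF => ?_)
    rw [abs_of_nonpos (hz z hzF)]; ring
  · have hz : ∀ z ∈ F, z i = 0 := fun z hzF => (hb z hzF).zero hq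
    have h1 : ∑ z ∈ F, a z * z i = 0 := Finset.sum_eq_zero fun z hzF => by rw [hz z hzF, mul_zero]
    have h2 : ∑ z ∈ F, a z * |z i| = 0 :=
      Finset.sum_eq_zero fun z hzF => by rw [hz z hzF, abs_zero, mul_zero]
    rw [h1, h2, abs_zero]
  · have hz : ∀ z ∈ F, 0 ≤ z i := by
      intro z hz
      by_contra h
      push_neg at h
      have := hb z hz i (ne_of_lt h)
      nlinarith
    have hle : 0 ≤ ∑ z ∈ F, a z * z i :=
      Finset.sum_nonneg fun z hzF => mul_nonneg (ha z hzF) (hz z hzF)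
    rw [abs_of_nonneg hle]
    refine Finset.sum_congr rfl (fun z hzF => ?_)
    rw [abs_of_nonneg (hz z hzF)]

lemma below_sum {F : Finset (Fin n → ℝ)} {a : (Fin n → ℝ) → ℝ} (ha : ∀ z ∈ F, 0 ≤ a z)
    {q : Fin n → ℝ} (hb : ∀ z ∈ F, Below z q) : Below (∑ z ∈ F, a z • z) q := by
  intro i hi
  rw [sum_smul_apply] at hi ⊢
  rcases lt_trichotomy (q i) 0 with hq | hq | hq
  · have hz : ∀ z ∈ F, z i ≤ 0 := by
      intro z hz
      by_contra h
      push_neg at h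
      have := hb z hz i (ne_of_gt h)
      nlinarith
    have hle : ∑ z ∈ F, a z * z i ≤ 0 :=
      Finset.sum_nonpos fun z hzF => mul_nonpos_iff.2 (Or.inl ⟨ha z hzF, hz z hzF⟩)
    have : ∑ z ∈ F, a z * z i < 0 := lt_of_le_of_ne hle hi
    nlinarith
  · exact absurd (Finset.sum_eq_zero fun z hzF => by rw [(hb z hzF).zero hq, mul_zero]) hi
  · have hz : ∀ z ∈ F, 0 ≤ z i := by
      intro z hz
      by_contra h
      push_neg at h
      have := hb z hz i (ne_of_lt h)
      nlinarith
    have hle : 0 ≤ ∑ z ∈ F, a z * z i :=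
      Finset.sum_nonneg fun z hzF => mul_nonneg (ha z hzF) (hz z hzF)
    have : 0 < ∑ z ∈ F, a z * z i := lt_of_le_of_ne hle (Ne.symm hi)
    nlinarith

lemma sum_abs_combo {F : Finset (Fin n → ℝ)} {a : (Fin n → ℝ) → ℝ} (ha : ∀ z ∈ F, 0 ≤ a z)
    {q : Fin n → ℝ} (hb : ∀ z ∈ F, Below z q) (hunit : ∀ z ∈ F, (∑ i, |z i|) = 1) :
    ∑ i, |(∑ z ∈ F, a z • z) i| = ∑ z ∈ F, a z := by
  have h1 : ∀ i, |(∑ z ∈ F, a z • z) i| = ∑ z ∈ F, a z * |z i| := by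
    intro i
    rw [sum_smul_apply]
    exact aligned_abs ha hb i
  rw [Finset.sum_congr rfl (fun i _ => h1 i), Finset.sum_comm]
  refine Finset.sum_congr rfl (fun z hz => ?_)
  rw [← Finset.mul_sum, hunit z hz, mul_one]

def GoodPair (K : SimplicialComplex ℝ (Fin n → ℝ)) (τ C : Finset (Fin n → ℝ)) : Prop :=
  (τ = ∅ ∨ τ ∈ K.faces) ∧ C.Nonempty ∧ (∀ q ∈ C, IsSign q) ∧
  (∀ p ∈ C, ∀ q ∈ C, Below p q ∨ Below q p) ∧
  (∀ v ∈ τ, (∑ i, |v i|) = 1 ∧ ∀ q ∈ C, Below v q)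

lemma GoodPair.disj {K : SimplicialComplex ℝ (Fin n → ℝ)} {τ C : Finset (Fin n → ℝ)}
    (hg : GoodPair K τ C) : Disjoint τ C := by
  rw [Finset.disjoint_left]
  intro v hvτ hvC
  have h1 := (hg.2.2.2.2 v hvτ).1
  have h2 := (hg.2.2.1 v hvC).2
  linarith

def bigFaces (K : SimplicialComplex ℝ (Fin n → ℝ)) : Set (Finset (Fin n → ℝ)) :=
  K.faces ∪ {f | ∃ τ C, GoodPair K τ C ∧ f = τ ∪ C}

lemma decomp_of_weights {K : SimplicialComplex ℝ (Fin n → ℝ)} {τ C : Finset (Fin n → ℝ)}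
    (hg : GoodPair K τ C) (w : (Fin n → ℝ) → ℝ) (hw0 : ∀ z ∈ τ ∪ C, 0 ≤ w z)
    (hw1 : ∑ z ∈ τ ∪ C, w z = 1) {x : Fin n → ℝ} (hx : x = ∑ z ∈ τ ∪ C, w z • z) :
    Decomp x 1 (C.filter (fun q => 0 < w q)) w (∑ v ∈ τ, w v • v) ∧
      ∑ v ∈ τ, w v = 1 - ∑ q ∈ C.filter (fun q => 0 < w q), w q := by
  have hdisj := hg.disj
  set D := C.filter (fun q => 0 < w q) with hD
  have hCD : ∑ q ∈ C, w q • q = ∑ q ∈ D, w q • q := by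
    refine (Finset.sum_subset (Finset.filter_subset _ _) ?_).symm
    intro q hqC hqD
    have h0 : ¬ 0 < w q := by
      intro h
      exact hqD (Finset.mem_filter.2 ⟨hqC, h⟩)
    have : w q = 0 := le_antisymm (not_lt.1 h0) (hw0 q (Finset.mem_union_right _ hqC))
    rw [this, zero_smul]
  have hCDs : ∑ q ∈ C, w q = ∑ q ∈ D, w q := by
    refine (Finset.sum_subset (Finset.filter_subset _ _) ?_).symm
    intro q hqC hqD
    have h0 : ¬ 0 < w q := by
      intro h
      exact hqD (Finset.mem_filter.2 ⟨hqC, h⟩)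
    exact le_antisymm (not_lt.1 h0) (hw0 q (Finset.mem_union_right _ hqC))
  have hsplit : ∑ z ∈ τ ∪ C, w z • z = (∑ v ∈ τ, w v • v) + ∑ q ∈ C, w q • q :=
    Finset.sum_union hdisj
  have hsplits : (∑ v ∈ τ, w v) + ∑ q ∈ C, w q = 1 := by
    rw [← Finset.sum_union hdisj, hw1]
  have ha : ∑ v ∈ τ, w v = 1 - ∑ q ∈ D, w q := by
    rw [← hCDs]; linarith
  have hτ0 : ∀ v ∈ τ, 0 ≤ w v := fun v hv => hw0 v (Finset.mem_union_left _ hv)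
  refine ⟨⟨fun q hq => hg.2.2.1 q (Finset.mem_filter.1 hq).1,
    fun p hp q hq => hg.2.2.2.1 p (Finset.mem_filter.1 hp).1 q (Finset.mem_filter.1 hq).1,
    fun q hq => (Finset.mem_filter.1 hq).2,
    ?_, ?_, ?_⟩, ha⟩
  · intro q hq
    exact below_sum hτ0 (fun v hv => (hg.2.2.2.2 v hv).2 q (Finset.mem_filter.1 hq).1)
  · rw [sum_abs_combo hτ0 (fun v hv => (hg.2.2.2.2 v hv).2 _ hg.2.1.choose_spec)
      (fun v hv => (hg.2.2.2.2 v hv).1)]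
    exact ha
  · rw [hx, hsplit, hCD]

lemma exists_weights {f : Finset (Fin n → ℝ)} {x : Fin n → ℝ}
    (hx : x ∈ convexHull ℝ (f : Set (Fin n → ℝ))) :
    ∃ w : (Fin n → ℝ) → ℝ, (∀ z ∈ f, 0 ≤ w z) ∧ (∑ z ∈ f, w z = 1) ∧
      x = ∑ z ∈ f, w z • z := by
  rw [Finset.convexHull_eq] at hx
  obtain ⟨w, hw0, hw1, hcm⟩ := hx
  refine ⟨w, hw0, hw1, ?_⟩
  rw [← hcm, Finset.centerMass_eq_of_sum_1 _ _ hw1]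
  rfl


lemma face_hull_octa {K : SimplicialComplex ℝ (Fin n → ℝ)} (hsp : K.space = octa n)
    {σ : Finset (Fin n → ℝ)} (hσ : σ ∈ K.faces) :
    convexHull ℝ (σ : Set (Fin n → ℝ)) ⊆ octa n :=
  hsp ▸ K.convexHull_subset_space hσ

lemma Decomp.empty_of_le {x : Fin n → ℝ} {D : Finset (Fin n → ℝ)} {c : (Fin n → ℝ) → ℝ}
    {y : Fin n → ℝ} (hd : Decomp x 1 D c y) (hle : ∑ i, |x i| ≤ 1) : D = ∅ := by
  refine hd.empty_iff.2 (le_antisymm hle ?_)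
  rw [hd.sum_abs]
  have : 0 ≤ ∑ q ∈ D, c q * ((∑ i, |q i|) - 1) := by
    refine Finset.sum_nonneg (fun q hq => ?_)
    have := (hd.sign q hq).2
    have := hd.cpos q hq
    nlinarith
  linarith

lemma y_mem_hull {τ : Finset (Fin n → ℝ)} {w : (Fin n → ℝ) → ℝ} (hw0 : ∀ v ∈ τ, 0 ≤ w v)
    {a : ℝ} (ha0 : ∑ v ∈ τ, w v = a) (hapos : 0 < a) :
    a⁻¹ • ∑ v ∈ τ, w v • v ∈ convexHull ℝ (τ : Set (Fin n → ℝ)) := by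
  have h := Finset.centerMass_mem_convexHull τ hw0 (ha0 ▸ hapos) (fun v hv => Finset.mem_coe.2 hv)
  unfold Finset.centerMass at h
  rw [ha0] at h
  simpa using h

lemma inter_pure_shell {K : SimplicialComplex ℝ (Fin n → ℝ)} (hsp : K.space = octa n)
    {σ τ C : Finset (Fin n → ℝ)} (hσ : σ ∈ K.faces) (hg : GoodPair K τ C) :
    convexHull ℝ (σ : Set (Fin n → ℝ)) ∩ convexHull ℝ ((τ ∪ C : Finset _) : Set (Fin n → ℝ))
      ⊆ convexHull ℝ ((σ ∩ (τ ∪ C) : Finset _) : Set (Fin n → ℝ)) := by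
  rintro x ⟨hx1, hx2⟩
  obtain ⟨w, hw0, hw1, hxw⟩ := exists_weights hx2
  obtain ⟨hd, ha⟩ := decomp_of_weights hg w hw0 hw1 hxw
  have hxo : x ∈ octa n := face_hull_octa hsp hσ hx1
  have hD : C.filter (fun q => 0 < w q) = ∅ := hd.empty_of_le hxo
  have hy : x = ∑ v ∈ τ, w v • v := by
    have := hd.eq
    rw [hD] at this
    simpa using this
  have haτ : ∑ v ∈ τ, w v = 1 := by rw [ha, hD]; simp
  have hτne : τ ≠ ∅ := by
    rintro rfl
    simp at haτ
  have hτf : τ ∈ K.faces := hg.1.resolve_left hτne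
  have hxτ : x ∈ convexHull ℝ (τ : Set (Fin n → ℝ)) := by
    have := y_mem_hull (fun v hv => hw0 v (Finset.mem_union_left _ hv)) haτ one_pos
    rw [inv_one, one_smul] at this
    rw [hy]
    exact this
  have hint := K.inter_subset_convexHull hσ hτf ⟨hx1, hxτ⟩
  refine convexHull_mono ?_ hint
  intro z hz
  simp only [Set.mem_inter_iff, Finset.mem_coe] at hz
  simp only [Finset.coe_inter, Set.mem_inter_iff, Finset.mem_coe]
  exact ⟨hz.1, Finset.mem_union_left _ hz.2⟩

lemma inter_shell_shell {K : SimplicialComplex ℝ (Fin n → ℝ)} (hsp : K.space = octa n)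
    {τ₁ C₁ τ₂ C₂ : Finset (Fin n → ℝ)} (h1 : GoodPair K τ₁ C₁) (h2 : GoodPair K τ₂ C₂) :
    convexHull ℝ ((τ₁ ∪ C₁ : Finset _) : Set (Fin n → ℝ))
      ∩ convexHull ℝ ((τ₂ ∪ C₂ : Finset _) : Set (Fin n → ℝ))
      ⊆ convexHull ℝ (((τ₁ ∪ C₁) ∩ (τ₂ ∪ C₂) : Finset _) : Set (Fin n → ℝ)) := by
  rintro x ⟨hx1, hx2⟩
  obtain ⟨w₁, hw10, hw11, hxw1⟩ := exists_weights hx1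
  obtain ⟨w₂, hw20, hw21, hxw2⟩ := exists_weights hx2
  obtain ⟨hd1, ha1⟩ := decomp_of_weights h1 w₁ hw10 hw11 hxw1
  obtain ⟨hd2, ha2⟩ := decomp_of_weights h2 w₂ hw20 hw21 hxw2
  set D₁ := C₁.filter (fun q => 0 < w₁ q) with hD₁
  set D₂ := C₂.filter (fun q => 0 < w₂ q) with hD₂
  obtain ⟨hDD, hyy, hcc⟩ := decomp_unique_aux (D₁.card + D₂.card) x 1 D₁ w₁ _ D₂ w₂ _
    le_rfl hd1 hd2
  have hsums : ∑ q ∈ D₁, w₁ q = ∑ q ∈ D₁, w₂ q :=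
    Finset.sum_congr rfl (fun q hq => hcc q hq)
  set a := ∑ v ∈ τ₁, w₁ v with haa
  have ha2' : ∑ v ∈ τ₂, w₂ v = a := by
    rw [ha2, ← hDD, ← hsums, ha1]
  have hDsub : ∀ q ∈ D₁, q ∈ (τ₁ ∪ C₁) ∩ (τ₂ ∪ C₂) := by
    intro q hq
    refine Finset.mem_inter.2 ⟨Finset.mem_union_right _ (Finset.mem_filter.1 hq).1, ?_⟩
    have : q ∈ D₂ := hDD ▸ hq
    exact Finset.mem_union_right _ (Finset.mem_filter.1 this).1
  have hDw : ∀ q ∈ D₁, 0 ≤ w₁ q := fun q hq => ((Finset.mem_filter.1 hq).2).le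
  rcases eq_or_lt_of_le (by
      rw [haa]
      exact Finset.sum_nonneg (fun v hv => hw10 v (Finset.mem_union_left _ hv)) :
      (0:ℝ) ≤ a) with hzero | hapos
  · -- a = 0 : y = 0 and x is a combination of D₁ alone
    have hy0 : (∑ v ∈ τ₁, w₁ v • v) = 0 := by
      have hsum0 : ∑ i, |(∑ v ∈ τ₁, w₁ v • v) i| = 0 := by
        rw [hd1.ysum, ← ha1]
        exact hzero.symm
      funext i
      have h1 : ∀ j ∈ Finset.univ, (0:ℝ) ≤ |(∑ v ∈ τ₁, w₁ v • v) j| := fun j _ => abs_nonneg _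
      have := (Finset.sum_eq_zero_iff_of_nonneg h1).1 hsum0 i (Finset.mem_univ i)
      rw [abs_eq_zero] at this
      simpa using this
    have hxD : x = ∑ q ∈ D₁, w₁ q • q := by
      rw [hd1.eq, hy0, zero_add]
    have hwsum : ∑ q ∈ D₁, w₁ q = 1 := by
      have h := ha1
      rw [← hzero] at h
      linarith
    rw [hxD]
    refine Convex.sum_mem (convex_convexHull ℝ _) hDw hwsum ?_
    intro q hq
    exact subset_convexHull ℝ _ (Finset.mem_coe.2 (hDsub q hq))
  · -- a > 0
    set y := ∑ v ∈ τ₁, w₁ v • v with hyd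
    set u := a⁻¹ • y with hu
    have hτ₁ne : τ₁ ≠ ∅ := by
      rintro rfl
      rw [Finset.sum_empty] at haa
      linarith
    have hτ₂ne : τ₂ ≠ ∅ := by
      rintro rfl
      rw [Finset.sum_empty] at ha2'
      linarith
    have hτ₁f : τ₁ ∈ K.faces := h1.1.resolve_left hτ₁ne
    have hτ₂f : τ₂ ∈ K.faces := h2.1.resolve_left hτ₂ne
    have hu1 : u ∈ convexHull ℝ (τ₁ : Set (Fin n → ℝ)) :=
      y_mem_hull (fun v hv => hw10 v (Finset.mem_union_left _ hv)) haa.symm hapos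
    have hu2 : u ∈ convexHull ℝ (τ₂ : Set (Fin n → ℝ)) := by
      rw [hu, hyy]
      exact y_mem_hull (fun v hv => hw20 v (Finset.mem_union_left _ hv)) ha2' hapos
    have huint := K.inter_subset_convexHull hτ₁f hτ₂f ⟨hu1, hu2⟩
    have huI : u ∈ convexHull ℝ (((τ₁ ∪ C₁) ∩ (τ₂ ∪ C₂) : Finset _) : Set (Fin n → ℝ)) := by
      refine convexHull_mono ?_ huint
      intro z hz
      simp only [Set.mem_inter_iff, Finset.mem_coe] at hz
      simp only [Finset.coe_inter, Set.mem_inter_iff, Finset.mem_coe]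
      exact ⟨Finset.mem_union_left _ hz.1, Finset.mem_union_left _ hz.2⟩
    -- u is not a sign vector
    have huocta : u ∈ octa n := face_hull_octa hsp hτ₁f hu1
    have huD : u ∉ D₁ := by
      intro hmem
      have := (hd1.sign u hmem).2
      have : (2:ℝ) ≤ 1 := le_trans this huocta
      linarith
    -- x = a • u + ∑ q ∈ D₁, w₁ q • q
    have hau : a • u = y := by
      rw [hu, smul_inv_smul₀ (ne_of_gt hapos)]
    have hxx : x = ∑ z ∈ insert u D₁, (Function.update w₁ u a) z • z := by
      rw [Finset.sum_insert huD, Function.update_self]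
      have heq : ∑ z ∈ D₁, Function.update w₁ u a z • z = ∑ z ∈ D₁, w₁ z • z := by
        refine Finset.sum_congr rfl (fun z hz => ?_)
        rw [Function.update_of_ne (by rintro rfl; exact huD hz)]
      rw [heq, hau, hd1.eq]
    rw [hxx]
    refine Convex.sum_mem (convex_convexHull ℝ _) ?_ ?_ ?_
    · intro z hz
      rcases Finset.mem_insert.1 hz with rfl | hz'
      · rw [Function.update_self]; exact hapos.le
      · rw [Function.update_of_ne (by rintro rfl; exact huD hz')]
        exact hDw z hz'
    · rw [Finset.sum_insert huD, Function.update_self]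
      have heq : ∑ z ∈ D₁, Function.update w₁ u a z = ∑ z ∈ D₁, w₁ z := by
        refine Finset.sum_congr rfl (fun z hz => ?_)
        rw [Function.update_of_ne (by rintro rfl; exact huD hz)]
      rw [heq]
      linarith [ha1, haa]
    · intro z hz
      rcases Finset.mem_insert.1 hz with rfl | hz'
      · exact huI
      · exact subset_convexHull ℝ _ (Finset.mem_coe.2 (hDsub z hz'))


lemma affineIndependent_of_unique {f : Finset (Fin n → ℝ)}
    (h : ∀ w : (Fin n → ℝ) → ℝ, ∑ z ∈ f, w z = 0 → ∑ z ∈ f, w z • z = 0 →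
      ∀ z ∈ f, w z = 0) :
    AffineIndependent ℝ ((↑) : f → (Fin n → ℝ)) := by
  rw [affineIndependent_iff]
  intro s w hw0 hw1 e he
  classical
  set W : (Fin n → ℝ) → ℝ := fun v => if hv : v ∈ f then (if ⟨v, hv⟩ ∈ s then w ⟨v, hv⟩ else 0)
    else 0 with hW
  have hWz : ∀ z : f, W ↑z = if z ∈ s then w z else 0 := by
    intro z
    rw [hW]
    simp only [dif_pos z.2]
  have hsum : ∑ v ∈ f, W v = ∑ z ∈ s, w z := by
    rw [← Finset.sum_attach f W]
    rw [Finset.sum_congr rfl (fun z _ => hWz z)]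
    rw [Finset.sum_ite_mem]
    congr 1
    rw [Finset.inter_eq_right.2 (fun z _ => Finset.mem_attach f z)]
  have hvec : ∑ v ∈ f, W v • v = ∑ z ∈ s, w z • (z : Fin n → ℝ) := by
    rw [← Finset.sum_attach f (fun v => W v • v)]
    have hterm : ∀ z : f, W ↑z • (z : Fin n → ℝ) = if z ∈ s then w z • (z : Fin n → ℝ) else 0 := by
      intro z
      rw [hWz z]
      split_ifs
      · rfl
      · rw [zero_smul]
    rw [Finset.sum_congr rfl (fun z _ => hterm z)]
    rw [Finset.sum_ite_mem]
    congr 1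
    rw [Finset.inter_eq_right.2 (fun z _ => Finset.mem_attach f z)]
  have hall := h W (by rw [hsum]; exact hw0) (by rw [hvec]; exact hw1)
  have he2 := hall ↑e e.2
  rw [hWz e, if_pos he] at he2
  exact he2

lemma goodPair_indep {K : SimplicialComplex ℝ (Fin n → ℝ)} {τ C : Finset (Fin n → ℝ)}
    (hg : GoodPair K τ C) :
    AffineIndependent ℝ ((↑) : (τ ∪ C : Finset (Fin n → ℝ)) → (Fin n → ℝ)) := by
  refine affineIndependent_of_unique (fun w hw0 hw1 => ?_)
  classical
  set P : (Fin n → ℝ) → ℝ := fun z => max (w z) 0 with hP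
  set Q : (Fin n → ℝ) → ℝ := fun z => max (-w z) 0 with hQ
  have hPQ : ∀ z, w z = P z - Q z := by
    intro z
    rw [hP, hQ]
    simp only [max_def]
    split_ifs <;> linarith
  have hP0 : ∀ z ∈ τ ∪ C, 0 ≤ P z := fun z _ => le_max_right _ _
  have hQ0 : ∀ z ∈ τ ∪ C, 0 ≤ Q z := fun z _ => le_max_right _ _
  set t := ∑ z ∈ τ ∪ C, P z with ht
  have htQ : ∑ z ∈ τ ∪ C, Q z = t := by
    have h0 : ∑ z ∈ τ ∪ C, (P z - Q z) = 0 :=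
      (Finset.sum_congr rfl (fun z _ => (hPQ z).symm)).trans hw0
    rw [Finset.sum_sub_distrib] at h0
    rw [ht]
    linarith
  rcases eq_or_lt_of_le (Finset.sum_nonneg hP0 : (0:ℝ) ≤ t) with hz | hpos
  · -- t = 0 : everything zero
    intro z hzf
    have hPz := (Finset.sum_eq_zero_iff_of_nonneg hP0).1 hz.symm z hzf
    have hQz := (Finset.sum_eq_zero_iff_of_nonneg hQ0).1 (htQ.trans hz.symm) z hzf
    rw [hPQ z, hPz, hQz, sub_zero]
  · -- t > 0
    set x := ∑ z ∈ τ ∪ C, (P z / t) • z with hx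
    have ht0 : t ≠ 0 := ne_of_gt hpos
    have hxQ : x = ∑ z ∈ τ ∪ C, (Q z / t) • z := by
      have hdiff : ∑ z ∈ τ ∪ C, ((P z / t) • z - (Q z / t) • z) = 0 := by
        have h1 : ∀ z : Fin n → ℝ, (P z / t) • z - (Q z / t) • z = (t⁻¹ * w z) • z := by
          intro z
          rw [← sub_smul]
          congr 1
          rw [hPQ z]
          ring
        have h2 : ∀ z : Fin n → ℝ, (t⁻¹ * w z) • z = t⁻¹ • (w z • z) := fun z => mul_smul _ _ _
        rw [Finset.sum_congr rfl (fun z _ => h1 z), Finset.sum_congr rfl (fun z _ => h2 z),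
          ← Finset.smul_sum, hw1, smul_zero]
      rw [Finset.sum_sub_distrib] at hdiff
      rw [hx]
      exact (sub_eq_zero.1 hdiff)
    have hP1 : ∑ z ∈ τ ∪ C, (P z / t) = 1 := by
      rw [← Finset.sum_div, ← ht, div_self ht0]
    have hQ1 : ∑ z ∈ τ ∪ C, (Q z / t) = 1 := by
      rw [← Finset.sum_div, htQ, div_self ht0]
    have hP0' : ∀ z ∈ τ ∪ C, 0 ≤ P z / t := fun z hz => div_nonneg (hP0 z hz) hpos.le
    have hQ0' : ∀ z ∈ τ ∪ C, 0 ≤ Q z / t := fun z hz => div_nonneg (hQ0 z hz) hpos.le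
    obtain ⟨hdP, haP⟩ := decomp_of_weights hg (fun z => P z / t) hP0' hP1 hx
    obtain ⟨hdQ, haQ⟩ := decomp_of_weights hg (fun z => Q z / t) hQ0' hQ1 hxQ
    obtain ⟨hDD, hyy, hcc⟩ := decomp_unique_aux
      ((C.filter (fun q => 0 < P q / t)).card + (C.filter (fun q => 0 < Q q / t)).card)
      x 1 _ _ _ _ _ _ le_rfl hdP hdQ
    have hDsum : ∑ q ∈ C.filter (fun q => 0 < P q / t), (P q / t)
        = ∑ q ∈ C.filter (fun q => 0 < Q q / t), (Q q / t) := by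
      rw [← hDD]
      exact Finset.sum_congr rfl (fun q hq => hcc q hq)
    intro z hzf
    rcases Finset.mem_union.1 hzf with hzτ | hzC
    · have hτe : τ ≠ ∅ := by
        rintro rfl
        exact absurd hzτ (Finset.notMem_empty z)
      have hτf := hg.1.resolve_left hτe
      have hsumeq : ∑ v ∈ τ, (P v / t) = ∑ v ∈ τ, (Q v / t) := by
        rw [haP, haQ, hDsum]
      have heq := (K.indep hτf).eq_of_sum_eq_sum_subtype hsumeq hyy z hzτ
      have : P z = Q z := by
        field_simp at heq
        exact heq
      rw [hPQ z, this, sub_self]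
    · by_cases hzD : z ∈ C.filter (fun q => 0 < P q / t)
      · have heq := hcc z hzD
        have : P z = Q z := by
          field_simp at heq
          exact heq
        rw [hPQ z, this, sub_self]
      · have hzD2 : z ∉ C.filter (fun q => 0 < Q q / t) := by
          rw [← hDD]
          exact hzD
        have hPz : P z = 0 := by
          by_contra hne
          have : 0 < P z := lt_of_le_of_ne (hP0 z hzf) (Ne.symm hne)
          exact hzD (Finset.mem_filter.2 ⟨hzC, div_pos this hpos⟩)
        have hQz : Q z = 0 := by
          by_contra hne
          have : 0 < Q z := lt_of_le_of_ne (hQ0 z hzf) (Ne.symm hne)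
          exact hzD2 (Finset.mem_filter.2 ⟨hzC, div_pos this hpos⟩)
        rw [hPQ z, hPz, hQz, sub_zero]


lemma goodPair_subset {K : SimplicialComplex ℝ (Fin n → ℝ)} {τ C f' : Finset (Fin n → ℝ)}
    (hg : GoodPair K τ C) (hsub : f' ⊆ τ ∪ C) (hne : f' ≠ ∅) : f' ∈ bigFaces K := by
  classical
  have hsplit : f' = (f' ∩ τ) ∪ (f' ∩ C) := by
    rw [← Finset.inter_union_distrib_left]
    exact (Finset.inter_eq_left.2 hsub).symm
  by_cases hC : f' ∩ C = ∅
  · have hsubτ : f' ⊆ τ := by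
      intro z hz
      rcases Finset.mem_union.1 (hsub hz) with h | h
      · exact h
      · exact absurd (Finset.mem_inter.2 ⟨hz, h⟩) (by rw [hC]; exact Finset.notMem_empty z)
    have hτne : τ ≠ ∅ := by
      rintro rfl
      exact hne (Finset.subset_empty.1 hsubτ)
    exact Or.inl (K.down_closed (hg.1.resolve_left hτne) hsubτ (Finset.nonempty_iff_ne_empty.2 hne))
  · refine Or.inr ⟨f' ∩ τ, f' ∩ C, ⟨?_, Finset.nonempty_of_ne_empty hC, ?_, ?_, ?_⟩, hsplit⟩
    · by_cases hτ' : f' ∩ τ = ∅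
      · exact Or.inl hτ'
      · have hτne : τ ≠ ∅ := by
          rintro rfl
          rw [Finset.inter_empty] at hτ'
          exact hτ' rfl
        exact Or.inr (K.down_closed (hg.1.resolve_left hτne) Finset.inter_subset_right (Finset.nonempty_iff_ne_empty.2 hτ'))
    · exact fun q hq => hg.2.2.1 q (Finset.mem_inter.1 hq).2
    · exact fun p hp q hq => hg.2.2.2.1 p (Finset.mem_inter.1 hp).2 q (Finset.mem_inter.1 hq).2
    · intro v hv
      exact ⟨(hg.2.2.2.2 v (Finset.mem_inter.1 hv).2).1,
        fun q hq => (hg.2.2.2.2 v (Finset.mem_inter.1 hv).2).2 q (Finset.mem_inter.1 hq).2⟩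

noncomputable def bigK (K : SimplicialComplex ℝ (Fin n → ℝ)) (hsp : K.space = octa n) :
    SimplicialComplex ℝ (Fin n → ℝ) where
  faces := bigFaces K
  indep := by
    intro s hs
    rcases hs with h | h
    · exact K.indep h
    · obtain ⟨τ, C, hg, rfl⟩ := h
      exact goodPair_indep hg
  isRelLowerSet_faces := by
    have not_empty_mem : ∅ ∉ bigFaces K := by
      intro h
      rcases h with h | h
      · exact K.empty_notMem h
      · obtain ⟨τ, C, hg, heq⟩ := h
        obtain ⟨q, hq⟩ := hg.2.1
        have : q ∈ (∅ : Finset (Fin n → ℝ)) := heq ▸ Finset.mem_union_right τ hq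
        exact Finset.notMem_empty q this
    have down_closed : ∀ {s t : Finset (Fin n → ℝ)}, s ∈ bigFaces K → t ⊆ s → t ≠ ∅ →
        t ∈ bigFaces K := by
      intro s t hs hts htne
      rcases hs with h | h
      · exact Or.inl (K.down_closed h hts (Finset.nonempty_iff_ne_empty.2 htne))
      · obtain ⟨τ, C, hg, rfl⟩ := h
        exact goodPair_subset hg hts htne
    intro s hs
    exact ⟨Finset.nonempty_iff_ne_empty.2 (fun h => not_empty_mem (h ▸ hs)),
      fun t hts ht => down_closed hs hts ht.ne_empty⟩
  inter_subset_convexHull := by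
    intro s t hs ht
    rcases hs with h1 | h1 <;> rcases ht with h2 | h2
    · exact K.inter_subset_convexHull h1 h2
    · obtain ⟨τ₂, C₂, hg2, rfl⟩ := h2
      rw [← Finset.coe_inter]
      exact inter_pure_shell hsp h1 hg2
    · obtain ⟨τ₁, C₁, hg1, rfl⟩ := h1
      intro x hx
      have hmem := inter_pure_shell hsp h2 hg1 ⟨hx.2, hx.1⟩
      rw [Finset.inter_comm t (τ₁ ∪ C₁)] at hmem
      rw [← Finset.coe_inter]
      exact hmem
    · obtain ⟨τ₁, C₁, hg1, rfl⟩ := h1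
      obtain ⟨τ₂, C₂, hg2, rfl⟩ := h2
      rw [← Finset.coe_inter]
      exact inter_shell_shell hsp hg1 hg2


lemma convex_octa : Convex ℝ (octa n) := by
  intro x hx y hy a b ha hb hab
  simp only [octa, Set.mem_setOf_eq] at hx hy ⊢
  calc ∑ i, |(a • x + b • y) i| ≤ ∑ i, (a * |x i| + b * |y i|) := by
        refine Finset.sum_le_sum (fun i _ => ?_)
        simp only [Pi.add_apply, Pi.smul_apply, smul_eq_mul]
        calc |a * x i + b * y i| ≤ |a * x i| + |b * y i| := abs_add_le _ _
          _ = a * |x i| + b * |y i| := by rw [abs_mul, abs_mul, abs_of_nonneg ha, abs_of_nonneg hb]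
    _ = a * ∑ i, |x i| + b * ∑ i, |y i| := by rw [Finset.sum_add_distrib, ← Finset.mul_sum, ← Finset.mul_sum]
    _ ≤ a * 1 + b * 1 := by
        refine add_le_add ?_ ?_
        · exact mul_le_mul_of_nonneg_left hx ha
        · exact mul_le_mul_of_nonneg_left hy hb
    _ = 1 := by rw [mul_one, mul_one, hab]

lemma convex_cube : Convex ℝ (cube n) := by
  intro x hx y hy a b ha hb hab
  intro i
  simp only [Pi.add_apply, Pi.smul_apply, smul_eq_mul]
  calc |a * x i + b * y i| ≤ |a * x i| + |b * y i| := abs_add_le _ _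
    _ = a * |x i| + b * |y i| := by rw [abs_mul, abs_mul, abs_of_nonneg ha, abs_of_nonneg hb]
    _ ≤ a * 1 + b * 1 := add_le_add (mul_le_mul_of_nonneg_left (hx i) ha)
        (mul_le_mul_of_nonneg_left (hy i) hb)
    _ = 1 := by rw [mul_one, mul_one, hab]

lemma octa_subset_cube : octa n ⊆ cube n := by
  intro x hx i
  calc |x i| ≤ ∑ j, |x j| := Finset.single_le_sum (fun j _ => abs_nonneg (x j)) (Finset.mem_univ i)
    _ ≤ 1 := hx

lemma boundary_face {K : SimplicialComplex ℝ (Fin n → ℝ)} (hsp : K.space = octa n)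
    {x : Fin n → ℝ} (hx1 : (∑ i, |x i|) = 1) :
    ∃ τ ∈ K.faces, x ∈ convexHull ℝ (τ : Set (Fin n → ℝ)) ∧
      ∀ v ∈ τ, ((∑ i, |v i|) = 1 ∧ Below v (sgnv x)) := by
  classical
  have hxo : x ∈ octa n := hx1.le
  have hxsp : x ∈ K.space := by rw [hsp]; exact hxo
  obtain ⟨σ, hσ, hxσ⟩ := SimplicialComplex.mem_space_iff.1 hxsp
  obtain ⟨w, hw0, hw1, hxw⟩ := exists_weights hxσ
  have hφx : ∑ i, sgnv x i * x i = 1 := by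
    rw [Finset.sum_congr rfl (fun i _ => sgnv_mul x i)]
    exact hx1
  have hvocta : ∀ v ∈ σ, v ∈ octa n := by
    intro v hv
    have := K.subset_space hσ (Finset.mem_coe.2 hv)
    rwa [hsp] at this
  have hφv_le : ∀ v ∈ σ, ∑ i, sgnv x i * v i ≤ 1 := by
    intro v hv
    calc ∑ i, sgnv x i * v i ≤ ∑ i, |v i| := by
          refine Finset.sum_le_sum (fun i _ => ?_)
          calc sgnv x i * v i ≤ |sgnv x i * v i| := le_abs_self _
            _ = |sgnv x i| * |v i| := abs_mul _ _
            _ ≤ 1 * |v i| := by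
                refine mul_le_mul_of_nonneg_right ?_ (abs_nonneg _)
                rw [sgnv_abs]
                split_ifs <;> norm_num
            _ = |v i| := one_mul _
      _ ≤ 1 := hvocta v hv
  have happly : ∀ i, x i = ∑ v ∈ σ, w v * v i := by
    intro i
    rw [hxw, sum_smul_apply]
  have hswap : ∑ v ∈ σ, w v * ∑ i, sgnv x i * v i = 1 := by
    have h1 : ∀ v, w v * ∑ i, sgnv x i * v i = ∑ i, w v * (sgnv x i * v i) :=
      fun v => Finset.mul_sum _ _ _
    rw [Finset.sum_congr rfl (fun v _ => h1 v), Finset.sum_comm]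
    have h2 : ∀ i, ∑ v ∈ σ, w v * (sgnv x i * v i) = sgnv x i * x i := by
      intro i
      rw [happly i, Finset.mul_sum]
      refine Finset.sum_congr rfl (fun v _ => by ring)
    rw [Finset.sum_congr rfl (fun i _ => h2 i)]
    exact hφx
  have hterms : ∀ v ∈ σ, 0 ≤ w v * (1 - ∑ i, sgnv x i * v i) := by
    intro v hv
    have := hφv_le v hv
    have := hw0 v hv
    nlinarith
  have hzero : ∑ v ∈ σ, w v * (1 - ∑ i, sgnv x i * v i) = 0 := by
    have : ∑ v ∈ σ, w v * (1 - ∑ i, sgnv x i * v i)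
        = (∑ v ∈ σ, w v) - ∑ v ∈ σ, w v * ∑ i, sgnv x i * v i := by
      rw [← Finset.sum_sub_distrib]
      refine Finset.sum_congr rfl (fun v _ => by ring)
    rw [this, hw1, hswap, sub_self]
  have heach := (Finset.sum_eq_zero_iff_of_nonneg hterms).1 hzero
  set τ := σ.filter (fun v => 0 < w v) with hτ
  have hτsub : τ ⊆ σ := Finset.filter_subset _ _
  have hτne : τ ≠ ∅ := by
    intro hempty
    have hall : ∀ v ∈ σ, w v = 0 := by
      intro v hv
      by_contra hne
      have : 0 < w v := lt_of_le_of_ne (hw0 v hv) (Ne.symm hne)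
      have : v ∈ τ := Finset.mem_filter.2 ⟨hv, this⟩
      rw [hempty] at this
      exact Finset.notMem_empty v this
    rw [Finset.sum_eq_zero hall] at hw1
    norm_num at hw1
  have hτf : τ ∈ K.faces := K.down_closed hσ hτsub (Finset.nonempty_iff_ne_empty.2 hτne)
  have hsumτ : ∑ v ∈ τ, w v = 1 := by
    rw [← hw1]
    refine Finset.sum_subset hτsub ?_
    intro v hv hvτ
    by_contra hne
    exact hvτ (Finset.mem_filter.2 ⟨hv, lt_of_le_of_ne (hw0 v hv) (Ne.symm hne)⟩)
  have hxτ : x ∈ convexHull ℝ (τ : Set (Fin n → ℝ)) := by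
    have hxwτ : x = ∑ v ∈ τ, w v • v := by
      rw [hxw]
      refine (Finset.sum_subset hτsub ?_).symm
      intro v hv hvτ
      have : w v = 0 := by
        by_contra hne
        exact hvτ (Finset.mem_filter.2 ⟨hv, lt_of_le_of_ne (hw0 v hv) (Ne.symm hne)⟩)
      rw [this, zero_smul]
    rw [hxwτ]
    exact Convex.sum_mem (convex_convexHull ℝ _) (fun v hv => (hw0 v (hτsub hv)))
      hsumτ (fun v hv => subset_convexHull ℝ _ (Finset.mem_coe.2 hv))
  refine ⟨τ, hτf, hxτ, ?_⟩
  intro v hv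
  obtain ⟨hvσ, hwv⟩ := Finset.mem_filter.1 hv
  have hφv1 : ∑ i, sgnv x i * v i = 1 := by
    have := heach v hvσ
    rcases mul_eq_zero.1 this with h | h
    · exact absurd h (ne_of_gt hwv)
    · linarith
  have hva : ∑ i, |v i| = 1 := by
    have h1 : ∑ i, (|v i| - sgnv x i * v i) = (∑ i, |v i|) - 1 := by
      rw [Finset.sum_sub_distrib, hφv1]
    have h2 : ∀ i ∈ Finset.univ, 0 ≤ |v i| - sgnv x i * v i := by
      intro i _
      have : sgnv x i * v i ≤ |v i| := by
        calc sgnv x i * v i ≤ |sgnv x i * v i| := le_abs_self _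
          _ = |sgnv x i| * |v i| := abs_mul _ _
          _ ≤ 1 * |v i| := by
              refine mul_le_mul_of_nonneg_right ?_ (abs_nonneg _)
              rw [sgnv_abs]
              split_ifs <;> norm_num
          _ = |v i| := one_mul _
      linarith
    have h3 : 0 ≤ (∑ i, |v i|) - 1 := h1 ▸ Finset.sum_nonneg h2
    have h4 : ∑ i, |v i| ≤ 1 := hvocta v hvσ
    linarith
  refine ⟨hva, ?_⟩
  -- Below v (sgnv x)
  have hptwise : ∀ i, |v i| - sgnv x i * v i = 0 := by
    have h1 : ∑ i, (|v i| - sgnv x i * v i) = 0 := by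
      rw [Finset.sum_sub_distrib, hφv1, hva, sub_self]
    have h2 : ∀ i ∈ Finset.univ, 0 ≤ |v i| - sgnv x i * v i := by
      intro i _
      have : sgnv x i * v i ≤ |v i| := by
        calc sgnv x i * v i ≤ |sgnv x i * v i| := le_abs_self _
          _ = |sgnv x i| * |v i| := abs_mul _ _
          _ ≤ 1 * |v i| := by
              refine mul_le_mul_of_nonneg_right ?_ (abs_nonneg _)
              rw [sgnv_abs]
              split_ifs <;> norm_num
          _ = |v i| := one_mul _
      linarith
    intro i
    exact (Finset.sum_eq_zero_iff_of_nonneg h2).1 h1 i (Finset.mem_univ i)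
  intro i hvi
  have := hptwise i
  have habs : 0 < |v i| := abs_pos.2 hvi
  have : v i * sgnv x i = |v i| := by linarith [hptwise i, mul_comm (sgnv x i) (v i)]
  rw [this]
  exact habs


lemma sum_abs_sgnv_card (x : Fin n → ℝ) :
    ∑ i, |sgnv x i| = ((Finset.univ.filter (fun i => x i ≠ 0)).card : ℝ) := by
  have h1 : ∀ i, |sgnv x i| = if x i ≠ 0 then (1:ℝ) else 0 := by
    intro i
    rw [sgnv_abs]
    by_cases h : x i = 0 <;> simp [h]
  rw [Finset.sum_congr rfl (fun i _ => h1 i), Finset.sum_boole]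

lemma isSign_sgnv {x : Fin n → ℝ} (hcube : x ∈ cube n) (hgt : 1 < ∑ i, |x i|) :
    IsSign (sgnv x) := by
  refine ⟨sgnv_vals x, ?_⟩
  have h1 : ∑ i, |x i| ≤ ∑ i, |sgnv x i| := by
    refine Finset.sum_le_sum (fun i _ => ?_)
    rw [sgnv_abs]
    by_cases h : x i = 0
    · simp [h]
    · rw [if_neg h]
      exact hcube i
  have h2 : (1:ℝ) < ((Finset.univ.filter (fun i => x i ≠ 0)).card : ℝ) := by
    rw [← sum_abs_sgnv_card]
    linarith
  have h3 : 1 < (Finset.univ.filter (fun i => x i ≠ 0)).card := by exact_mod_cast h2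
  rw [sum_abs_sgnv_card]
  exact_mod_cast h3

lemma peel_abs {x : Fin n → ℝ} {d : ℝ} (hd : 0 ≤ d) (hm : ∀ i, x i ≠ 0 → d ≤ |x i|)
    (i : Fin n) : |x i - d * sgnv x i| = |x i| - d * |sgnv x i| := by
  rcases lt_trichotomy (x i) 0 with h | h | h
  · have hs : sgnv x i = -1 := by
      unfold sgnv
      rw [if_neg (by linarith), if_pos h]
    have hx : |x i| = -x i := abs_of_neg h
    have hdle : d ≤ -x i := by rw [← hx]; exact hm i (ne_of_lt h)
    rw [hs, hx]
    rw [abs_of_nonpos (by linarith)]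
    norm_num
    ring
  · rw [h]
    have : sgnv x i = 0 := (sgnv_eq_zero_iff x i).2 h
    rw [this]
    norm_num
  · have hs : sgnv x i = 1 := by
      unfold sgnv
      rw [if_pos h]
    have hx : |x i| = x i := abs_of_pos h
    have hdle : d ≤ x i := by rw [← hx]; exact hm i (ne_of_gt h)
    rw [hs, hx, mul_one, abs_of_nonneg (by linarith)]
    norm_num

lemma peel_sgnv {x : Fin n → ℝ} {d : ℝ} (hd : 0 ≤ d) (hm : ∀ i, x i ≠ 0 → d ≤ |x i|)
    {r : ℝ} (hr : 0 < r) (i : Fin n)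
    (h0 : sgnv (r • (x - d • sgnv x)) i ≠ 0) :
    sgnv (r • (x - d • sgnv x)) i = sgnv x i := by
  set z := r • (x - d • sgnv x) with hz
  have hzi : z i = r * (x i - d * sgnv x i) := by
    rw [hz]
    simp [mul_sub]
  rcases lt_trichotomy (x i) 0 with h | h | h
  · have hs : sgnv x i = -1 := by
      unfold sgnv
      rw [if_neg (by linarith), if_pos h]
    have hzle : z i ≤ 0 := by
      rw [hzi, hs]
      have : d ≤ -x i := by
        have := hm i (ne_of_lt h)
        rwa [abs_of_neg h] at this
      nlinarith
    have hzne : z i ≠ 0 := by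
      intro hc
      exact h0 ((sgnv_eq_zero_iff z i).2 hc)
    have hzneg : z i < 0 := lt_of_le_of_ne hzle hzne
    rw [hs]
    unfold sgnv
    rw [if_neg (by linarith), if_pos hzneg]
  · exfalso
    have : z i = 0 := by
      rw [hzi, h, (sgnv_eq_zero_iff x i).2 h]
      ring
    exact h0 ((sgnv_eq_zero_iff z i).2 this)
  · have hs : sgnv x i = 1 := by
      unfold sgnv
      rw [if_pos h]
    have hzge : 0 ≤ z i := by
      rw [hzi, hs]
      have : d ≤ x i := by
        have := hm i (ne_of_gt h)
        rwa [abs_of_pos h] at this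
      nlinarith
    have hzne : z i ≠ 0 := by
      intro hc
      exact h0 ((sgnv_eq_zero_iff z i).2 hc)
    have hzpos : 0 < z i := lt_of_le_of_ne hzge (Ne.symm hzne)
    rw [hs]
    unfold sgnv
    rw [if_pos hzpos]

lemma eq_sgnv_of_unit {x : Fin n → ℝ} (hcube : x ∈ cube n)
    (hm : ∀ i, x i ≠ 0 → 1 ≤ |x i|) : x = sgnv x := by
  funext i
  rcases lt_trichotomy (x i) 0 with h | h | h
  · have h1 : |x i| ≤ 1 := hcube i
    have h2 : 1 ≤ |x i| := hm i (ne_of_lt h)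
    have : |x i| = 1 := le_antisymm h1 h2
    rw [abs_of_neg h] at this
    unfold sgnv
    rw [if_neg (by linarith), if_pos h]
    linarith
  · rw [h, (sgnv_eq_zero_iff x i).2 h]
  · have h1 : |x i| ≤ 1 := hcube i
    have h2 : 1 ≤ |x i| := hm i (ne_of_gt h)
    have : |x i| = 1 := le_antisymm h1 h2
    rw [abs_of_pos h] at this
    unfold sgnv
    rw [if_pos h]
    linarith


lemma cover {K : SimplicialComplex ℝ (Fin n → ℝ)} (hsp : K.space = octa n) :
    ∀ (N : ℕ) (x : Fin n → ℝ), (Finset.univ.filter (fun i => x i ≠ 0)).card ≤ N →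
    x ∈ cube n → 1 ≤ ∑ i, |x i| →
    ∃ τ C : Finset (Fin n → ℝ), (τ = ∅ ∨ τ ∈ K.faces) ∧
      (∀ q ∈ C, IsSign q) ∧ (∀ p ∈ C, ∀ q ∈ C, Below p q ∨ Below q p) ∧
      (∀ v ∈ τ, (∑ i, |v i|) = 1 ∧ ∀ q ∈ C, Below v q) ∧
      (∀ v ∈ τ ∪ C, Below v (sgnv x)) ∧
      x ∈ convexHull ℝ ((τ ∪ C : Finset (Fin n → ℝ)) : Set (Fin n → ℝ)) ∧
      (τ ∪ C).Nonempty := by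
  intro N
  induction N with
  | zero =>
      intro x hcard hcube hge
      exfalso
      have hx0 : ∀ i, x i = 0 := by
        intro i
        by_contra h
        have hmem : i ∈ Finset.univ.filter (fun i => x i ≠ 0) :=
          Finset.mem_filter.2 ⟨Finset.mem_univ i, h⟩
        have := Finset.card_pos.2 ⟨i, hmem⟩
        omega
      have : ∑ i, |x i| = 0 := Finset.sum_eq_zero (fun i _ => by rw [hx0 i, abs_zero])
      linarith
  | succ N ih =>
      intro x hcard hcube hge
      by_cases heq1 : ∑ i, |x i| = 1
      · obtain ⟨τ, hτf, hxτ, hprops⟩ := boundary_face hsp heq1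
        refine ⟨τ, ∅, Or.inr hτf, by simp, by simp, ?_, ?_, ?_, ?_⟩
        · exact fun v hv => ⟨(hprops v hv).1, by simp⟩
        · intro v hv
          rw [Finset.union_empty] at hv
          exact (hprops v hv).2
        · rw [Finset.union_empty]; exact hxτ
        · rw [Finset.union_empty]
          rcases Finset.eq_empty_or_nonempty τ with rfl | h
          · exfalso
            rw [Finset.coe_empty, convexHull_empty] at hxτ
            exact hxτ
          · exact h
      · have hgt : 1 < ∑ i, |x i| := lt_of_le_of_ne hge (Ne.symm heq1)
        have hq : IsSign (sgnv x) := isSign_sgnv hcube hgt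
        have hsuppne : (Finset.univ.filter (fun i => x i ≠ 0)).Nonempty := by
          rcases Finset.eq_empty_or_nonempty (Finset.univ.filter (fun i => x i ≠ 0)) with h | h
          · exfalso
            have hzz : ∑ i, |x i| = 0 := Finset.sum_eq_zero (fun i _ => by
              by_cases hxi : x i = 0
              · rw [hxi, abs_zero]
              · exact absurd (Finset.mem_filter.2 ⟨Finset.mem_univ i, hxi⟩)
                  (by rw [h]; exact Finset.notMem_empty i))
            linarith
          · exact h
        obtain ⟨i₀, hi₀, hmin⟩ := Finset.exists_min_image (Finset.univ.filter (fun i => x i ≠ 0))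
          (fun i => |x i|) hsuppne
        have hmpos : 0 < |x i₀| := abs_pos.2 (Finset.mem_filter.1 hi₀).2
        have hmle : ∀ i, x i ≠ 0 → |x i₀| ≤ |x i| := by
          intro i hi
          exact hmin i (Finset.mem_filter.2 ⟨Finset.mem_univ i, hi⟩)
        have hk2 : 2 ≤ ∑ i, |sgnv x i| := hq.2
        have hcpos : 0 < ((∑ i, |x i|) - 1) / ((∑ i, |sgnv x i|) - 1) :=
          div_pos (by linarith) (by linarith)
        by_cases hm1 : 1 ≤ |x i₀|
        · -- x = sgnv x
          have hx_eq : x = sgnv x := eq_sgnv_of_unit hcube (fun i hi => le_trans hm1 (hmle i hi))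
          refine ⟨∅, {sgnv x}, Or.inl rfl, ?_, ?_, by simp, ?_, ?_, ?_⟩
          · intro p hp
            rw [Finset.mem_singleton] at hp
            subst hp
            exact hq
          · intro p hp q' hq'
            rw [Finset.mem_singleton] at hp hq'
            subst hp; subst hq'
            exact Or.inl (below_self _)
          · intro v hv
            rw [Finset.empty_union, Finset.mem_singleton] at hv
            subst hv
            exact below_self _
          · rw [Finset.empty_union]
            exact subset_convexHull ℝ _ (Finset.mem_coe.2 (Finset.mem_singleton.2 hx_eq))
          · simp
        · push_neg at hm1
          by_cases hcm : ((∑ i, |x i|) - 1) / ((∑ i, |sgnv x i|) - 1) ≤ |x i₀|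
          · -- one peel step lands exactly on the boundary
            set c := ((∑ i, |x i|) - 1) / ((∑ i, |sgnv x i|) - 1) with hcdef
            have hc1 : c < 1 := lt_of_le_of_lt hcm hm1
            have h1c : (0:ℝ) < 1 - c := by linarith
            have hmle' : ∀ i, x i ≠ 0 → c ≤ |x i| := fun i hi => le_trans hcm (hmle i hi)
            set x'' := (1 - c)⁻¹ • (x - c • sgnv x) with hx''def
            have happ : ∀ i, x'' i = (1 - c)⁻¹ * (x i - c * sgnv x i) := by
              intro i
              rw [hx''def]
              simp
            have habs : ∀ i, |x'' i| = (1 - c)⁻¹ * (|x i| - c * |sgnv x i|) := by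
              intro i
              rw [happ i, abs_mul, abs_of_pos (inv_pos.2 h1c)]
              congr 1
              exact peel_abs hcpos.le hmle' i
            have hck : c * ((∑ i, |sgnv x i|) - 1) = (∑ i, |x i|) - 1 := by
              rw [hcdef]
              exact div_mul_cancel₀ _ (by linarith)
            have hsum'' : ∑ i, |x'' i| = 1 := by
              rw [Finset.sum_congr rfl (fun i _ => habs i), ← Finset.mul_sum,
                Finset.sum_sub_distrib, ← Finset.mul_sum]
              have hnum : (∑ i, |x i|) - c * (∑ i, |sgnv x i|) = 1 - c := by nlinarith [hck]
              rw [hnum]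
              exact inv_mul_cancel₀ (ne_of_gt h1c)
            obtain ⟨τ, hτf, hx''τ, hprops⟩ := boundary_face hsp hsum''
            have hcompat : ∀ i, sgnv x'' i ≠ 0 → sgnv x'' i = sgnv x i := by
              intro i h0
              exact peel_sgnv hcpos.le hmle' (inv_pos.2 h1c) i h0
            refine ⟨τ, {sgnv x}, Or.inr hτf, ?_, ?_, ?_, ?_, ?_, ?_⟩
            · intro p hp
              rw [Finset.mem_singleton] at hp
              subst hp
              exact hq
            · intro p hp q' hq'
              rw [Finset.mem_singleton] at hp hq'
              subst hp; subst hq'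
              exact Or.inl (below_self _)
            · intro v hv
              refine ⟨(hprops v hv).1, ?_⟩
              intro q' hq'
              rw [Finset.mem_singleton] at hq'
              subst hq'
              exact below_trans_sign (hprops v hv).2 hcompat
            · intro v hv
              rcases Finset.mem_union.1 hv with h | h
              · exact below_trans_sign (hprops v h).2 hcompat
              · rw [Finset.mem_singleton] at h
                subst h
                exact below_self _
            · have hx''mem : x'' ∈ convexHull ℝ ((τ ∪ {sgnv x} : Finset _) : Set (Fin n → ℝ)) := by
                refine convexHull_mono ?_ hx''τ
                intro z hz
                simp only [Finset.coe_union, Set.mem_union]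
                exact Or.inl hz
              have hqmem : sgnv x ∈ convexHull ℝ ((τ ∪ {sgnv x} : Finset _) : Set (Fin n → ℝ)) :=
                subset_convexHull ℝ _ (by simp)
              have halg : x = (1 - c) • x'' + c • sgnv x := by
                rw [hx''def, smul_inv_smul₀ (ne_of_gt h1c)]
                abel
              have hfin := (convex_convexHull ℝ
                  ((↑(τ ∪ {sgnv x}) : Set (Fin n → ℝ)))) hx''mem hqmem
                  (by linarith : (0:ℝ) ≤ 1 - c) hcpos.le (by ring : (1 - c) + c = 1)
              rw [← halg] at hfin
              exact hfin
            · exact ⟨sgnv x, Finset.mem_union_right _ (Finset.mem_singleton_self _)⟩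
          · -- recurse after peeling off the minimum
            push_neg at hcm
            have h1m : (0:ℝ) < 1 - |x i₀| := by linarith
            set x'' := (1 - |x i₀|)⁻¹ • (x - |x i₀| • sgnv x) with hx''def
            have happ : ∀ i, x'' i = (1 - |x i₀|)⁻¹ * (x i - |x i₀| * sgnv x i) := by
              intro i
              rw [hx''def]
              simp
            have habs : ∀ i, |x'' i| = (1 - |x i₀|)⁻¹ * (|x i| - |x i₀| * |sgnv x i|) := by
              intro i
              rw [happ i, abs_mul, abs_of_pos (inv_pos.2 h1m)]
              congr 1
              exact peel_abs hmpos.le hmle i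
            have hsum'' : ∑ i, |x'' i| = (1 - |x i₀|)⁻¹ * ((∑ i, |x i|) - |x i₀| * ∑ i, |sgnv x i|) := by
              rw [Finset.sum_congr rfl (fun i _ => habs i), ← Finset.mul_sum,
                Finset.sum_sub_distrib, ← Finset.mul_sum]
            have hnum_gt : 1 - |x i₀| < (∑ i, |x i|) - |x i₀| * ∑ i, |sgnv x i| := by
              have h1 : |x i₀| * ((∑ i, |sgnv x i|) - 1) < (∑ i, |x i|) - 1 :=
                (lt_div_iff₀ (by linarith : (0:ℝ) < (∑ i, |sgnv x i|) - 1)).1 hcm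
              nlinarith [h1]
            have hge'' : 1 ≤ ∑ i, |x'' i| := by
              have h2 : (1 - |x i₀|)⁻¹ * (1 - |x i₀|)
                  ≤ (1 - |x i₀|)⁻¹ * ((∑ i, |x i|) - |x i₀| * ∑ i, |sgnv x i|) :=
                mul_le_mul_of_nonneg_left hnum_gt.le (inv_pos.2 h1m).le
              rw [inv_mul_cancel₀ (ne_of_gt h1m)] at h2
              rw [hsum'']
              exact h2
            have hcube'' : x'' ∈ cube n := by
              intro i
              rw [habs i]
              by_cases hxi : x i = 0
              · rw [hxi, abs_zero]
                have : |sgnv x i| = 0 := by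
                  rw [abs_eq_zero, sgnv_eq_zero_iff]
                  exact hxi
                rw [this]
                norm_num
              · have h1 : |sgnv x i| = 1 := by
                  rw [sgnv_abs, if_neg hxi]
                rw [h1, mul_one]
                have h2 : |x i| ≤ 1 := hcube i
                have h3 : |x i| - |x i₀| ≤ 1 - |x i₀| := by linarith
                calc (1 - |x i₀|)⁻¹ * (|x i| - |x i₀|) ≤ (1 - |x i₀|)⁻¹ * (1 - |x i₀|) :=
                      mul_le_mul_of_nonneg_left h3 (inv_pos.2 h1m).le
                  _ = 1 := inv_mul_cancel₀ (ne_of_gt h1m)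
            have hzero_of : ∀ i, x i = 0 → x'' i = 0 := by
              intro i hxi
              rw [happ i, hxi, (sgnv_eq_zero_iff x i).2 hxi]
              ring
            have hx''i₀ : x'' i₀ = 0 := by
              rw [happ i₀]
              rcases lt_trichotomy (x i₀) 0 with h | h | h
              · have hs : sgnv x i₀ = -1 := by
                  unfold sgnv
                  rw [if_neg (by linarith), if_pos h]
                rw [hs, abs_of_neg h]
                ring
              · exact absurd h (Finset.mem_filter.1 hi₀).2
              · have hs : sgnv x i₀ = 1 := by
                  unfold sgnv
                  rw [if_pos h]
                rw [hs, abs_of_pos h]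
                ring
            have hcard'' : (Finset.univ.filter (fun i => x'' i ≠ 0)).card ≤ N := by
              have hsub : Finset.univ.filter (fun i => x'' i ≠ 0)
                  ⊆ (Finset.univ.filter (fun i => x i ≠ 0)).erase i₀ := by
                intro i hi
                have hi' := (Finset.mem_filter.1 hi).2
                refine Finset.mem_erase.2 ⟨?_, ?_⟩
                · rintro rfl
                  exact hi' hx''i₀
                · refine Finset.mem_filter.2 ⟨Finset.mem_univ i, ?_⟩
                  intro hxi
                  exact hi' (hzero_of i hxi)
              have h1 := Finset.card_le_card hsub
              have h2 := Finset.card_erase_of_mem hi₀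
              omega
            obtain ⟨τ, C, hτor, hCsign, hCchain, hτcond, hbelow'', hx''mem, hne''⟩ :=
              ih x'' hcard'' hcube'' hge''
            have hcompat : ∀ i, sgnv x'' i ≠ 0 → sgnv x'' i = sgnv x i := by
              intro i h0
              exact peel_sgnv hmpos.le hmle (inv_pos.2 h1m) i h0
            have hbelowq : ∀ v ∈ τ ∪ C, Below v (sgnv x) :=
              fun v hv => below_trans_sign (hbelow'' v hv) hcompat
            refine ⟨τ, C ∪ {sgnv x}, hτor, ?_, ?_, ?_, ?_, ?_, ?_⟩
            · intro p hp
              rcases Finset.mem_union.1 hp with h | h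
              · exact hCsign p h
              · rw [Finset.mem_singleton] at h
                subst h
                exact hq
            · intro p hp q' hq'
              rcases Finset.mem_union.1 hp with h | h <;> rcases Finset.mem_union.1 hq' with h' | h'
              · exact hCchain p h q' h'
              · rw [Finset.mem_singleton] at h'
                subst h'
                exact Or.inl (hbelowq p (Finset.mem_union_right _ h))
              · rw [Finset.mem_singleton] at h
                subst h
                exact Or.inr (hbelowq q' (Finset.mem_union_right _ h'))
              · rw [Finset.mem_singleton] at h h'
                subst h; subst h'
                exact Or.inl (below_self _)
            · intro v hv
              refine ⟨(hτcond v hv).1, ?_⟩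
              intro q' hq'
              rcases Finset.mem_union.1 hq' with h | h
              · exact (hτcond v hv).2 q' h
              · rw [Finset.mem_singleton] at h
                subst h
                exact hbelowq v (Finset.mem_union_left _ hv)
            · intro v hv
              rcases Finset.mem_union.1 hv with h | h
              · exact hbelowq v (Finset.mem_union_left _ h)
              · rcases Finset.mem_union.1 h with h' | h'
                · exact hbelowq v (Finset.mem_union_right _ h')
                · rw [Finset.mem_singleton] at h'
                  subst h'
                  exact below_self _
            · have hsubset : ((τ ∪ C : Finset (Fin n → ℝ)) : Set (Fin n → ℝ))
                  ⊆ ((τ ∪ (C ∪ {sgnv x}) : Finset (Fin n → ℝ)) : Set (Fin n → ℝ)) := by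
                intro z hz
                simp only [Finset.coe_union, Set.mem_union] at hz ⊢
                tauto
              have hx''mem' : x'' ∈ convexHull ℝ
                  ((τ ∪ (C ∪ {sgnv x}) : Finset (Fin n → ℝ)) : Set (Fin n → ℝ)) :=
                convexHull_mono hsubset hx''mem
              have hqmem : sgnv x ∈ convexHull ℝ
                  ((τ ∪ (C ∪ {sgnv x}) : Finset (Fin n → ℝ)) : Set (Fin n → ℝ)) :=
                subset_convexHull ℝ _ (by simp)
              have halg : x = (1 - |x i₀|) • x'' + |x i₀| • sgnv x := by
                rw [hx''def, smul_inv_smul₀ (ne_of_gt h1m)]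
                abel
              have hfin := (convex_convexHull ℝ
                  ((↑(τ ∪ (C ∪ {sgnv x})) : Set (Fin n → ℝ)))) hx''mem' hqmem
                  (by linarith : (0:ℝ) ≤ 1 - |x i₀|) hmpos.le
                  (by ring : (1 - |x i₀|) + |x i₀| = 1)
              rw [← halg] at hfin
              exact hfin
            · exact ⟨sgnv x, Finset.mem_union_right _
                (Finset.mem_union_right _ (Finset.mem_singleton_self _))⟩
  


lemma bigK_space {K : SimplicialComplex ℝ (Fin n → ℝ)} (hsp : K.space = octa n) :
    (bigK K hsp).space = cube n := by
  apply Set.Subset.antisymm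
  · refine Set.iUnion₂_subset (fun s hs => ?_)
    refine convexHull_min ?_ convex_cube
    intro z hz
    rcases hs with h | h
    · exact octa_subset_cube (by rw [← hsp]; exact K.subset_space h hz)
    · obtain ⟨τ, C, hg, rfl⟩ := h
      rcases Finset.mem_union.1 (Finset.mem_coe.1 hz) with hτ | hC
      · refine octa_subset_cube ?_
        show ∑ i, |z i| ≤ 1
        exact ((hg.2.2.2.2 z hτ).1).le
      · intro i
        rcases (hg.2.2.1 z hC).1 i with h'|h'|h' <;> rw [h'] <;> norm_num
  · intro x hx
    by_cases hle : ∑ i, |x i| ≤ 1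
    · have hxK : x ∈ K.space := by rw [hsp]; exact hle
      obtain ⟨σ, hσ, hxσ⟩ := SimplicialComplex.mem_space_iff.1 hxK
      exact SimplicialComplex.mem_space_iff.2 ⟨σ, Or.inl hσ, hxσ⟩
    · push_neg at hle
      obtain ⟨τ, C, hτor, hCsign, hCchain, hτcond, _, hxmem, hne⟩ :=
        cover hsp (Finset.univ.filter (fun i => x i ≠ 0)).card x le_rfl hx hle.le
      refine SimplicialComplex.mem_space_iff.2 ⟨τ ∪ C, ?_, hxmem⟩
      rcases Finset.eq_empty_or_nonempty C with rfl | hCne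
      · rw [Finset.union_empty] at hne ⊢
        rcases hτor with rfl | hτf
        · exact absurd hne (by simp)
        · exact Or.inl hτf
      · exact Or.inr ⟨τ, C, ⟨hτor, hCne, hCsign, hCchain, hτcond⟩, rfl⟩

lemma bigK_finite {K : SimplicialComplex ℝ (Fin n → ℝ)} (hsp : K.space = octa n)
    (hfin : K.faces.Finite) : (bigK K hsp).faces.Finite := by
  classical
  set S : Set (Fin n → ℝ) := {q | ∀ i, q i = -1 ∨ q i = 0 ∨ q i = 1} with hSdef
  have hS : S.Finite := by
    have hsub : S ⊆ Set.pi Set.univ (fun _ : Fin n => ({-1, 0, 1} : Set ℝ)) := by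
      intro q hq i _
      rcases hq i with h|h|h <;> simp [h]
    exact (Set.Finite.pi (fun i => (by simp : ({-1,0,1} : Set ℝ).Finite))).subset hsub
  have hC : ({C : Finset (Fin n → ℝ) | ↑C ⊆ S}).Finite := by
    have hsub : {C : Finset (Fin n → ℝ) | ↑C ⊆ S} ⊆ ↑(hS.toFinset.powerset) := by
      intro C hCm
      rw [Finset.mem_coe, Finset.mem_powerset]
      intro z hz
      rw [Set.Finite.mem_toFinset]
      exact hCm hz
    exact (hS.toFinset.powerset).finite_toSet.subset hsub
  have hsub : (bigK K hsp).faces ⊆ K.faces ∪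
      (Set.image2 (· ∪ ·) (K.faces ∪ {∅}) {C : Finset (Fin n → ℝ) | ↑C ⊆ S}) := by
    intro f hf
    rcases hf with h | ⟨τ, C, hg, rfl⟩
    · exact Or.inl h
    · refine Or.inr (Set.mem_image2.2 ⟨τ, ?_, C, ?_, rfl⟩)
      · rcases hg.1 with rfl | h
        · exact Or.inr rfl
        · exact Or.inl h
      · intro z hz
        exact (hg.2.2.1 z hz).1
  exact (hfin.union (Set.Finite.image2 _ (hfin.union (Set.finite_singleton ∅)) hC)).subset hsub

lemma supp_nonempty_of_gt {x : Fin n → ℝ} (h : 1 < ∑ i, |x i|) :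
    (Finset.univ.filter (fun i => x i ≠ 0)).Nonempty := by
  rcases Finset.eq_empty_or_nonempty (Finset.univ.filter (fun i => x i ≠ 0)) with he | hne
  · exfalso
    have : ∑ i, |x i| = 0 := Finset.sum_eq_zero (fun i _ => by
      by_cases hxi : x i = 0
      · rw [hxi, abs_zero]
      · exact absurd (Finset.mem_filter.2 ⟨Finset.mem_univ i, hxi⟩)
          (by rw [he]; exact Finset.notMem_empty i))
    linarith
  · exact hne

noncomputable def lab' (lab : (Fin n → ℝ) → (Fin n → ℝ)) (x : Fin n → ℝ) : Fin n → ℝ :=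
  if h : 1 < ∑ i, |x i| then
    (x ((Finset.univ.filter (fun i => x i ≠ 0)).min' (supp_nonempty_of_gt h)))
      • (Pi.single ((Finset.univ.filter (fun i => x i ≠ 0)).min' (supp_nonempty_of_gt h)) 1
        : Fin n → ℝ)
  else lab x

lemma lab'_eq_lab (lab : (Fin n → ℝ) → (Fin n → ℝ)) {x : Fin n → ℝ} (h : ∑ i, |x i| ≤ 1) :
    lab' lab x = lab x := by
  unfold lab'
  rw [dif_neg (by linarith)]

lemma lab'_sign (lab : (Fin n → ℝ) → (Fin n → ℝ)) {x : Fin n → ℝ} (hx : IsSign x) :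
    ∃ j, lab' lab x = (x j) • (Pi.single j 1 : Fin n → ℝ) ∧ x j ≠ 0 := by
  have h2 : 1 < ∑ i, |x i| := by linarith [hx.2]
  refine ⟨(Finset.univ.filter (fun i => x i ≠ 0)).min' (supp_nonempty_of_gt h2), ?_, ?_⟩
  · unfold lab'
    rw [dif_pos h2]
  · exact (Finset.mem_filter.1 (Finset.min'_mem _ (supp_nonempty_of_gt h2))).2

lemma mem_octa_of_vertex {K : SimplicialComplex ℝ (Fin n → ℝ)} (hsp : K.space = octa n)
    {σ : Finset (Fin n → ℝ)} (hσ : σ ∈ K.faces) {v : Fin n → ℝ} (hv : v ∈ σ) :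
    ∑ i, |v i| ≤ 1 := by
  have := K.subset_space hσ (Finset.mem_coe.2 hv)
  rw [hsp] at this
  exact this


lemma bigK_vertex {K : SimplicialComplex ℝ (Fin n → ℝ)} (hsp : K.space = octa n)
    {x : Fin n → ℝ} (h : {x} ∈ (bigK K hsp).faces) : {x} ∈ K.faces ∨ IsSign x := by
  rcases h with h | ⟨τ, C, hg, heq⟩
  · exact Or.inl h
  · right
    have hC : C ⊆ {x} := by
      rw [heq]
      exact Finset.subset_union_right
    obtain ⟨q, hq⟩ := hg.2.1
    have hqx : q = x := Finset.mem_singleton.1 (hC hq)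
    rw [← hqx]
    exact hg.2.2.1 q hq

lemma label_forms {K : SimplicialComplex ℝ (Fin n → ℝ)} (hsp : K.space = octa n)
    (lab : (Fin n → ℝ) → (Fin n → ℝ))
    (hlab : ∀ x ∈ K.vertices, lab x ∈ extOcta n)
    (hbnd : ∀ x ∈ K.vertices, (∑ i, |x i|) = 1 → ∀ i : Fin n,
      (0 ≤ x i → lab x ≠ -Pi.single i 1) ∧ (x i ≤ 0 → lab x ≠ Pi.single i 1))
    {τ C : Finset (Fin n → ℝ)} (hg : GoodPair K τ C) {qs : Fin n → ℝ} (hqs : qs ∈ C)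
    (htop : ∀ p ∈ C, Below p qs) {v : Fin n → ℝ} (hv : v ∈ τ ∪ C) :
    ∃ j, lab' lab v = (qs j) • (Pi.single j 1 : Fin n → ℝ) ∧ qs j ≠ 0 := by
  rcases Finset.mem_union.1 hv with hvτ | hvC
  · have hτf : τ ∈ K.faces := hg.1.resolve_left (by
      rintro rfl
      exact Finset.notMem_empty v hvτ)
    have hvert : v ∈ K.vertices := SimplicialComplex.mem_vertices.2
      (K.down_closed hτf (Finset.singleton_subset_iff.2 hvτ) (by simp))
    have hsum1 : (∑ i, |v i|) = 1 := (hg.2.2.2.2 v hvτ).1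
    have hlabv : lab' lab v = lab v := lab'_eq_lab lab hsum1.le
    obtain ⟨j, hj⟩ := hlab v hvert
    rcases hj with hj | hj
    · have hvj : 0 < v j := by
        by_contra hle
        push_neg at hle
        exact ((hbnd v hvert hsum1 j).2 hle) hj
      have hb := (hg.2.2.2.2 v hvτ).2 qs hqs j (ne_of_gt hvj)
      have hqj : 0 < qs j := by nlinarith
      have hq1 : qs j = 1 := by
        rcases (hg.2.2.1 qs hqs).1 j with h|h|h
        · linarith
        · linarith
        · exact h
      refine ⟨j, ?_, by rw [hq1]; norm_num⟩
      rw [hlabv, hj, hq1, one_smul]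
    · have hvj : v j < 0 := by
        by_contra hle
        push_neg at hle
        exact ((hbnd v hvert hsum1 j).1 hle) hj
      have hb := (hg.2.2.2.2 v hvτ).2 qs hqs j (ne_of_lt hvj)
      have hqj : qs j < 0 := by nlinarith
      have hq1 : qs j = -1 := by
        rcases (hg.2.2.1 qs hqs).1 j with h|h|h
        · exact h
        · linarith
        · linarith
      refine ⟨j, ?_, by rw [hq1]; norm_num⟩
      rw [hlabv, hj, hq1, neg_one_smul]
  · obtain ⟨j, hlabel, hne⟩ := lab'_sign lab (hg.2.2.1 v hvC)
    have hb := htop v hvC j hne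
    have hqj : qs j = v j := sign_val_eq ((hg.2.2.1 qs hqs).1 j) ((hg.2.2.1 v hvC).1 j)
      (by nlinarith)
    refine ⟨j, ?_, ?_⟩
    · rw [hlabel, hqj]
    · rw [hqj]
      exact hne

end CubOct

/-- **Cubical Sperner with Octahedral Labels** as a statement. -/
def CubicalSpernerStatement : Prop :=
  ∀ (n : ℕ), 1 ≤ n →
  ∀ (K : Geometry.SimplicialComplex ℝ (Fin n → ℝ)), K.faces.Finite →
  K.space = cube n →
  ∀ lab : (Fin n → ℝ) → (Fin n → ℝ),
  (∀ x ∈ K.vertices, lab x ∈ extOcta n) →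
  (∀ x ∈ K.vertices, ∀ i : Fin n, (x i = -1 ∨ x i = 1) →
    lab x ≠ (-(x i)) • (Pi.single i 1 : Fin n → ℝ)) →
  ∃ σ ∈ K.faces, ∃ v₁ ∈ σ, ∃ v₂ ∈ σ, lab v₁ = -lab v₂

/-- The Cubical Sperner lemma with Octahedral Labels implies the
Octahedral Sperner lemma with Octahedral Labels. -/
theorem cubical_sperner_implies_octahedral_sperner :
    CubicalSpernerStatement → OctahedralSpernerStatement := by
  intro hcub n hn K hfin hsp lab hlab hbnd
  classical
  have hext : ∀ x ∈ (CubOct.bigK K hsp).vertices, CubOct.lab' lab x ∈ extOcta n := by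
    intro x hx
    rcases CubOct.bigK_vertex hsp hx with hK | hsgn
    · rw [CubOct.lab'_eq_lab lab
        (CubOct.mem_octa_of_vertex hsp hK (Finset.mem_singleton_self x))]
      exact hlab x hK
    · obtain ⟨j, hl, hne⟩ := CubOct.lab'_sign lab hsgn
      rw [hl]
      rcases hsgn.1 j with h|h|h
      · exact ⟨j, Or.inr (by rw [h, neg_one_smul])⟩
      · exact absurd h hne
      · exact ⟨j, Or.inl (by rw [h, one_smul])⟩
  have hbnd' : ∀ x ∈ (CubOct.bigK K hsp).vertices, ∀ i : Fin n, (x i = -1 ∨ x i = 1) →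
      CubOct.lab' lab x ≠ (-(x i)) • (Pi.single i 1 : Fin n → ℝ) := by
    intro x hx i hxi
    rcases CubOct.bigK_vertex hsp hx with hK | hsgn
    · have hoct : ∑ j, |x j| ≤ 1 :=
        CubOct.mem_octa_of_vertex hsp hK (Finset.mem_singleton_self x)
      have habs1 : |x i| = 1 := by rcases hxi with h|h <;> rw [h] <;> norm_num
      have hsum1 : (∑ j, |x j|) = 1 := by
        refine le_antisymm hoct ?_
        calc (1:ℝ) = |x i| := habs1.symm
          _ ≤ ∑ j, |x j| := Finset.single_le_sum (fun j _ => abs_nonneg (x j)) (Finset.mem_univ i)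
      rw [CubOct.lab'_eq_lab lab hsum1.le]
      rcases hxi with h|h
      · have hres := (hbnd x hK hsum1 i).2 (by rw [h]; norm_num)
        rw [h]
        norm_num
        exact hres
      · have hres := (hbnd x hK hsum1 i).1 (by rw [h]; norm_num)
        rw [h]
        intro hc
        apply hres
        rw [hc, neg_one_smul]
    · obtain ⟨j, hl, hne⟩ := CubOct.lab'_sign lab hsgn
      rw [hl]
      intro hc
      have hc' := congrFun hc j
      rw [Pi.smul_apply, Pi.single_eq_same, smul_eq_mul, mul_one] at hc'
      by_cases hij : i = j
      · subst hij
        rw [Pi.smul_apply, Pi.single_eq_same, smul_eq_mul, mul_one] at hc'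
        rcases hxi with h|h
        · rw [h] at hc'
          norm_num at hc'
        · rw [h] at hc'
          norm_num at hc'
      · rw [Pi.smul_apply, Pi.single_eq_of_ne (fun hh => hij hh.symm), smul_eq_mul,
          mul_zero] at hc'
        exact hne hc'
  obtain ⟨σ, hσ, v₁, hv₁, v₂, hv₂, heq⟩ :=
    hcub n hn (CubOct.bigK K hsp) (CubOct.bigK_finite hsp hfin) (CubOct.bigK_space hsp)
      (CubOct.lab' lab) hext hbnd'
  rcases hσ with hσK | ⟨τ, C, hg, rfl⟩
  · refine ⟨σ, hσK, v₁, hv₁, v₂, hv₂, ?_⟩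
    have h1 := CubOct.lab'_eq_lab lab (CubOct.mem_octa_of_vertex hsp hσK hv₁)
    have h2 := CubOct.lab'_eq_lab lab (CubOct.mem_octa_of_vertex hsp hσK hv₂)
    rw [h1, h2] at heq
    exact heq
  · exfalso
    obtain ⟨qs, hqs, htop⟩ := CubOct.exists_top hg.2.1 hg.2.2.1 hg.2.2.2.1
    obtain ⟨j₁, e₁, ne₁⟩ := CubOct.label_forms hsp lab hlab hbnd hg hqs htop hv₁
    obtain ⟨j₂, e₂, ne₂⟩ := CubOct.label_forms hsp lab hlab hbnd hg hqs htop hv₂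
    rw [e₁, e₂] at heq
    have hc' := congrFun heq j₁
    rw [Pi.smul_apply, Pi.single_eq_same, smul_eq_mul, mul_one] at hc'
    by_cases hj : j₂ = j₁
    · subst hj
      simp only [Pi.neg_apply, Pi.smul_apply, smul_eq_mul, Pi.single_eq_same, mul_one] at hc'
      have : qs j₂ = 0 := by linarith
      exact ne₁ this
    · simp only [Pi.neg_apply, Pi.smul_apply, smul_eq_mul, Pi.single_eq_of_ne (Ne.symm hj), mul_zero,
        neg_zero] at hc'
      exact ne₁ hc'
end
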